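/- arXiv:1009.1647 — 3 statements merged into one kernel-verified Lean document; each statement's English description precedes it below -/
import Mathlib

section
/- Let G be a group with a convergence group action on a compact metrizable space M with at least three points, let H and J be infinite subgroups of G, and let z ∈ Λ(H) ∩ Λ(J) be a point whose stabilizer Stab_G(z) contains no loxodromic element and which is a bounded parabolic point of both H and J. Then either z is a bounded parabolic point of H ∩ J, or z is an isolated point of Λ(H) ∩ Λ(J) and z ∉ Λ(H ∩ J). -/
open Pointwise Filter Topology Set

section ConvergenceGroups

variable (G M : Type*) [Group G] [TopologicalSpace M] [MulAction G M]

/-- A convergence group action: the action is by homeomorphisms (each element acts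
continuously, hence as a homeomorphism since the action is by a group), and the induced
diagonal action on the space of distinct triples of points of `M` is properly
discontinuous. -/
def IsConvergenceAction : Prop :=
  (∀ g : G, Continuous fun x : M => g • x) ∧
    ∀ K L : Set (M × M × M), IsCompact K → IsCompact L →
      (∀ t ∈ K ∪ L, t.1 ≠ t.2.1 ∧ t.1 ≠ t.2.2 ∧ t.2.1 ≠ t.2.2) →
      {g : G | ((g • K) ∩ L).Nonempty}.Finite

/-- The limit set of a subgroup `H ≤ G`: the set of accumulation points in `M` of
the `H`-orbits of points of `M`. -/
def limitSet (H : Subgroup G) : Set M :=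
  {x : M | ∃ m : M, x ∈ closure (((fun h : G => h • m) '' (H : Set G)) \ {x})}

/-- `z` is a conical limit point of the subgroup `H`. -/
def IsConicalLimitPoint (H : Subgroup G) (z : M) : Prop :=
  ∃ (h : ℕ → G) (a b : M), (∀ n, h n ∈ H) ∧ a ≠ b ∧
    Tendsto (fun n => h n • z) atTop (nhds a) ∧
    ∀ q : M, q ≠ z → Tendsto (fun n => h n • q) atTop (nhds b)

/-- `g` is loxodromic: it has infinite order and fixes exactly two points of `M`. -/
def IsLoxodromic (g : G) : Prop :=
  ¬ IsOfFinOrder g ∧ {x : M | g • x = x}.encard = 2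

/-- `p` is a bounded parabolic point of the subgroup `H`: its stabilizer in `H` is an
infinite subgroup containing no loxodromic element, which acts cocompactly on
`Λ(H) \ {p}`. -/
def IsBoundedParabolicPoint (H : Subgroup G) (p : M) : Prop :=
  ((H ⊓ MulAction.stabilizer G p : Subgroup G) : Set G).Infinite ∧
  (∀ g ∈ H ⊓ MulAction.stabilizer G p, ¬ IsLoxodromic G M g) ∧
  ∃ C : Set M, IsCompact C ∧ C ⊆ limitSet G M H \ {p} ∧
    limitSet G M H \ {p} ⊆ ⋃ g ∈ (H ⊓ MulAction.stabilizer G p : Subgroup G), g • C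

/-- `H` is dynamically quasiconvex: for every pair of disjoint closed subsets `K, L` of
`M`, the set of cosets `gH` with `gΛ(H)` meeting both `K` and `L` is finite. -/
def DynamicallyQuasiconvex (H : Subgroup G) : Prop :=
  ∀ K L : Set M, IsClosed K → IsClosed L → Disjoint K L →
    ((fun g : G => (g : G ⧸ H)) ''
      {g : G | ((g • limitSet G M H) ∩ K).Nonempty ∧
               ((g • limitSet G M H) ∩ L).Nonempty}).Finite

end ConvergenceGroups


section AuxProofs

open Metric MulAction

set_option linter.unusedSectionVars false

variable {G M : Type*} [Group G] [MetricSpace M] [CompactSpace M] [MulAction G M]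

/-- If the space has at least 3 points and `G` has an infinite subset, then for a convergence
action the space `M` must be infinite. -/
private lemma aux_M_infinite (hconv : IsConvergenceAction G M)
    (h3 : ∃ a b c : M, a ≠ b ∧ a ≠ c ∧ b ≠ c) {T : Set G} (hT : T.Infinite) :
    Infinite M := by
  by_contra hfin
  rw [not_infinite_iff_finite] at hfin
  obtain ⟨a, b, c, hab, hac, hbc⟩ := h3
  set K : Set (M × M × M) := {t | t.1 ≠ t.2.1 ∧ t.1 ≠ t.2.2 ∧ t.2.1 ≠ t.2.2} with hK
  have hKfin : K.Finite := Set.toFinite K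
  have hfinite := hconv.2 K K hKfin.isCompact hKfin.isCompact
    (by intro t ht; rcases ht with h | h <;> exact h)
  refine (hT.mono ?_) hfinite
  intro g _
  have ht0 : ((a, b, c) : M × M × M) ∈ K := ⟨hab, hac, hbc⟩
  refine ⟨g • ((a, b, c) : M × M × M), Set.smul_mem_smul_set ht0, ?_⟩
  refine ⟨(MulAction.injective g).ne hab, (MulAction.injective g).ne hac,
    (MulAction.injective g).ne hbc⟩

/-- An element fixing three distinct points has finite order (for a convergence action). -/
private lemma aux_finOrder_of_three_fixed (hconv : IsConvergenceAction G M)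
    {g : G} {x₁ x₂ x₃ : M} (h12 : x₁ ≠ x₂) (h13 : x₁ ≠ x₃) (h23 : x₂ ≠ x₃)
    (hf1 : g • x₁ = x₁) (hf2 : g • x₂ = x₂) (hf3 : g • x₃ = x₃) : IsOfFinOrder g := by
  by_contra hord
  have hinj : Function.Injective fun n : ℕ => g ^ n :=
    injective_pow_iff_not_isOfFinOrder.2 hord
  set K : Set (M × M × M) := {(x₁, x₂, x₃)} with hKdef
  have hKc : IsCompact K := isCompact_singleton
  have hfinite := hconv.2 K K hKc hKc
    (by rintro t (rfl | rfl) <;> exact ⟨h12, h13, h23⟩)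
  refine (Set.infinite_of_injective_forall_mem hinj ?_) hfinite
  intro n
  have hfix : ∀ y : M, g • y = y → (g ^ n) • y = y := by
    intro y hy
    induction n with
    | zero => simp
    | succ k ih => rw [pow_succ, mul_smul, hy, ih]
  have hsm : (g ^ n) • ((x₁, x₂, x₃) : M × M × M) = (x₁, x₂, x₃) := by
    show ((g ^ n) • x₁, (g ^ n) • x₂, (g ^ n) • x₃) = (x₁, x₂, x₃)
    rw [hfix _ hf1, hfix _ hf2, hfix _ hf3]
  exact ⟨(x₁, x₂, x₃), ⟨(x₁, x₂, x₃), Set.mem_singleton _, hsm⟩, Set.mem_singleton _⟩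

/-- From an accumulation point, extract an injective sequence of points of the set
converging to it. -/
private lemma aux_exists_inj_seq {A : Set M} {x : M} (hx : x ∈ closure (A \ {x})) :
    ∃ p : ℕ → M, (∀ n, p n ∈ A) ∧ (∀ n, p n ≠ x) ∧ Function.Injective p ∧
      Tendsto p atTop (nhds x) := by
  have key : ∀ δ : ℝ, 0 < δ → ∃ q : M, q ∈ A ∧ q ≠ x ∧ dist q x < δ := by
    intro δ hδ
    obtain ⟨q, hq, hqd⟩ := Metric.mem_closure_iff.1 hx δ hδ
    exact ⟨q, hq.1, fun h => hq.2 (by simp [h]), by rwa [dist_comm]⟩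
  have step : ∀ (q : M), q ≠ x → ∀ n : ℕ, ∃ q' : M,
      q' ∈ A ∧ q' ≠ x ∧ dist q' x < min (dist q x) (1 / (n + 1)) := by
    intro q hq n
    have h1 : (0 : ℝ) < dist q x := dist_pos.2 hq
    have h2 : (0 : ℝ) < 1 / (n + 1 : ℝ) := by positivity
    exact key _ (lt_min h1 h2)
  obtain ⟨q₀, hq₀A, hq₀x, _⟩ := key 1 one_pos
  let F : ℕ → {q : M // q ∈ A ∧ q ≠ x} := fun n =>
    Nat.rec ⟨q₀, hq₀A, hq₀x⟩
      (fun k prev => ⟨(step prev.1 prev.2.2 k).choose,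
        (step prev.1 prev.2.2 k).choose_spec.1, (step prev.1 prev.2.2 k).choose_spec.2.1⟩) n
  have hFd : ∀ n : ℕ, dist (F (n + 1)).1 x < min (dist (F n).1 x) (1 / (n + 1)) :=
    fun n => (step (F n).1 (F n).2.2 n).choose_spec.2.2
  have hanti : StrictAnti (fun n => dist (F n).1 x) :=
    strictAnti_nat_of_succ_lt fun n => lt_of_lt_of_le (hFd n) (min_le_left _ _)
  refine ⟨fun n => (F n).1, fun n => (F n).2.1, fun n => (F n).2.2, ?_, ?_⟩
  · intro m n hmn
    exact hanti.injective (by simp only [hmn])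
  · rw [Metric.tendsto_atTop]
    intro ε hε
    obtain ⟨N, hN⟩ := exists_nat_one_div_lt hε
    refine ⟨N + 1, fun n hn => ?_⟩
    calc dist (F n).1 x ≤ dist (F (N + 1)).1 x := hanti.antitone hn
      _ < 1 / (N + 1) := lt_of_lt_of_le (hFd N) (min_le_right _ _)
      _ < ε := hN

/-- The derived set (set of accumulation points) of any set is closed. -/
private lemma aux_isClosed_der (A : Set M) : IsClosed {v : M | v ∈ closure (A \ {v})} := by
  apply isClosed_of_closure_subset
  intro w hw
  rw [Set.mem_setOf_eq, Metric.mem_closure_iff]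
  intro ε hε
  obtain ⟨v, hv, hvw⟩ := Metric.mem_closure_iff.1 hw (ε / 2) (by positivity)
  rw [Set.mem_setOf_eq] at hv
  obtain ⟨q₁, hq₁, hq₁d⟩ := Metric.mem_closure_iff.1 hv (ε / 2) (by positivity)
  have hq₁v : q₁ ≠ v := fun h => hq₁.2 (by simp [h])
  have hd1 : 0 < dist v q₁ := by rw [dist_comm]; exact dist_pos.2 hq₁v
  obtain ⟨q₂, hq₂, hq₂d⟩ := Metric.mem_closure_iff.1 hv (min (ε / 2) (dist v q₁))
    (lt_min (by positivity) hd1)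
  have hq21 : q₂ ≠ q₁ := by
    intro h
    rw [h] at hq₂d
    exact absurd (lt_of_lt_of_le hq₂d (min_le_right _ _)) (lt_irrefl _)
  by_cases hq1w : q₁ = w
  · refine ⟨q₂, ⟨hq₂.1, fun h => hq21 (by rw [Set.mem_singleton_iff] at h; rw [h, hq1w])⟩, ?_⟩
    calc dist w q₂ ≤ dist w v + dist v q₂ := dist_triangle _ _ _
      _ < ε / 2 + min (ε / 2) (dist v q₁) := add_lt_add hvw hq₂d
      _ ≤ ε / 2 + ε / 2 := by gcongr; exact min_le_left _ _
      _ = ε := by ring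
  · refine ⟨q₁, ⟨hq₁.1, fun h => hq1w (Set.mem_singleton_iff.1 h)⟩, ?_⟩
    calc dist w q₁ ≤ dist w v + dist v q₁ := dist_triangle _ _ _
      _ < ε / 2 + ε / 2 := add_lt_add hvw hq₁d
      _ = ε := by ring

private lemma aux_limitSet_mono {K K' : Subgroup G} (h : K ≤ K') :
    limitSet G M K ⊆ limitSet G M K' := by
  rintro x ⟨m, hm⟩
  refine ⟨m, ?_⟩
  refine closure_mono (Set.diff_subset_diff_left (Set.image_mono ?_)) hm
  exact fun g hg => h hg

private lemma aux_smul_mem_limitSet (hcont : ∀ g : G, Continuous fun x : M => g • x)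
    {K : Subgroup G} {g : G} (hg : g ∈ K) {x : M} (hx : x ∈ limitSet G M K) :
    g • x ∈ limitSet G M K := by
  obtain ⟨m, hm⟩ := hx
  refine ⟨m, ?_⟩
  let e : M ≃ₜ M :=
    { toFun := fun y => g • y, invFun := fun y => g⁻¹ • y,
      left_inv := fun y => inv_smul_smul g y, right_inv := fun y => smul_inv_smul g y,
      continuous_toFun := hcont g, continuous_invFun := hcont g⁻¹ }
  have himg : e '' (((fun h : G => h • m) '' (K : Set G)) \ {x})
      = ((fun h : G => h • m) '' (K : Set G)) \ {g • x} := by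
    rw [Set.image_diff e.injective, Set.image_singleton]
    congr 1
    ext y
    constructor
    · rintro ⟨y', ⟨k, hk, rfl⟩, rfl⟩
      refine ⟨g * k, K.mul_mem hg hk, ?_⟩
      show (g * k) • m = g • k • m
      rw [mul_smul]
    · rintro ⟨k, hk, rfl⟩
      refine ⟨(g⁻¹ * k) • m, ⟨g⁻¹ * k, K.mul_mem (K.inv_mem hg) hk, rfl⟩, ?_⟩
      show g • (g⁻¹ * k) • m = k • m
      rw [← mul_smul, ← mul_assoc, mul_inv_cancel, one_mul]
  have hmem : e x ∈ e '' closure (((fun h : G => h • m) '' (K : Set G)) \ {x}) :=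
    ⟨x, hm, rfl⟩
  rw [e.image_closure, himg] at hmem
  exact hmem

/-- A sequence in a finite set converging to `z` is eventually equal to `z`. -/
private lemma aux_tendsto_finite_eventually {S : Set M} (hS : S.Finite) {p : ℕ → M} {z : M}
    (hmem : ∀ n, p n ∈ S) (hp : Tendsto p atTop (nhds z)) : ∀ᶠ n in atTop, p n = z := by
  by_cases hT : (S \ {z}).Nonempty
  · have hTf : (S \ {z}).Finite := hS.subset Set.diff_subset
    have hcl : IsClosed (S \ {z}) := hTf.isClosed
    have hpos : 0 < infDist z (S \ {z}) :=
      (hcl.notMem_iff_infDist_pos hT).1 (fun h => h.2 rfl)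
    have := (Metric.tendsto_atTop.1 hp) _ hpos
    obtain ⟨N, hN⟩ := this
    rw [Filter.eventually_atTop]
    refine ⟨N, fun n hn => ?_⟩
    by_contra hne
    have hmem' : p n ∈ S \ {z} := ⟨hmem n, hne⟩
    have h1 : infDist z (S \ {z}) ≤ dist z (p n) := infDist_le_dist_of_mem hmem'
    rw [dist_comm] at h1
    exact absurd (lt_of_le_of_lt h1 (hN n hn)) (lt_irrefl _)
  · rw [Set.not_nonempty_iff_eq_empty] at hT
    refine Filter.Eventually.of_forall fun n => ?_
    have := hmem n
    by_contra hne
    exact absurd (Set.mem_diff_singleton.2 ⟨this, hne⟩) (by rw [hT]; exact Set.notMem_empty _)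

/-- In an infinite type, one can avoid any finite set. -/
private lemma aux_exists_fresh (hM : Infinite M) {F : Set M} (hF : F.Finite) :
    ∃ y : M, y ∉ F := by
  haveI := hM
  exact (hF.infinite_compl.nonempty).imp fun y hy => hy

/-- Combinatorial lemma: a relation on an infinite type with both projections surjective and
no three pairs with pairwise distinct first and second coordinates is contained in a "cross". -/
private lemma aux_comb (hM : Infinite M) {R : Set (M × M)}
    (h1 : ∀ x : M, ∃ y, (x, y) ∈ R) (h2 : ∀ y : M, ∃ x, (x, y) ∈ R)
    (h33 : ∀ p q s : M × M, p ∈ R → q ∈ R → s ∈ R → p.1 ≠ q.1 → p.1 ≠ s.1 → q.1 ≠ s.1 →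
      p.2 ≠ q.2 → p.2 ≠ s.2 → q.2 ≠ s.2 → False) :
    ∃ a r : M, ∀ p ∈ R, p.1 = r ∨ p.2 = a := by
  haveI := hM
  by_cases h2m : ∃ p q : M × M, p ∈ R ∧ q ∈ R ∧ p.1 ≠ q.1 ∧ p.2 ≠ q.2
  swap
  · push_neg at h2m
    obtain ⟨y₀, hy₀⟩ := h1 (Classical.arbitrary M)
    refine ⟨y₀, Classical.arbitrary M, fun p hp => ?_⟩
    by_cases hx : p.1 = Classical.arbitrary M
    · exact Or.inl hx
    · exact Or.inr (h2m p _ hp hy₀ hx)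
  obtain ⟨p₁, p₂, hp₁, hp₂, hx12, hy12⟩ := h2m
  obtain ⟨x₁, y₁⟩ := p₁
  obtain ⟨x₂, y₂⟩ := p₂
  simp only at hx12 hy12
  -- every element of R outside columns x₁ x₂ has second coordinate y₁ or y₂
  have hout : ∀ w ∈ R, w.1 ≠ x₁ → w.1 ≠ x₂ → w.2 = y₁ ∨ w.2 = y₂ := by
    intro w hw hw1 hw2
    by_contra hno
    push_neg at hno
    exact h33 w (x₁, y₁) (x₂, y₂) hw hp₁ hp₂ hw1 hw2 hx12 hno.1 hno.2 hy12
  by_cases hsplit : ∃ u v : M, (u, y₁) ∈ R ∧ (v, y₂) ∈ R ∧ u ≠ x₁ ∧ u ≠ x₂ ∧ v ≠ x₁ ∧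
      v ≠ x₂ ∧ u ≠ v
  · -- then all second coordinates lie in {y₁, y₂}, contradicting surjectivity of snd
    exfalso
    obtain ⟨u, v, huR, hvR, hu1, hu2, hv1, hv2, huv⟩ := hsplit
    have hall : ∀ w ∈ R, w.2 = y₁ ∨ w.2 = y₂ := by
      intro w hw
      by_contra hno
      push_neg at hno
      by_cases hw12 : w.1 ≠ x₁ ∧ w.1 ≠ x₂
      · rcases hout w hw hw12.1 hw12.2 with h | h
        · exact hno.1 h
        · exact hno.2 h
      · -- w.1 ∈ {x₁, x₂}, hence distinct from u and v
        have hwu : w.1 ≠ u := by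
          rcases not_and_or.1 hw12 with h | h <;> rw [not_not.1 h] <;>
            [exact fun hh => hu1 hh.symm; exact fun hh => hu2 hh.symm]
        have hwv : w.1 ≠ v := by
          rcases not_and_or.1 hw12 with h | h <;> rw [not_not.1 h] <;>
            [exact fun hh => hv1 hh.symm; exact fun hh => hv2 hh.symm]
        exact h33 w (u, y₁) (v, y₂) hw huR hvR hwu hwv huv hno.1 hno.2 hy12
    obtain ⟨y₃, hy₃⟩ := aux_exists_fresh hM (Set.toFinite ({y₁, y₂} : Set M))
    simp only [Set.mem_insert_iff, Set.mem_singleton_iff, not_or] at hy₃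
    obtain ⟨x₃, hx₃⟩ := h2 y₃
    rcases hall (x₃, y₃) hx₃ with h | h
    · exact hy₃.1 h
    · exact hy₃.2 h
  · push_neg at hsplit
    -- hsplit : ∀ u v, (u,y₁) ∈ R → (v,y₂) ∈ R → u ≠ x₁ → u ≠ x₂ → v ≠ x₁ → v ≠ x₂ → u = v
    -- Find the common value a on the generic columns
    have key : ∃ a : M, (a = y₁ ∨ a = y₂) ∧
        ∀ w ∈ R, w.1 ≠ x₁ → w.1 ≠ x₂ → w.2 = a := by
      by_cases hP1 : ∃ u, (u, y₁) ∈ R ∧ u ≠ x₁ ∧ u ≠ x₂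
      · by_cases hP2 : ∃ v, (v, y₂) ∈ R ∧ v ≠ x₁ ∧ v ≠ x₂
        · -- both nonempty: contradiction using a fresh column
          exfalso
          obtain ⟨u₀, hu₀R, hu₀1, hu₀2⟩ := hP1
          obtain ⟨v₀, hv₀R, hv₀1, hv₀2⟩ := hP2
          obtain ⟨t, ht⟩ := aux_exists_fresh hM (Set.toFinite ({x₁, x₂, u₀} : Set M))
          simp only [Set.mem_insert_iff, Set.mem_singleton_iff, not_or] at ht
          obtain ⟨ht1, ht2, ht3⟩ := ht
          obtain ⟨yt, hyt⟩ := h1 t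
          rcases hout (t, yt) hyt ht1 ht2 with h | h
          · -- t ∈ P₁, so t = v₀, and u₀ = v₀ forces t = u₀
            simp only at h
            rw [h] at hyt
            have h1' : t = v₀ := hsplit t v₀ hyt hv₀R ht1 ht2 hv₀1 hv₀2
            have h2' : u₀ = v₀ := hsplit u₀ v₀ hu₀R hv₀R hu₀1 hu₀2 hv₀1 hv₀2
            exact ht3 (h1'.trans h2'.symm)
          · simp only at h
            rw [h] at hyt
            exact ht3 (hsplit u₀ t hu₀R hyt hu₀1 hu₀2 ht1 ht2).symm
        · -- P₂ empty, a := y₁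
          refine ⟨y₁, Or.inl rfl, fun w hw hw1 hw2 => ?_⟩
          rcases hout w hw hw1 hw2 with h | h
          · exact h
          · exfalso
            apply hP2
            refine ⟨w.1, ?_, hw1, hw2⟩
            rw [← h]
            exact hw
      · -- P₁ empty, a := y₂
        refine ⟨y₂, Or.inr rfl, fun w hw hw1 hw2 => ?_⟩
        rcases hout w hw hw1 hw2 with h | h
        · exfalso
          apply hP1
          refine ⟨w.1, ?_, hw1, hw2⟩
          rw [← h]
          exact hw
        · exact h
    obtain ⟨a, -, hC1⟩ := key
    -- a fresh full column
    obtain ⟨t, ht⟩ := aux_exists_fresh hM (Set.toFinite ({x₁, x₂} : Set M))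
    simp only [Set.mem_insert_iff, Set.mem_singleton_iff, not_or] at ht
    obtain ⟨ht1, ht2⟩ := ht
    obtain ⟨yt, hytR⟩ := h1 t
    have hyta : yt = a := hC1 (t, yt) hytR ht1 ht2
    rw [hyta] at hytR
    refine ⟨a, ?_⟩
    by_contra hnor
    push_neg at hnor
    -- hnor : ∀ r, ∃ w ∈ R, w.1 ≠ r ∧ w.2 ≠ a
    obtain ⟨w, hwR, hwx, hwy⟩ := hnor x₂
    obtain ⟨w', hw'R, hw'x, hw'y⟩ := hnor x₁
    have hw1 : w.1 = x₁ := by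
      by_contra h
      exact hwy (hC1 w hwR h hwx)
    have hw'2 : w'.1 = x₂ := by
      by_contra h
      exact hw'y (hC1 w' hw'R hw'x h)
    by_cases hww : w.2 = w'.2
    · -- get a third distinct value in columns x₁, x₂
      obtain ⟨y₃, hy₃⟩ := aux_exists_fresh hM (Set.toFinite ({a, w.2} : Set M))
      simp only [Set.mem_insert_iff, Set.mem_singleton_iff, not_or] at hy₃
      obtain ⟨hy₃a, hy₃w⟩ := hy₃
      obtain ⟨x₃, hx₃R⟩ := h2 y₃
      have hx₃ : x₃ = x₁ ∨ x₃ = x₂ := by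
        by_contra h
        push_neg at h
        exact hy₃a (hC1 (x₃, y₃) hx₃R h.1 h.2)
      rcases hx₃ with h | h
      · rw [h] at hx₃R
        refine h33 (x₁, y₃) w' (t, a) hx₃R hw'R hytR ?_ ?_ ?_ ?_ ?_ ?_
        · rw [hw'2]; exact hx12
        · exact fun hh => ht1 hh.symm
        · rw [hw'2]; exact fun hh => ht2 hh.symm
        · show y₃ ≠ w'.2; rw [← hww]; exact hy₃w
        · exact hy₃a
        · show w'.2 ≠ a; rw [← hww]; exact hwy
      · rw [h] at hx₃R
        refine h33 w (x₂, y₃) (t, a) hwR hx₃R hytR ?_ ?_ ?_ ?_ ?_ ?_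
        · rw [hw1]; exact hx12
        · rw [hw1]; exact fun hh => ht1 hh.symm
        · exact fun hh => ht2 hh.symm
        · show w.2 ≠ y₃; exact fun hh => hy₃w hh.symm
        · exact hwy
        · exact hy₃a
    · refine h33 w w' (t, a) hwR hw'R hytR ?_ ?_ ?_ hww hwy hw'y
      · rw [hw1, hw'2]; exact hx12
      · rw [hw1]; exact fun hh => ht1 hh.symm
      · rw [hw'2]; exact fun hh => ht2 hh.symm

/-- The convergence property: any injective sequence in `G` admits a subsequence converging
locally uniformly on the complement of a point `r` to a constant `a`. -/
private lemma aux_exists_cross (hconv : IsConvergenceAction G M)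
    (h3 : ∃ a b c : M, a ≠ b ∧ a ≠ c ∧ b ≠ c)
    (k : ℕ → G) (hinj : Function.Injective k) :
    ∃ φ : ℕ → ℕ, StrictMono φ ∧ ∃ a r : M,
      ∀ C : Set M, IsCompact C → r ∉ C → ∀ ε : ℝ, 0 < ε →
        ∀ᶠ n in atTop, ∀ x ∈ C, dist (k (φ n) • x) a < ε := by
  have hM : Infinite M := aux_M_infinite hconv h3 (Set.infinite_range_of_injective hinj)
  haveI := hM
  haveI : Nonempty M := inferInstance
  have hcont := hconv.1
  -- the graphs of the elements of the sequence, as elements of the hyperspace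
  let Γ : ℕ → TopologicalSpace.NonemptyCompacts (M × M) := fun n =>
    ⟨⟨Set.range (fun x : M => (x, k n • x)),
      isCompact_range (continuous_id.prodMk (hcont (k n)))⟩,
      Set.range_nonempty _⟩
  obtain ⟨R, -, φ, hφ, hR⟩ := isCompact_univ.tendsto_subseq (fun n => Set.mem_univ (Γ n))
  have hdist : Tendsto (fun n => dist (Γ (φ n)) R) atTop (nhds 0) := by
    have := tendsto_iff_dist_tendsto_zero.1 hR
    exact this
  have hedist_ne_top : ∀ s t : TopologicalSpace.NonemptyCompacts (M × M),
      EMetric.hausdorffEdist (s : Set (M × M)) (t : Set (M × M)) ≠ ⊤ := fun s t =>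
    hausdorffEdist_ne_top_of_nonempty_of_bounded s.nonempty t.nonempty
      s.isCompact.isBounded t.isCompact.isBounded
  -- membership criterion for the limit set of graphs
  have memR : ∀ ψ : ℕ → ℕ, StrictMono ψ → ∀ (x : ℕ → M) (p : M × M),
      Tendsto (fun n => ((x n, k (φ (ψ n)) • x n) : M × M)) atTop (nhds p) →
      p ∈ (R : Set (M × M)) := by
    intro ψ hψ x p hx
    have h1 : ∀ n, infDist ((x n, k (φ (ψ n)) • x n) : M × M) (R : Set (M × M)) ≤
        dist (Γ (φ (ψ n))) R := by
      intro n
      have hmem : ((x n, k (φ (ψ n)) • x n) : M × M) ∈ (Γ (φ (ψ n)) : Set (M × M)) :=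
        ⟨x n, rfl⟩
      calc infDist ((x n, k (φ (ψ n)) • x n) : M × M) (R : Set (M × M)) ≤
          infDist ((x n, k (φ (ψ n)) • x n) : M × M) (Γ (φ (ψ n)) : Set (M × M)) +
            hausdorffDist (Γ (φ (ψ n)) : Set (M × M)) (R : Set (M × M)) :=
            infDist_le_infDist_add_hausdorffDist (hedist_ne_top _ _)
        _ = dist (Γ (φ (ψ n))) R := by
            rw [infDist_zero_of_mem hmem, zero_add]
            rfl
    have h2 : Tendsto (fun n => infDist ((x n, k (φ (ψ n)) • x n) : M × M)
        (R : Set (M × M))) atTop (nhds (infDist p (R : Set (M × M)))) :=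
      ((continuous_infDist_pt (R : Set (M × M))).tendsto p).comp hx
    have h3' : Tendsto (fun n => dist (Γ (φ (ψ n))) R) atTop (nhds 0) :=
      hdist.comp hψ.tendsto_atTop
    have hle : infDist p (R : Set (M × M)) ≤ 0 :=
      le_of_tendsto_of_tendsto' h2 h3' h1
    exact (R.isCompact.isClosed.mem_iff_infDist_zero R.nonempty).2
      (le_antisymm hle infDist_nonneg)
  -- approximation of points of R by points on the graphs
  have getR : ∀ p ∈ (R : Set (M × M)), ∀ δ : ℝ, 0 < δ → ∀ᶠ n in atTop,
      ∃ x : M, dist ((x, k (φ n) • x) : M × M) p < δ := by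
    intro p hp δ hδ
    have hev : ∀ᶠ n in atTop, dist (Γ (φ n)) R < δ :=
      hdist.eventually (eventually_lt_nhds hδ)
    filter_upwards [hev] with n hn
    have hhd : hausdorffDist (Γ (φ n) : Set (M × M)) (R : Set (M × M)) < δ := hn
    obtain ⟨q, hq, hqd⟩ := exists_dist_lt_of_hausdorffDist_lt' hp hhd (hedist_ne_top _ _)
    obtain ⟨x, rfl⟩ := hq
    exact ⟨x, hqd⟩
  -- both projections of R are surjective
  have hfst : ∀ x : M, ∃ y : M, (x, y) ∈ (R : Set (M × M)) := by
    intro x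
    obtain ⟨y, -, ψ, hψ, hy⟩ :=
      isCompact_univ.tendsto_subseq (x := fun n => k (φ n) • x) (fun n => Set.mem_univ _)
    exact ⟨y, memR ψ hψ (fun _ => x) (x, y) (tendsto_const_nhds.prodMk_nhds hy)⟩
  have hsnd : ∀ y : M, ∃ x : M, (x, y) ∈ (R : Set (M × M)) := by
    intro y
    obtain ⟨x, -, ψ, hψ, hx⟩ :=
      isCompact_univ.tendsto_subseq (x := fun n => (k (φ n))⁻¹ • y) (fun n => Set.mem_univ _)
    refine ⟨x, memR ψ hψ (fun n => (k (φ (ψ n)))⁻¹ • y) (x, y) ?_⟩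
    have heq : (fun n => (((k (φ (ψ n)))⁻¹ • y, k (φ (ψ n)) • (k (φ (ψ n)))⁻¹ • y) : M × M)) =
        fun n => (((k (φ (ψ n)))⁻¹ • y, y) : M × M) := by
      funext n
      rw [smul_inv_smul]
    rw [heq]
    exact hx.prodMk_nhds tendsto_const_nhds
  -- no three points of R with pairwise distinct coordinates
  have h33 : ∀ p q s : M × M, p ∈ (R : Set (M × M)) → q ∈ (R : Set (M × M)) →
      s ∈ (R : Set (M × M)) → p.1 ≠ q.1 → p.1 ≠ s.1 → q.1 ≠ s.1 →
      p.2 ≠ q.2 → p.2 ≠ s.2 → q.2 ≠ s.2 → False := by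
    intro p q s hp hq hs h12 h13 h23 h12' h13' h23'
    set m₀ : ℝ := min (min (dist p.1 q.1) (min (dist p.1 s.1) (dist q.1 s.1)))
      (min (dist p.2 q.2) (min (dist p.2 s.2) (dist q.2 s.2))) with hm₀
    have hm₀pos : 0 < m₀ := by
      refine lt_min (lt_min ?_ (lt_min ?_ ?_)) (lt_min ?_ (lt_min ?_ ?_)) <;>
        rwa [dist_pos]
    set δ : ℝ := m₀ / 4 with hδdef
    have hδpos : 0 < δ := by positivity
    set K : Set (M × M × M) :=
      closedBall p.1 δ ×ˢ (closedBall q.1 δ ×ˢ closedBall s.1 δ) with hKdef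
    set L : Set (M × M × M) :=
      closedBall p.2 δ ×ˢ (closedBall q.2 δ ×ˢ closedBall s.2 δ) with hLdef
    have hKc : IsCompact K :=
      (isCompact_closedBall _ _).prod ((isCompact_closedBall _ _).prod
        (isCompact_closedBall _ _))
    have hLc : IsCompact L :=
      (isCompact_closedBall _ _).prod ((isCompact_closedBall _ _).prod
        (isCompact_closedBall _ _))
    have hsep : ∀ c₁ c₂ u₁ u₂ : M, m₀ ≤ dist c₁ c₂ → dist u₁ c₁ ≤ δ → dist u₂ c₂ ≤ δ →
        u₁ ≠ u₂ := by
      intro c₁ c₂ u₁ u₂ hc h₁ h₂ hne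
      rw [hne] at h₁
      have : dist c₁ c₂ ≤ δ + δ := by
        calc dist c₁ c₂ ≤ dist c₁ u₂ + dist u₂ c₂ := dist_triangle _ _ _
          _ ≤ δ + δ := add_le_add (by rwa [dist_comm]) h₂
      have : m₀ ≤ δ + δ := le_trans hc this
      rw [hδdef] at this
      linarith
    have hdistinct : ∀ t ∈ K ∪ L, t.1 ≠ t.2.1 ∧ t.1 ≠ t.2.2 ∧ t.2.1 ≠ t.2.2 := by
      rintro t (ht | ht)
      · obtain ⟨ht1, ht2, ht3⟩ := ht
        exact ⟨hsep _ _ _ _ (le_trans (min_le_left _ _) (le_trans (min_le_left _ _)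
            (le_refl _))) (mem_closedBall.1 ht1) (mem_closedBall.1 ht2),
          hsep _ _ _ _ (le_trans (min_le_left _ _) (le_trans (min_le_right _ _)
            (min_le_left _ _))) (mem_closedBall.1 ht1) (mem_closedBall.1 ht3),
          hsep _ _ _ _ (le_trans (min_le_left _ _) (le_trans (min_le_right _ _)
            (min_le_right _ _))) (mem_closedBall.1 ht2) (mem_closedBall.1 ht3)⟩
      · obtain ⟨ht1, ht2, ht3⟩ := ht
        exact ⟨hsep _ _ _ _ (le_trans (min_le_right _ _) (le_trans (min_le_left _ _)
            (le_refl _))) (mem_closedBall.1 ht1) (mem_closedBall.1 ht2),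
          hsep _ _ _ _ (le_trans (min_le_right _ _) (le_trans (min_le_right _ _)
            (min_le_left _ _))) (mem_closedBall.1 ht1) (mem_closedBall.1 ht3),
          hsep _ _ _ _ (le_trans (min_le_right _ _) (le_trans (min_le_right _ _)
            (min_le_right _ _))) (mem_closedBall.1 ht2) (mem_closedBall.1 ht3)⟩
    have hfin := hconv.2 K L hKc hLc hdistinct
    -- for large n, k (φ n) maps a point of K into L
    have hev : ∀ᶠ n in atTop, (((k (φ n)) • K) ∩ L).Nonempty := by
      filter_upwards [getR p hp δ hδpos, getR q hq δ hδpos, getR s hs δ hδpos]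
        with n hpn hqn hsn
      obtain ⟨xp, hxp⟩ := hpn
      obtain ⟨xq, hxq⟩ := hqn
      obtain ⟨xs, hxs⟩ := hsn
      rw [Prod.dist_eq] at hxp hxq hxs
      have hxp1 : dist xp p.1 ≤ δ := le_of_lt (lt_of_le_of_lt (le_max_left _ _) hxp)
      have hxp2 : dist (k (φ n) • xp) p.2 ≤ δ :=
        le_of_lt (lt_of_le_of_lt (le_max_right _ _) hxp)
      have hxq1 : dist xq q.1 ≤ δ := le_of_lt (lt_of_le_of_lt (le_max_left _ _) hxq)
      have hxq2 : dist (k (φ n) • xq) q.2 ≤ δ :=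
        le_of_lt (lt_of_le_of_lt (le_max_right _ _) hxq)
      have hxs1 : dist xs s.1 ≤ δ := le_of_lt (lt_of_le_of_lt (le_max_left _ _) hxs)
      have hxs2 : dist (k (φ n) • xs) s.2 ≤ δ :=
        le_of_lt (lt_of_le_of_lt (le_max_right _ _) hxs)
      refine ⟨(k (φ n) • xp, k (φ n) • xq, k (φ n) • xs), ?_, ?_⟩
      · refine ⟨(xp, xq, xs), ⟨mem_closedBall.2 hxp1, mem_closedBall.2 hxq1,
          mem_closedBall.2 hxs1⟩, rfl⟩
      · exact ⟨mem_closedBall.2 hxp2, mem_closedBall.2 hxq2, mem_closedBall.2 hxs2⟩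
    obtain ⟨N, hN⟩ := Filter.eventually_atTop.1 hev
    refine (Set.infinite_of_injective_forall_mem
      (f := fun i : ℕ => k (φ (N + i))) ?_ ?_) hfin
    · intro i j hij
      have := hinj hij
      have := hφ.injective this
      omega
    · intro i
      exact hN (N + i) (Nat.le_add_right _ _)
  -- apply the combinatorial lemma
  obtain ⟨a, r, hcross⟩ := aux_comb hM hfst hsnd h33
  refine ⟨φ, hφ, a, r, ?_⟩
  intro C hC hrC ε hε
  by_contra hcon
  rw [Filter.not_eventually] at hcon
  have hfreq : ∃ᶠ n in atTop, ∃ x ∈ C, ε ≤ dist (k (φ n) • x) a := by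
    refine hcon.mono fun n hn => ?_
    push_neg at hn
    exact hn
  obtain ⟨ψ, hψ, hΨ⟩ := Filter.extraction_of_frequently_atTop hfreq
  choose xs hxsC hxsd using hΨ
  obtain ⟨x₀, hx₀C, ψ₂, hψ₂, hx₀⟩ := hC.tendsto_subseq hxsC
  obtain ⟨y₀, -, ψ₃, hψ₃, hy₀⟩ := isCompact_univ.tendsto_subseq
    (x := fun n => k (φ (ψ (ψ₂ n))) • xs (ψ₂ n)) (fun n => Set.mem_univ _)
  have hmem : ((x₀, y₀) : M × M) ∈ (R : Set (M × M)) := by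
    refine memR (ψ ∘ ψ₂ ∘ ψ₃) (hψ.comp (hψ₂.comp hψ₃)) (fun n => xs (ψ₂ (ψ₃ n))) _ ?_
    exact Tendsto.prodMk_nhds (hx₀.comp hψ₃.tendsto_atTop) hy₀
  rcases hcross _ hmem with h | h
  · simp only at h
    exact hrC (h ▸ hx₀C)
  · have hge : ε ≤ dist y₀ a := by
      have hdtend : Tendsto (fun n => dist (k (φ (ψ (ψ₂ (ψ₃ n)))) • xs (ψ₂ (ψ₃ n))) a)
          atTop (nhds (dist y₀ a)) := hy₀.dist tendsto_const_nhds
      exact ge_of_tendsto hdtend (Filter.Eventually.of_forall fun n => hxsd (ψ₂ (ψ₃ n)))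
    simp only at h
    rw [h] at hge
    simp only [dist_self] at hge
    exact absurd (lt_of_lt_of_le hε hge) (lt_irrefl _)

private lemma aux_pow_smul_fixed {g : G} {y : M} (h : g • y = y) (n : ℕ) :
    (g ^ n) • y = y := by
  induction n with
  | zero => simp
  | succ m ih => rw [pow_succ, mul_smul, h, ih]

private lemma aux_third (h3 : ∃ a b c : M, a ≠ b ∧ a ≠ c ∧ b ≠ c) (u v : M) :
    ∃ w : M, w ≠ u ∧ w ≠ v := by
  obtain ⟨a, b, c, hab, hac, hbc⟩ := h3
  by_cases h1 : a ≠ u ∧ a ≠ v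
  · exact ⟨a, h1⟩
  by_cases h2 : b ≠ u ∧ b ≠ v
  · exact ⟨b, h2⟩
  by_cases h3' : c ≠ u ∧ c ≠ v
  · exact ⟨c, h3'⟩
  exfalso
  simp only [not_and_or, not_not] at h1 h2 h3'
  rcases h1 with rfl | rfl <;> rcases h2 with rfl | rfl <;> rcases h3' with rfl | rfl <;>
    simp_all

/-- Production of a loxodromic element from strong attracting behaviour. -/
private lemma aux_produce_lox (hconv : IsConvergenceAction G M)
    (h3 : ∃ a b c : M, a ≠ b ∧ a ≠ c ∧ b ≠ c)
    {g : G} {p a : M} {ε : ℝ} (hε : 0 < ε)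
    (hfix : g • p = p) (hsep : 2 * ε < dist a p)
    (hmap : ∀ x : M, ε ≤ dist x p → dist (g • x) a < ε)
    (hw : ∃ w : M, ε ≤ dist w p ∧ ε < dist w a) :
    ∃ q : M, IsLoxodromic G M g ∧ g • q = q ∧ dist q a ≤ ε ∧
      (q = a ∨ ∀ K : Subgroup G, g ∈ K → q ∈ limitSet G M K) := by
  obtain ⟨w, hw1, hw2⟩ := hw
  have hcont := hconv.1
  have hafar : ε ≤ dist a p := by linarith
  -- iterates of far points stay near a
  have hstep : ∀ x : M, ε ≤ dist x p → ∀ n : ℕ, 1 ≤ n → dist ((g ^ n) • x) a < ε := by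
    intro x hx n hn
    induction n with
    | zero => omega
    | succ m ih =>
      by_cases hm : 1 ≤ m
      · have hprev := ih hm
        have hfar : ε ≤ dist ((g ^ m) • x) p := by
          have h1 := dist_triangle a ((g ^ m) • x) p
          have h2 : dist a ((g ^ m) • x) < ε := by rwa [dist_comm]
          linarith
        have hres := hmap _ hfar
        have hEq : (g ^ (m + 1)) • x = g • ((g ^ m) • x) := by
          rw [← mul_smul, ← pow_succ']
        rw [hEq]
        exact hres
      · have hm0 : m = 0 := by omega
        subst hm0
        rw [pow_one]
        exact hmap x hx
  have hword : ¬IsOfFinOrder g := by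
    intro hord
    obtain ⟨n, hn, hgn⟩ := isOfFinOrder_iff_pow_eq_one.1 hord
    have := hstep w hw1 n hn
    rw [hgn, one_smul] at this
    linarith
  have hpa : a ≠ p := by
    intro h
    rw [h] at hsep
    simp only [dist_self] at hsep
    linarith
  have mk_lox : ∀ q : M, g • q = q → q ≠ p → IsLoxodromic G M g := by
    intro q hq hqp
    refine ⟨hword, ?_⟩
    have hset : {x : M | g • x = x} = {p, q} := by
      ext x
      simp only [Set.mem_setOf_eq, Set.mem_insert_iff, Set.mem_singleton_iff]
      constructor
      · intro hx
        by_contra hcon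
        push_neg at hcon
        exact hword (aux_finOrder_of_three_fixed hconv (Ne.symm hqp) (Ne.symm hcon.1)
          (Ne.symm hcon.2) hfix hq hx)
      · rintro (rfl | rfl)
        exacts [hfix, hq]
    rw [hset]
    exact Set.encard_pair (Ne.symm hqp)
  by_cases hga : g • a = a
  · exact ⟨a, mk_lox a hga hpa, hga, by simp [hε.le], Or.inl rfl⟩
  · -- apply the convergence property to the powers of g
    have hpowinj : Function.Injective fun n : ℕ => g ^ (n + 1) := by
      intro m n h
      have h2 := injective_pow_iff_not_isOfFinOrder.2 hword h
      omega
    obtain ⟨φ, hφ, a', r', hcp⟩ := aux_exists_cross hconv h3 (fun n => g ^ (n + 1)) hpowinj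
    have hconv_pt : ∀ u : M, u ≠ r' → Tendsto (fun n => (g ^ (φ n + 1)) • u) atTop (nhds a') := by
      intro u hu
      rw [Metric.tendsto_atTop]
      intro δ hδ
      have := hcp {u} isCompact_singleton (by simpa using Ne.symm hu) δ hδ
      obtain ⟨N, hN⟩ := Filter.eventually_atTop.1 this
      exact ⟨N, fun n hn => hN n hn u rfl⟩
    -- choose a point far from p avoiding r'
    have hwa' : w ≠ a := fun h => by rw [h] at hw2; simp at hw2; linarith
    have hcand : ∃ x : M, ε ≤ dist x p ∧ x ≠ r' := by
      by_cases h : a = r'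
      · exact ⟨w, hw1, fun hh => hwa' (hh.trans h.symm)⟩
      · exact ⟨a, hafar, h⟩
    obtain ⟨x₀, hx₀far, hx₀ne⟩ := hcand
    have htend := hconv_pt x₀ hx₀ne
    have ha'ball : dist a' a ≤ ε :=
      le_of_tendsto (htend.dist (tendsto_const_nhds (x := a)))
        (Filter.Eventually.of_forall fun n => (hstep x₀ hx₀far _ (by omega)).le)
    have ha'p : a' ≠ p := by
      intro h
      rw [h, dist_comm] at ha'ball
      linarith
    -- the three candidate points a, w, g • a are pairwise distinct
    have hgaa : dist (g • a) a < ε := hmap a hafar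
    have hgaw : g • a ≠ w := by
      intro h
      rw [h] at hgaa
      linarith
    have haw : a ≠ w := Ne.symm hwa'
    -- g fixes a'
    have hgfix : g • a' = a' := by
      have hu : ∃ u : M, u ≠ r' ∧ g • u ≠ r' := by
        by_cases h1 : a = r'
        · -- then w ≠ r' and g • a ≠ r'... need u with u ≠ r' ∧ g•u ≠ r'
          by_cases h2 : g • w = r'
          · -- u := g • a?? need (g • (g • a)) ≠ r': try u := g•a: u ≠ r' ⇔ g•a ≠ a ✓ (r' = a);
            -- g•u = g•(g•a) ≠ r' = a: since g•(g•a) = a → g•a = ... injective from g•a ≠ a? 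
            refine ⟨g • a, fun h => hga (by rw [← h1] at h; exact h), ?_⟩
            intro h
            rw [← h1] at h
            -- g • (g • a) = a and g • w = r' = a: injective g: g • a = w
            have := MulAction.injective g (h.trans (by rw [← h1] at h2; rw [← h2]))
            exact hgaw this
          · exact ⟨w, fun h => hwa' (h.trans h1.symm), h2⟩
        · by_cases h2 : g • a = r'
          · refine ⟨w, ?_, ?_⟩
            · rw [← h2]
              exact fun h => hgaw h.symm
            · rw [← h2]
              intro h
              exact hwa' (MulAction.injective g h)
          · exact ⟨a, h1, h2⟩
      obtain ⟨u, hur, hgur⟩ := hu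
      have h1 := hconv_pt u hur
      have h2 := hconv_pt (g • u) hgur
      have hcomm : ∀ n : ℕ, g • ((g ^ (φ n + 1)) • u) = (g ^ (φ n + 1)) • (g • u) := by
        intro n
        rw [← mul_smul, ← mul_smul, pow_mul_comm']
      have h3 : Tendsto (fun n => g • ((g ^ (φ n + 1)) • u)) atTop (nhds (g • a')) :=
        ((hcont g).tendsto a').comp h1
      rw [show (fun n => g • ((g ^ (φ n + 1)) • u)) = fun n => (g ^ (φ n + 1)) • (g • u)
        from funext hcomm] at h3
      exact tendsto_nhds_unique h3 h2
    -- a point avoiding r' and a'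
    have hy₀ : ∃ y₀ : M, y₀ ≠ r' ∧ y₀ ≠ a' := by
      by_cases h1 : (a ≠ r' ∧ a ≠ a')
      · exact ⟨a, h1⟩
      by_cases h2 : (w ≠ r' ∧ w ≠ a')
      · exact ⟨w, h2⟩
      by_cases h3' : (g • a ≠ r' ∧ g • a ≠ a')
      · exact ⟨g • a, h3'⟩
      exfalso
      simp only [not_and_or, not_not] at h1 h2 h3'
      rcases h1 with rfl | rfl <;> rcases h2 with rfl | rfl <;> rcases h3' with h3' | h3' <;>
        simp_all
    obtain ⟨y₀, hy₀r, hy₀a⟩ := hy₀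
    refine ⟨a', mk_lox a' hgfix ha'p, hgfix, ha'ball, Or.inr ?_⟩
    intro K hgK
    refine ⟨y₀, ?_⟩
    have h1 := hconv_pt y₀ hy₀r
    refine mem_closure_of_tendsto h1 (Filter.Eventually.of_forall fun n => ?_)
    refine ⟨⟨g ^ (φ n + 1), ?_, rfl⟩, ?_⟩
    · exact SetLike.mem_coe.2 (pow_mem hgK _)
    · intro hmem
      rw [Set.mem_singleton_iff] at hmem
      have hfixpow : (g ^ (φ n + 1)) • a' = a' := aux_pow_smul_fixed hgfix _
      exact hy₀a (MulAction.injective (g ^ (φ n + 1)) (hmem.trans hfixpow.symm))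

/-- For injective sequences in the stabilizer of `z` (with no loxodromics in the stabilizer),
the attracting point of the cross is `z` itself. -/
private lemma aux_stab_cross (hconv : IsConvergenceAction G M)
    (h3 : ∃ a b c : M, a ≠ b ∧ a ≠ c ∧ b ≠ c) {z : M}
    (hnolox : ∀ g ∈ MulAction.stabilizer G z, ¬ IsLoxodromic G M g)
    (k : ℕ → G) (hinj : Function.Injective k)
    (hst : ∀ n, k n ∈ MulAction.stabilizer G z) :
    ∃ φ : ℕ → ℕ, StrictMono φ ∧ ∃ r : M,
      ∀ C : Set M, IsCompact C → r ∉ C → ∀ ε : ℝ, 0 < ε →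
        ∀ᶠ n in atTop, ∀ x ∈ C, dist (k (φ n) • x) z < ε := by
  obtain ⟨φ, hφ, a, r, hcp⟩ := aux_exists_cross hconv h3 k hinj
  have haz : a = z := by
    by_cases hrz : r = z
    · by_contra haz
      obtain ⟨w, hwz, hwa⟩ := aux_third h3 z a
      have hdaz : 0 < dist a z := dist_pos.2 haz
      have hdwz : 0 < dist w z := dist_pos.2 hwz
      have hdwa : 0 < dist w a := dist_pos.2 hwa
      set ε₀ : ℝ := min (dist a z / 3) (min (dist w z) (dist w a) / 2) with hε₀def
      have hε₀ : 0 < ε₀ := by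
        apply lt_min (by positivity)
        have := lt_min hdwz hdwa
        positivity
      have hε₀az : ε₀ ≤ dist a z / 3 := min_le_left _ _
      have hε₀w : ε₀ ≤ min (dist w z) (dist w a) / 2 := min_le_right _ _
      set C : Set M := {x : M | ε₀ ≤ dist x z} with hCdef
      have hCc : IsCompact C := by
        have : IsClosed C := isClosed_le continuous_const (continuous_id.dist continuous_const)
        exact this.isCompact
      have hrC : r ∉ C := by
        rw [hrz, hCdef]
        simp only [Set.mem_setOf_eq, dist_self, not_le]
        exact hε₀
      obtain ⟨N, hN⟩ := Filter.eventually_atTop.1 (hcp C hCc hrC ε₀ hε₀)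
      set g := k (φ N) with hgdef
      refine hnolox g (hst (φ N)) ?_
      have hgz : g • z = z := hst (φ N)
      have hd : 0 < dist a z := dist_pos.2 haz
      have hminl := min_le_left (dist w z) (dist w a)
      have hminr := min_le_right (dist w z) (dist w a)
      obtain ⟨q, hlox, -, -, -⟩ := aux_produce_lox hconv h3 hε₀ hgz
        (by linarith)
        (fun x hx => hN N le_rfl x hx)
        ⟨w, by linarith, by linarith⟩
      exact hlox
    · -- r ≠ z: the constant sequence z converges to a
      have h1 : Tendsto (fun n => k (φ n) • z) atTop (nhds a) := by
        rw [Metric.tendsto_atTop]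
        intro δ hδ
        obtain ⟨N, hN⟩ := Filter.eventually_atTop.1
          (hcp {z} isCompact_singleton (by simpa using hrz) δ hδ)
        exact ⟨N, fun n hn => hN n hn z rfl⟩
      have h2 : (fun n => k (φ n) • z) = fun _ => z := funext fun n => hst (φ n)
      rw [h2] at h1
      exact (tendsto_nhds_unique tendsto_const_nhds h1).symm
  subst haz
  exact ⟨φ, hφ, r, hcp⟩

/-- Pointwise convergence of the inverses to the repelling point. -/
private lemma aux_inverse_tendsto {k : ℕ → G} {a r : M}
    (hcp : ∀ C : Set M, IsCompact C → r ∉ C → ∀ ε : ℝ, 0 < ε →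
      ∀ᶠ n in atTop, ∀ x ∈ C, dist (k n • x) a < ε)
    {x : M} (hx : x ≠ a) : Tendsto (fun n => (k n)⁻¹ • x) atTop (nhds r) := by
  rw [Metric.tendsto_atTop]
  by_contra hcon
  push_neg at hcon
  obtain ⟨δ, hδ, hfreq⟩ := hcon
  have hfr : ∃ᶠ n in atTop, δ ≤ dist ((k n)⁻¹ • x) r := by
    rw [Filter.frequently_atTop]
    intro N
    obtain ⟨n, hn, hd⟩ := hfreq N
    exact ⟨n, hn, hd⟩
  obtain ⟨ψ, hψ, hΨ⟩ := Filter.extraction_of_frequently_atTop hfr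
  obtain ⟨y, -, ψ₂, hψ₂, hy⟩ := isCompact_univ.tendsto_subseq
    (x := fun n => (k (ψ n))⁻¹ • x) (fun n => Set.mem_univ _)
  have hyr : δ ≤ dist y r :=
    ge_of_tendsto (hy.dist tendsto_const_nhds)
      (Filter.Eventually.of_forall fun n => hΨ (ψ₂ n))
  have hrC : r ∉ closedBall y (δ / 2) := by
    rw [mem_closedBall, dist_comm]
    push_neg
    linarith
  have hev1 := hcp (closedBall y (δ / 2)) (isCompact_closedBall _ _) hrC
    (dist x a) (dist_pos.2 hx)
  have hev1' : ∀ᶠ n in atTop, ∀ u ∈ closedBall y (δ / 2),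
      dist (k (ψ (ψ₂ n)) • u) a < dist x a :=
    (hψ.comp hψ₂).tendsto_atTop.eventually hev1
  have hev2 : ∀ᶠ n in atTop, (k (ψ (ψ₂ n)))⁻¹ • x ∈ closedBall y (δ / 2) :=
    hy.eventually (Metric.closedBall_mem_nhds y (by positivity))
  obtain ⟨n, hn1, hn2⟩ := (hev1'.and hev2).exists
  have := hn1 _ hn2
  rw [smul_inv_smul] at this
  exact absurd this (lt_irrefl _)

/-- The stabilizer of `z` acts properly discontinuously on `M \ {z}` when it contains
no loxodromic elements. -/
private lemma aux_stab_proper (hconv : IsConvergenceAction G M)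
    (h3 : ∃ a b c : M, a ≠ b ∧ a ≠ c ∧ b ≠ c) {z : M}
    (hnolox : ∀ g ∈ MulAction.stabilizer G z, ¬ IsLoxodromic G M g)
    {C C' : Set M} (hC : IsCompact C) (hC' : IsCompact C') (hzC : z ∉ C) (hzC' : z ∉ C') :
    {f : G | f ∈ MulAction.stabilizer G z ∧ ((f • C) ∩ C').Nonempty}.Finite := by
  by_contra hinf
  replace hinf : {f : G | f ∈ MulAction.stabilizer G z ∧ ((f • C) ∩ C').Nonempty}.Infinite := hinf
  set e := hinf.natEmbedding with hedef
  set k : ℕ → G := fun n => (e n : G) with hkdef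
  have hkinj : Function.Injective k := fun m n h => e.injective (Subtype.ext h)
  have hkst : ∀ n, k n ∈ MulAction.stabilizer G z := fun n => (e n).2.1
  have hkne : ∀ n, ((k n • C) ∩ C').Nonempty := fun n => (e n).2.2
  have hwit : ∀ n, ∃ cc, cc ∈ C ∧ k n • cc ∈ C' := by
    intro n
    obtain ⟨y, hy1, hy2⟩ := hkne n
    obtain ⟨cc, hcc, rfl⟩ := hy1
    exact ⟨cc, hcc, hy2⟩
  choose c hcC hcC' using hwit
  obtain ⟨φ, hφ, r, hcp⟩ := aux_stab_cross hconv h3 hnolox k hkinj hkst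
  have hC'ne : C'.Nonempty := ⟨_, hcC' 0⟩
  have hCne : C.Nonempty := ⟨_, hcC 0⟩
  have hdC' : 0 < infDist z C' := (hC'.isClosed.notMem_iff_infDist_pos hC'ne).1 hzC'
  have hdC : 0 < infDist z C := (hC.isClosed.notMem_iff_infDist_pos hCne).1 hzC
  by_cases hrC : r ∈ C
  · -- use the inverse sequence
    set k' : ℕ → G := fun n => (k (φ n))⁻¹ with hk'def
    have hk'inj : Function.Injective k' := fun m n h =>
      hφ.injective (hkinj (inv_injective h))
    have hk'st : ∀ n, k' n ∈ MulAction.stabilizer G z := fun n =>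
      (MulAction.stabilizer G z).inv_mem (hkst (φ n))
    obtain ⟨φ₂, hφ₂, r₂, hcp₂⟩ := aux_stab_cross hconv h3 hnolox k' hk'inj hk'st
    by_cases hr₂C' : r₂ ∈ C'
    · -- both exceptional points in the compacta; derive a contradiction
      have hrz : r ≠ z := fun h => hzC (h ▸ hrC)
      have hr₂z : r₂ ≠ z := fun h => hzC' (h ▸ hr₂C')
      obtain ⟨x, hxz, hxr⟩ := aux_third h3 z r
      have hdxz : 0 < dist x z := dist_pos.2 hxz
      have htx : Tendsto (fun n => k (φ n) • x) atTop (nhds z) := by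
        rw [Metric.tendsto_atTop]
        intro δ hδ
        obtain ⟨N, hN⟩ := Filter.eventually_atTop.1
          (hcp {x} isCompact_singleton (by simpa using fun h => hxr h.symm) δ hδ)
        exact ⟨N, fun n hn => hN n hn x rfl⟩
      set ρ : ℝ := dist r₂ z / 2 with hρdef
      have hρ : 0 < ρ := by
        have := dist_pos.2 hr₂z
        positivity
      have hr₂ball : r₂ ∉ closedBall z ρ := by
        rw [mem_closedBall]
        push_neg
        rw [hρdef]
        have := dist_pos.2 hr₂z
        linarith
      have hev2 := hcp₂ (closedBall z ρ) (isCompact_closedBall _ _) hr₂ball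
        (dist x z) hdxz
      have hev3 : ∀ᶠ n in atTop, k (φ (φ₂ n)) • x ∈ closedBall z ρ :=
        (htx.comp hφ₂.tendsto_atTop).eventually (Metric.closedBall_mem_nhds z hρ)
      obtain ⟨n, hn1, hn2⟩ := (hev2.and hev3).exists
      have := hn1 _ hn2
      rw [hk'def] at this
      simp only [inv_smul_smul] at this
      exact absurd this (lt_irrefl _)
    · -- r₂ ∉ C': the points c (φ (φ₂ n)) must converge to z, impossible
      have hev := hcp₂ C' hC' hr₂C' (infDist z C) hdC
      obtain ⟨N, hN⟩ := Filter.eventually_atTop.1 hev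
      have h1 := hN N le_rfl (k (φ (φ₂ N)) • c (φ (φ₂ N))) (hcC' _)
      rw [hk'def] at h1
      simp only [inv_smul_smul] at h1
      have h2 : infDist z C ≤ dist (c (φ (φ₂ N))) z := by
        rw [dist_comm]
        exact infDist_le_dist_of_mem (hcC _)
      linarith
  · -- r ∉ C: the points k (φ n) • c (φ n) converge to z, impossible
    obtain ⟨N, hN⟩ := Filter.eventually_atTop.1 (hcp C hC hrC (infDist z C') hdC')
    have h1 := hN N le_rfl (c (φ N)) (hcC _)
    have h2 : infDist z C' ≤ dist (k (φ N) • c (φ N)) z := by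
      rw [dist_comm]
      exact infDist_le_dist_of_mem (hcC' _)
    linarith

/-- A limit point of `K` is an accumulation point of the `K`-orbit of every point `y`
outside at most two exceptional points. -/
private lemma aux_limit_attracts (hconv : IsConvergenceAction G M)
    (h3 : ∃ a b c : M, a ≠ b ∧ a ≠ c ∧ b ≠ c)
    {K : Subgroup G} {x : M} (hx : x ∈ limitSet G M K) :
    ∃ e₁ e₂ : M, ∀ y : M, y ≠ e₁ → y ≠ e₂ →
      x ∈ closure ((fun h : G => h • y) '' (K : Set G) \ {x}) := by
  have hcont := hconv.1
  obtain ⟨m, hm⟩ := hx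
  obtain ⟨p, hpA, hpx, hpinj, hptend⟩ := aux_exists_inj_seq hm
  have hk : ∀ n, ∃ g : G, g ∈ K ∧ g • m = p n := by
    intro n
    obtain ⟨g, hg, hgm⟩ := hpA n
    exact ⟨g, hg, hgm⟩
  choose k hkK hkm using hk
  have hkinj : Function.Injective k := by
    intro i j h
    apply hpinj
    rw [← hkm i, ← hkm j, h]
  obtain ⟨φ, hφ, a, r, hcp⟩ := aux_exists_cross hconv h3 k hkinj
  have hconv_pt : ∀ u : M, u ≠ r → Tendsto (fun n => k (φ n) • u) atTop (nhds a) := by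
    intro u hu
    rw [Metric.tendsto_atTop]
    intro δ hδ
    obtain ⟨N, hN⟩ := Filter.eventually_atTop.1
      (hcp {u} isCompact_singleton (by simpa using Ne.symm hu) δ hδ)
    exact ⟨N, fun n hn => hN n hn u rfl⟩
  have hptend' : Tendsto (fun n => k (φ n) • m) atTop (nhds x) := by
    have heq : (fun n => k (φ n) • m) = (p ∘ φ) := funext fun n => hkm (φ n)
    rw [heq]
    exact hptend.comp hφ.tendsto_atTop
  by_cases hmr : m = r
  · -- the repelling point is the base point: use the composition trick
    refine ⟨a, x, fun y hya hyx => ?_⟩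
    rw [Metric.mem_closure_iff]
    by_contra hno
    push_neg at hno
    obtain ⟨ε, hε, hfar⟩ := hno
    have hsy : Tendsto (fun j => (k (φ j))⁻¹ • y) atTop (nhds m) := by
      rw [hmr]
      exact aux_inverse_tendsto (k := fun n => k (φ n)) hcp hya
    have hevm : ∀ᶠ n in atTop, dist (k (φ n) • m) x < ε / 2 := by
      obtain ⟨N, hN⟩ := Metric.tendsto_atTop.1 hptend' (ε / 2) (by positivity)
      exact Filter.eventually_atTop.2 ⟨N, hN⟩
    -- key claim: products eventually send y exactly to x
    have hkey : ∀ n : ℕ, dist (k (φ n) • m) x < ε / 2 → ∀ᶠ j in atTop,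
        (k (φ n) * (k (φ j))⁻¹) • y = x := by
      intro n hn
      have hc : Tendsto (fun j => k (φ n) • ((k (φ j))⁻¹ • y)) atTop
          (nhds (k (φ n) • m)) := ((hcont (k (φ n))).tendsto m).comp hsy
      have hev : ∀ᶠ j in atTop,
          dist (k (φ n) • ((k (φ j))⁻¹ • y)) (k (φ n) • m) < ε / 2 :=
        hc.eventually (Metric.ball_mem_nhds _ (by positivity))
      filter_upwards [hev] with j hj
      have hq : (k (φ n) * (k (φ j))⁻¹) • y ∈ (fun h : G => h • y) '' (K : Set G) :=
        ⟨k (φ n) * (k (φ j))⁻¹,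
          SetLike.mem_coe.2 (K.mul_mem (hkK _) (K.inv_mem (hkK _))), rfl⟩
      have hd : dist x ((k (φ n) * (k (φ j))⁻¹) • y) < ε := by
        rw [mul_smul]
        calc dist x (k (φ n) • ((k (φ j))⁻¹ • y)) ≤
            dist x (k (φ n) • m) + dist (k (φ n) • m) (k (φ n) • ((k (φ j))⁻¹ • y)) :=
              dist_triangle _ _ _
          _ < ε / 2 + ε / 2 := by
              rw [dist_comm (k (φ n) • m) (k (φ n) • ((k (φ j))⁻¹ • y))]
              rw [dist_comm x (k (φ n) • m)]
              exact add_lt_add hn hj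
          _ = ε := by ring
      by_contra hne
      exact absurd hd (not_lt.2 (hfar _ ⟨hq, by simpa using hne⟩))
    obtain ⟨n₁, hn₁⟩ := hevm.exists
    set c : M := (k (φ n₁))⁻¹ • x with hcdef
    have hsc : ∀ᶠ j in atTop, (k (φ j))⁻¹ • y = c := by
      filter_upwards [hkey n₁ hn₁] with j hj
      rw [mul_smul] at hj
      rw [hcdef, ← hj, inv_smul_smul]
    have hxc : ∀ᶠ j in atTop, k (φ j) • c = x := by
      filter_upwards [hevm] with j hj
      obtain ⟨j', h1, h2⟩ := ((hkey j hj).and hsc).exists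
      rw [mul_smul, h2] at h1
      exact h1
    obtain ⟨j, h1, h2⟩ := (hsc.and hxc).exists
    apply hyx
    have hy : y = k (φ j) • c := by rw [← h1, smul_inv_smul]
    rw [hy, h2]
  · -- the generic case: x is the attracting point
    have hax : x = a := tendsto_nhds_unique hptend' (hconv_pt m hmr)
    have final : ∀ y : M, y ≠ r → ¬(∀ᶠ n in atTop, k (φ n) • y = x) →
        x ∈ closure ((fun h : G => h • y) '' (K : Set G) \ {x}) := by
      intro y hyr hnev
      have hty : Tendsto (fun n => k (φ n) • y) atTop (nhds x) := by
        rw [hax]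
        exact hconv_pt y hyr
      rw [Filter.not_eventually] at hnev
      rw [Metric.mem_closure_iff]
      intro δ hδ
      have hev' : ∀ᶠ n in atTop, dist (k (φ n) • y) x < δ := by
        obtain ⟨N, hN⟩ := Metric.tendsto_atTop.1 hty δ hδ
        exact Filter.eventually_atTop.2 ⟨N, hN⟩
      obtain ⟨n, h1, h2⟩ := (hnev.and_eventually hev').exists
      refine ⟨k (φ n) • y, ⟨⟨k (φ n), SetLike.mem_coe.2 (hkK (φ n)), rfl⟩,
        by simpa using h1⟩, by rwa [dist_comm]⟩
    by_cases hbad : ∃ y' : M, y' ≠ r ∧ ∀ᶠ n in atTop, k (φ n) • y' = x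
    · obtain ⟨y', hy'r, hy'ev⟩ := hbad
      refine ⟨r, y', fun y hyr hyy' => ?_⟩
      refine final y hyr ?_
      intro hev
      obtain ⟨n, hA1, hA2⟩ := (hev.and hy'ev).exists
      exact hyy' (MulAction.injective (k (φ n)) (hA1.trans hA2.symm))
    · push_neg at hbad
      exact ⟨r, r, fun y hyr _ => final y hyr (Filter.not_eventually.2 (hbad y hyr))⟩

/-- The limit set is closed. -/
private lemma aux_isClosed_limitSet (hconv : IsConvergenceAction G M)
    (h3 : ∃ a b c : M, a ≠ b ∧ a ≠ c ∧ b ≠ c)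
    (K : Subgroup G) : IsClosed (limitSet G M K) := by
  apply isClosed_of_closure_subset
  intro w hw
  obtain ⟨xs, hxs, hxtend⟩ := mem_closure_iff_seq_limit.1 hw
  have hE := fun i => aux_limit_attracts hconv h3 (hxs i)
  choose e₁ e₂ hE using hE
  obtain ⟨y₁, y₂, y₃, h12, h13, h23⟩ := h3
  have hpick : ∀ i : ℕ, ∃ j : Fin 3, ![y₁, y₂, y₃] j ≠ e₁ i ∧ ![y₁, y₂, y₃] j ≠ e₂ i := by
    intro i
    by_cases hc1 : y₁ ≠ e₁ i ∧ y₁ ≠ e₂ i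
    · exact ⟨0, by simpa using hc1⟩
    by_cases hc2 : y₂ ≠ e₁ i ∧ y₂ ≠ e₂ i
    · exact ⟨1, by simpa using hc2⟩
    by_cases hc3 : y₃ ≠ e₁ i ∧ y₃ ≠ e₂ i
    · exact ⟨2, by simpa using hc3⟩
    exfalso
    simp only [not_and_or, not_not] at hc1 hc2 hc3
    rcases hc1 with rfl | rfl <;> rcases hc2 with rfl | rfl <;> rcases hc3 with rfl | rfl <;>
      simp_all
  choose f hf1 hf2 using hpick
  obtain ⟨j₀, hj₀⟩ := Finite.exists_infinite_fiber f
  have hfib : (f ⁻¹' {j₀}).Infinite := Set.infinite_coe_iff.1 hj₀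
  set y₀ : M := ![y₁, y₂, y₃] j₀ with hy₀def
  set A : Set M := (fun h : G => h • y₀) '' (K : Set G) with hAdef
  have hxiD : ∀ i : ℕ, f i = j₀ → xs i ∈ {v : M | v ∈ closure (A \ {v})} := by
    intro i hi
    have h1 := hf1 i
    have h2 := hf2 i
    rw [hi] at h1 h2
    exact hE i y₀ h1 h2
  have hwD : w ∈ {v : M | v ∈ closure (A \ {v})} := by
    have hclosed : IsClosed {v : M | v ∈ closure (A \ {v})} := aux_isClosed_der A
    rw [← hclosed.closure_eq]
    rw [Metric.mem_closure_iff]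
    intro δ hδ
    obtain ⟨N, hN⟩ := Metric.tendsto_atTop.1 hxtend δ hδ
    -- find i ∈ fiber with i ≥ N
    have hex : ∃ i, i ∈ f ⁻¹' {j₀} ∧ N ≤ i := by
      by_contra hcon
      push_neg at hcon
      exact hfib (Set.Finite.subset (Set.finite_le_nat N) fun i hi => le_of_lt (hcon i hi))
    obtain ⟨i, hi, hiN⟩ := hex
    exact ⟨xs i, hxiD i hi, by rw [dist_comm]; exact hN i hiN⟩
  exact ⟨y₀, hwD⟩

private lemma aux_main (hconv : IsConvergenceAction G M)
    (h3 : ∃ a b c : M, a ≠ b ∧ a ≠ c ∧ b ≠ c)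
    (H J : Subgroup G)
    (hHinf : (H : Set G).Infinite) (hJinf : (J : Set G).Infinite)
    (z : M) (hz : z ∈ limitSet G M H ∩ limitSet G M J)
    (hnolox : ∀ g ∈ MulAction.stabilizer G z, ¬ IsLoxodromic G M g)
    (hbpH : IsBoundedParabolicPoint G M H z)
    (hbpJ : IsBoundedParabolicPoint G M J z) :
    IsBoundedParabolicPoint G M (H ⊓ J) z ∨
      ((∃ U : Set M, IsOpen U ∧ U ∩ (limitSet G M H ∩ limitSet G M J) = {z}) ∧
        z ∉ limitSet G M (H ⊓ J)) := by
  classical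
  have hcont := hconv.1
  obtain ⟨hbpH1, hbpH2, C_H, hCHc, hCHsub, hCHcov⟩ := hbpH
  obtain ⟨hbpJ1, hbpJ2, C_J, hCJc, hCJsub, hCJcov⟩ := hbpJ
  set S : Set M := limitSet G M H ∩ limitSet G M J with hSdef
  have hzCH : z ∉ C_H := fun h => (hCHsub h).2 rfl
  have hzCJ : z ∉ C_J := fun h => (hCJsub h).2 rfl
  set F : Set G := {f : G | f ∈ MulAction.stabilizer G z ∧ ((f • C_J) ∩ C_H).Nonempty}
    with hFdef
  have hF : F.Finite := aux_stab_proper hconv h3 hnolox hCJc hCHc hzCJ hzCH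
  have hcovH : ∀ x ∈ limitSet G M H \ {z}, ∃ h : G,
      h ∈ H ⊓ MulAction.stabilizer G z ∧ x ∈ h • C_H := by
    intro x hx
    have hmem := hCHcov hx
    rw [Set.mem_iUnion₂] at hmem
    obtain ⟨g, hg, hxg⟩ := hmem
    exact ⟨g, hg, hxg⟩
  have hcovJ : ∀ x ∈ limitSet G M J \ {z}, ∃ j : G,
      j ∈ J ⊓ MulAction.stabilizer G z ∧ x ∈ j • C_J := by
    intro x hx
    have hmem := hCJcov hx
    rw [Set.mem_iUnion₂] at hmem
    obtain ⟨g, hg, hxg⟩ := hmem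
    exact ⟨g, hg, hxg⟩
  -- the element f = h⁻¹ * j belongs to F
  have hfF : ∀ (h j : G) (x : M), h ∈ H ⊓ MulAction.stabilizer G z →
      j ∈ J ⊓ MulAction.stabilizer G z → x ∈ h • C_H → x ∈ j • C_J → h⁻¹ * j ∈ F := by
    intro h j x hh hj hxh hxj
    obtain ⟨c, hc, hcx⟩ := hxh
    obtain ⟨c', hc', hc'x⟩ := hxj
    refine ⟨(MulAction.stabilizer G z).mul_mem
      ((MulAction.stabilizer G z).inv_mem (Subgroup.mem_inf.1 hh).2)
      (Subgroup.mem_inf.1 hj).2, ⟨c, ⟨Set.mem_smul_set.2 ⟨c', hc', ?_⟩, hc⟩⟩⟩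
    have h1 : j • c' = x := hc'x
    have h2 : h • c = x := hcx
    rw [mul_smul, h1, ← h2, inv_smul_smul]
  -- the cocompactness statement
  have hcoco : ∃ C : Set M, IsCompact C ∧ C ⊆ limitSet G M (H ⊓ J) \ {z} ∧
      limitSet G M (H ⊓ J) \ {z} ⊆
        ⋃ g ∈ (H ⊓ J ⊓ MulAction.stabilizer G z : Subgroup G), g • C := by
    have hsmulc : ∀ (g : G) (A : Set M), IsCompact A → IsCompact (g • A) := by
      intro g A hA
      rw [← Set.image_smul]
      exact hA.image (hcont g)
    set C₀ : Set M := ⋃ f ∈ F, (C_H ∩ f • C_J) with hC₀def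
    have hC₀c : IsCompact C₀ :=
      hF.isCompact_biUnion fun f _ => hCHc.inter_right (hsmulc f C_J hCJc).isClosed
    have hzC₀ : z ∉ C₀ := by
      rw [hC₀def, Set.mem_iUnion₂]
      rintro ⟨f, hf, hzm, -⟩
      exact hzCH hzm
    -- selection of coset representatives
    have hSel : ∀ f : G, ∃ h₀ : G,
        ((∃ h, h ∈ H ⊓ MulAction.stabilizer G z ∧ h * f ∈ J ⊓ MulAction.stabilizer G z) →
          (h₀ ∈ H ⊓ MulAction.stabilizer G z ∧ h₀ * f ∈ J ⊓ MulAction.stabilizer G z)) ∧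
        ((¬∃ h, h ∈ H ⊓ MulAction.stabilizer G z ∧ h * f ∈ J ⊓ MulAction.stabilizer G z) →
          h₀ = 1) := by
      intro f
      by_cases hex : ∃ h, h ∈ H ⊓ MulAction.stabilizer G z ∧
          h * f ∈ J ⊓ MulAction.stabilizer G z
      · obtain ⟨h, hh⟩ := hex
        exact ⟨h, fun _ => hh, fun hc => absurd ⟨h, hh⟩ hc⟩
      · exact ⟨1, fun hc => absurd hc hex, fun _ => rfl⟩
    choose sel hsel1 hsel2 using hSel
    set C₁ : Set M := ⋃ f ∈ F, (sel f) • C₀ with hC₁def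
    have hC₁c : IsCompact C₁ := hF.isCompact_biUnion fun f _ => hsmulc _ _ hC₀c
    have hzC₁ : z ∉ C₁ := by
      rw [hC₁def, Set.mem_iUnion₂]
      rintro ⟨f, hf, hzm⟩
      obtain ⟨c, hc, hcz⟩ := hzm
      by_cases hex : ∃ h, h ∈ H ⊓ MulAction.stabilizer G z ∧
          h * f ∈ J ⊓ MulAction.stabilizer G z
      · have hst : sel f ∈ MulAction.stabilizer G z := (Subgroup.mem_inf.1 (hsel1 f hex).1).2
        have hzfix : sel f • z = z := hst
        have hcc : sel f • c = z := hcz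
        have : c = z := MulAction.injective (sel f) (hcc.trans hzfix.symm)
        exact hzC₀ (this ▸ hc)
      · have h1 : sel f = 1 := hsel2 f hex
        have hcc : sel f • c = z := hcz
        rw [h1, one_smul] at hcc
        exact hzC₀ (hcc ▸ hc)
    have hclosedΛ : IsClosed (limitSet G M (H ⊓ J)) := aux_isClosed_limitSet hconv h3 _
    refine ⟨C₁ ∩ limitSet G M (H ⊓ J), hC₁c.inter_right hclosedΛ, ?_, ?_⟩
    · rintro w ⟨hw1, hw2⟩
      exact ⟨hw2, fun hwz => hzC₁ ((Set.mem_singleton_iff.1 hwz) ▸ hw1)⟩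
    · intro x hx
      have hxH : x ∈ limitSet G M H \ {z} :=
        ⟨aux_limitSet_mono inf_le_left hx.1, hx.2⟩
      have hxJ : x ∈ limitSet G M J \ {z} :=
        ⟨aux_limitSet_mono inf_le_right hx.1, hx.2⟩
      obtain ⟨h, hhHP, hhx⟩ := hcovH x hxH
      obtain ⟨j, hjJP, hjx⟩ := hcovJ x hxJ
      have hfmem : h⁻¹ * j ∈ F := hfF h j x hhHP hjJP hhx hjx
      set f : G := h⁻¹ * j with hfdef
      have hexf : ∃ h', h' ∈ H ⊓ MulAction.stabilizer G z ∧
          h' * f ∈ J ⊓ MulAction.stabilizer G z := by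
        refine ⟨h, hhHP, ?_⟩
        rw [hfdef, mul_inv_cancel_left]
        exact hjJP
      obtain ⟨hselH, hselJ⟩ := hsel1 f hexf
      set g : G := h * (sel f)⁻¹ with hgdef
      have hgH : g ∈ H := H.mul_mem (Subgroup.mem_inf.1 hhHP).1
        (H.inv_mem (Subgroup.mem_inf.1 hselH).1)
      have hgP : g ∈ MulAction.stabilizer G z :=
        (MulAction.stabilizer G z).mul_mem (Subgroup.mem_inf.1 hhHP).2
          ((MulAction.stabilizer G z).inv_mem (Subgroup.mem_inf.1 hselH).2)
      have hgJ : g ∈ J := by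
        have hj' : (sel f * f)⁻¹ ∈ J := J.inv_mem (Subgroup.mem_inf.1 hselJ).1
        have hjJ : j ∈ J := (Subgroup.mem_inf.1 hjJP).1
        have hgeq : g = j * (sel f * f)⁻¹ := by
          rw [hgdef, hfdef]
          group
        rw [hgeq]
        exact J.mul_mem hjJ hj'
      have hgmem : g ∈ H ⊓ J ⊓ MulAction.stabilizer G z :=
        Subgroup.mem_inf.2 ⟨Subgroup.mem_inf.2 ⟨hgH, hgJ⟩, hgP⟩
      -- the witness point
      obtain ⟨c, hcCH, hcx⟩ := hhx
      have hcC₀ : c ∈ C₀ := by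
        rw [hC₀def, Set.mem_iUnion₂]
        refine ⟨f, hfmem, hcCH, ?_⟩
        obtain ⟨c', hc', hc'x⟩ := hjx
        refine Set.mem_smul_set.2 ⟨c', hc', ?_⟩
        have h1 : j • c' = x := hc'x
        have h2 : h • c = x := hcx
        rw [hfdef, mul_smul, h1, ← h2, inv_smul_smul]
      set w : M := sel f • c with hwdef
      have hwC₁ : w ∈ C₁ := by
        rw [hC₁def, Set.mem_iUnion₂]
        exact ⟨f, hfmem, Set.mem_smul_set.2 ⟨c, hcC₀, rfl⟩⟩
      have hgw : g • w = x := by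
        rw [hwdef, hgdef, ← mul_smul]
        have : h * (sel f)⁻¹ * sel f = h := by group
        rw [this]
        exact hcx
      have hwΛ : w ∈ limitSet G M (H ⊓ J) := by
        have hginv : g⁻¹ ∈ H ⊓ J := (H ⊓ J).inv_mem (Subgroup.mem_inf.1 hgmem).1
        have := aux_smul_mem_limitSet hcont hginv hx.1
        rwa [← hgw, inv_smul_smul] at this
      rw [Set.mem_iUnion₂]
      exact ⟨g, hgmem, Set.mem_smul_set.2 ⟨w, ⟨hwC₁, hwΛ⟩, hgw⟩⟩
  have hnolox' : ∀ g ∈ H ⊓ J ⊓ MulAction.stabilizer G z, ¬ IsLoxodromic G M g :=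
    fun g hg => hnolox g (Subgroup.mem_inf.1 hg).2
  have claim1 : (¬∃ U : Set M, IsOpen U ∧ U ∩ S = {z}) →
      ((H ⊓ J ⊓ MulAction.stabilizer G z : Subgroup G) : Set G).Infinite := by
    intro hiso
    push_neg at hiso
    have hxseq : ∀ n : ℕ, ∃ x : M, x ∈ S ∧ x ≠ z ∧ dist x z < 1 / (n + 1) := by
      intro n
      have hball : (0 : ℝ) < 1 / (n + 1) := by positivity
      have hne := hiso (Metric.ball z (1 / (n + 1))) Metric.isOpen_ball
      by_contra hcon
      push_neg at hcon
      apply hne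
      ext q
      simp only [Set.mem_inter_iff, Set.mem_singleton_iff]
      constructor
      · rintro ⟨hq1, hq2⟩
        by_contra hqz
        exact absurd (Metric.mem_ball.1 hq1) (not_lt.2 (hcon q hq2 hqz))
      · rintro rfl
        exact ⟨Metric.mem_ball_self hball, hz⟩
    choose xs hxsS hxsz hxsd using hxseq
    have hxtend : Tendsto xs atTop (nhds z) := by
      rw [Metric.tendsto_atTop]
      intro ε hε
      obtain ⟨N, hN⟩ := exists_nat_one_div_lt hε
      refine ⟨N, fun n hn => ?_⟩
      calc dist (xs n) z < 1 / (n + 1) := hxsd n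
        _ ≤ 1 / (N + 1) := by
            apply one_div_le_one_div_of_le (by positivity)
            exact_mod_cast Nat.add_le_add_right hn 1
        _ < ε := hN
    have hcH : ∀ n, ∃ h : G, h ∈ H ⊓ MulAction.stabilizer G z ∧ xs n ∈ h • C_H :=
      fun n => hcovH _ ⟨(hxsS n).1, fun hh => hxsz n (Set.mem_singleton_iff.1 hh)⟩
    have hcJ : ∀ n, ∃ j : G, j ∈ J ⊓ MulAction.stabilizer G z ∧ xs n ∈ j • C_J :=
      fun n => hcovJ _ ⟨(hxsS n).2, fun hh => hxsz n (Set.mem_singleton_iff.1 hh)⟩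
    choose hh hhmem hhx using hcH
    choose jj jjmem jjx using hcJ
    set fs : ℕ → G := fun n => (hh n)⁻¹ * jj n with hfsdef
    have hfsF : ∀ n, fs n ∈ F := fun n => hfF (hh n) (jj n) (xs n) (hhmem n) (jjmem n)
      (hhx n) (jjx n)
    haveI hFsub : Finite ↥F := hF.to_subtype
    obtain ⟨f₀, hf₀⟩ := Finite.exists_infinite_fiber fun n => (⟨fs n, hfsF n⟩ : ↥F)
    have hfib : {n : ℕ | fs n = (f₀ : G)}.Infinite := by
      have h1 : ((fun n => (⟨fs n, hfsF n⟩ : ↥F)) ⁻¹' {f₀}).Infinite :=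
        Set.infinite_coe_iff.1 hf₀
      refine h1.mono ?_
      intro n hn
      simp only [Set.mem_preimage, Set.mem_singleton_iff] at hn
      simp only [Set.mem_setOf_eq, ← hn]
    by_cases hhfin : ((fun n => hh n) '' {n : ℕ | fs n = (f₀ : G)}).Finite
    · exfalso
      set T : Set M := ⋃ g ∈ (fun n => hh n) '' {n : ℕ | fs n = (f₀ : G)}, g • C_H with hTdef
      have hTc : IsCompact T := by
        refine hhfin.isCompact_biUnion fun g _ => ?_
        rw [← Set.image_smul]
        exact hCHc.image (hcont g)
      have hzT : z ∉ T := by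
        rw [hTdef, Set.mem_iUnion₂]
        rintro ⟨g, hg, hzm⟩
        obtain ⟨n, -, rfl⟩ := hg
        obtain ⟨c, hc, hcz⟩ := hzm
        have hst : hh n • z = z := (Subgroup.mem_inf.1 (hhmem n)).2
        have hcc : hh n • c = z := hcz
        have : c = z := MulAction.injective (hh n) (hcc.trans hst.symm)
        exact hzCH (this ▸ hc)
      obtain ⟨n₀, hn₀⟩ := hfib.nonempty
      have hTne : T.Nonempty := by
        refine ⟨xs n₀, ?_⟩
        rw [hTdef, Set.mem_iUnion₂]
        exact ⟨hh n₀, ⟨n₀, hn₀, rfl⟩, hhx n₀⟩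
      have hdT : 0 < infDist z T := (hTc.isClosed.notMem_iff_infDist_pos hTne).1 hzT
      obtain ⟨N, hN⟩ := Metric.tendsto_atTop.1 hxtend _ hdT
      have hex : ∃ n, n ∈ {n : ℕ | fs n = (f₀ : G)} ∧ N ≤ n := by
        by_contra hcon
        push_neg at hcon
        exact hfib (Set.Finite.subset (Set.finite_le_nat N) fun i hi => le_of_lt (hcon i hi))
      obtain ⟨n, hn, hnN⟩ := hex
      have hmemT : xs n ∈ T := by
        rw [hTdef, Set.mem_iUnion₂]
        exact ⟨hh n, ⟨n, hn, rfl⟩, hhx n⟩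
      have hle : infDist z T ≤ dist z (xs n) := infDist_le_dist_of_mem hmemT
      rw [dist_comm] at hle
      exact absurd (lt_of_le_of_lt hle (hN n hnN)) (lt_irrefl _)
    · replace hhfin : ((fun n => hh n) '' {n : ℕ | fs n = (f₀ : G)}).Infinite := hhfin
      obtain ⟨n₀, hn₀⟩ := hfib.nonempty
      have himg : ((fun g : G => g * (hh n₀)⁻¹) ''
          ((fun n => hh n) '' {n : ℕ | fs n = (f₀ : G)})).Infinite :=
        hhfin.image (Set.injOn_of_injective (mul_left_injective _))
      refine himg.mono ?_
      rintro g ⟨g', ⟨n, hn, rfl⟩, rfl⟩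
      -- g = hh n * (hh n₀)⁻¹
      have hHm : hh n * (hh n₀)⁻¹ ∈ H := H.mul_mem (Subgroup.mem_inf.1 (hhmem n)).1
        (H.inv_mem (Subgroup.mem_inf.1 (hhmem n₀)).1)
      have hPm : hh n * (hh n₀)⁻¹ ∈ MulAction.stabilizer G z :=
        (MulAction.stabilizer G z).mul_mem (Subgroup.mem_inf.1 (hhmem n)).2
          ((MulAction.stabilizer G z).inv_mem (Subgroup.mem_inf.1 (hhmem n₀)).2)
      have hJm : hh n * (hh n₀)⁻¹ ∈ J := by
        have hfn : fs n = (f₀ : G) := hn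
        have hfn₀ : fs n₀ = (f₀ : G) := hn₀
        have e3 : (hh n)⁻¹ * jj n = (hh n₀)⁻¹ * jj n₀ := by
          have e1 : (hh n)⁻¹ * jj n = fs n := rfl
          have e2 : (hh n₀)⁻¹ * jj n₀ = fs n₀ := rfl
          rw [e1, e2, hfn, hfn₀]
        have e4 : jj n = hh n * ((hh n₀)⁻¹ * jj n₀) := by
          rw [← e3]
          group
        have heq : hh n * (hh n₀)⁻¹ = jj n * (jj n₀)⁻¹ := by
          rw [e4]
          group
        rw [heq]
        exact J.mul_mem (Subgroup.mem_inf.1 (jjmem n)).1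
          (J.inv_mem (Subgroup.mem_inf.1 (jjmem n₀)).1)
      exact SetLike.mem_coe.2 (Subgroup.mem_inf.2 ⟨Subgroup.mem_inf.2 ⟨hHm, hJm⟩, hPm⟩)
  have claim2 : ∀ U : Set M, IsOpen U → U ∩ S = {z} → z ∈ limitSet G M (H ⊓ J) →
      ((H ⊓ J ⊓ MulAction.stabilizer G z : Subgroup G) : Set G).Infinite := by
    intro U hUopen hUS hmem
    have hM : Infinite M := aux_M_infinite hconv h3 hHinf
    obtain ⟨e₁, e₂, hE⟩ := aux_limit_attracts hconv h3 hmem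
    have hSinv : ∀ g : G, g ∈ H ⊓ J → ∀ y ∈ S, g • y ∈ S := by
      intro g hg y hy
      exact ⟨aux_smul_mem_limitSet hcont (Subgroup.mem_inf.1 hg).1 hy.1,
        aux_smul_mem_limitSet hcont (Subgroup.mem_inf.1 hg).2 hy.2⟩
    by_cases hbig : ∃ y, y ∈ S ∧ y ≠ z ∧ y ≠ e₁ ∧ y ≠ e₂
    · exfalso
      obtain ⟨y, hyS, hyz, hye₁, hye₂⟩ := hbig
      have hder := hE y hye₁ hye₂
      have hzU : z ∈ U := by
        have hzin : z ∈ U ∩ S := by rw [hUS]; rfl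
        exact hzin.1
      rw [_root_.mem_closure_iff] at hder
      obtain ⟨q, hqU, hqmem⟩ := hder U hUopen hzU
      obtain ⟨⟨g, hgK, rfl⟩, hqz⟩ := hqmem
      have hqS : g • y ∈ S := hSinv g (SetLike.mem_coe.1 hgK) y hyS
      have hq2 : g • y ∈ U ∩ S := ⟨hqU, hqS⟩
      rw [hUS] at hq2
      exact hqz hq2
    · push_neg at hbig
      have hSsub : S ⊆ {z, e₁, e₂} := by
        intro s hs
        by_cases h1 : s = z
        · exact Or.inl h1
        by_cases h2 : s = e₁
        · exact Or.inr (Or.inl h2)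
        · exact Or.inr (Or.inr (hbig s hs h1 h2))
      have hSfin : S.Finite := (Set.toFinite ({z, e₁, e₂} : Set M)).subset hSsub
      obtain ⟨y₀, hy₀⟩ := aux_exists_fresh hM (hSfin.union (Set.toFinite ({e₁, e₂} : Set M)))
      have hy₀S : y₀ ∉ S := fun h => hy₀ (Or.inl h)
      have hy₀e₁ : y₀ ≠ e₁ := fun h => hy₀ (Or.inr (by simp [h]))
      have hy₀e₂ : y₀ ≠ e₂ := fun h => hy₀ (Or.inr (by simp [h]))
      have hder := hE y₀ hy₀e₁ hy₀e₂
      obtain ⟨p, hpA, hpz, hpinj, hptend⟩ := aux_exists_inj_seq hder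
      have hk : ∀ n, ∃ g : G, g ∈ H ⊓ J ∧ g • y₀ = p n := by
        intro n
        obtain ⟨g, hg, hgm⟩ := hpA n
        exact ⟨g, SetLike.mem_coe.1 hg, hgm⟩
      choose u huK huy using hk
      have huinj : Function.Injective u := by
        intro i j hij
        apply hpinj
        rw [← huy i, ← huy j, hij]
      obtain ⟨φ, hφ, α, ρ, hcp⟩ := aux_exists_cross hconv h3 u huinj
      have hconv_pt : ∀ v : M, v ≠ ρ → Tendsto (fun n => u (φ n) • v) atTop (nhds α) := by
        intro v hv
        rw [Metric.tendsto_atTop]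
        intro δ hδ
        obtain ⟨N, hN⟩ := Filter.eventually_atTop.1
          (hcp {v} isCompact_singleton (by simpa using Ne.symm hv) δ hδ)
        exact ⟨N, fun n hn => hN n hn v rfl⟩
      have hptend' : Tendsto (fun n => u (φ n) • y₀) atTop (nhds z) := by
        have heq : (fun n => u (φ n) • y₀) = (p ∘ φ) := funext fun n => huy (φ n)
        rw [heq]
        exact hptend.comp hφ.tendsto_atTop
      have mk_inf : ∀ s : M, (∃ᶠ n in atTop, u (φ n) • s = z) →
          ((H ⊓ J ⊓ MulAction.stabilizer G z : Subgroup G) : Set G).Infinite := by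
        intro s hfreq
        obtain ⟨ψ, hψ, hΨ⟩ := Filter.extraction_of_frequently_atTop hfreq
        refine Set.infinite_of_injective_forall_mem
          (f := fun m : ℕ => u (φ (ψ (m + 1))) * (u (φ (ψ 0)))⁻¹) ?_ ?_
        · intro i j hij
          have h1 : u (φ (ψ (i + 1))) = u (φ (ψ (j + 1))) := mul_left_injective _ hij
          have h2 := hψ.injective (hφ.injective (huinj h1))
          omega
        · intro m
          have hz0 : (u (φ (ψ 0)))⁻¹ • z = s := by
            rw [← hΨ 0, inv_smul_smul]
          have hst : (u (φ (ψ (m + 1))) * (u (φ (ψ 0)))⁻¹) • z = z := by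
            rw [mul_smul, hz0, hΨ (m + 1)]
          refine SetLike.mem_coe.2 (Subgroup.mem_inf.2 ⟨Subgroup.mem_inf.2 ⟨?_, ?_⟩,
            MulAction.mem_stabilizer_iff.2 hst⟩)
          · exact H.mul_mem (Subgroup.mem_inf.1 (huK _)).1
              (H.inv_mem (Subgroup.mem_inf.1 (huK _)).1)
          · exact J.mul_mem (Subgroup.mem_inf.1 (huK _)).2
              (J.inv_mem (Subgroup.mem_inf.1 (huK _)).2)
      have mk_inf2 : ∀ s : M, (∃ᶠ n in atTop, u (φ n) • z = s) →
          ((H ⊓ J ⊓ MulAction.stabilizer G z : Subgroup G) : Set G).Infinite := by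
        intro s hfreq
        obtain ⟨ψ, hψ, hΨ⟩ := Filter.extraction_of_frequently_atTop hfreq
        refine Set.infinite_of_injective_forall_mem
          (f := fun m : ℕ => (u (φ (ψ 0)))⁻¹ * u (φ (ψ (m + 1)))) ?_ ?_
        · intro i j hij
          have h1 : u (φ (ψ (i + 1))) = u (φ (ψ (j + 1))) := mul_right_injective _ hij
          have h2 := hψ.injective (hφ.injective (huinj h1))
          omega
        · intro m
          have hst : ((u (φ (ψ 0)))⁻¹ * u (φ (ψ (m + 1)))) • z = z := by
            rw [mul_smul, hΨ (m + 1), ← hΨ 0, inv_smul_smul]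
          refine SetLike.mem_coe.2 (Subgroup.mem_inf.2 ⟨Subgroup.mem_inf.2 ⟨?_, ?_⟩,
            MulAction.mem_stabilizer_iff.2 hst⟩)
          · exact H.mul_mem (H.inv_mem (Subgroup.mem_inf.1 (huK _)).1)
              (Subgroup.mem_inf.1 (huK _)).1
          · exact J.mul_mem (J.inv_mem (Subgroup.mem_inf.1 (huK _)).2)
              (Subgroup.mem_inf.1 (huK _)).2
      have hSzcase : (∀ s ∈ S, s = z) →
          ((H ⊓ J ⊓ MulAction.stabilizer G z : Subgroup G) : Set G).Infinite := by
        intro hSz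
        refine Set.infinite_of_injective_forall_mem (f := fun n => u n) huinj ?_
        intro n
        have h1 : u n • z ∈ limitSet G M (H ⊓ J) :=
          aux_smul_mem_limitSet hcont (huK n) hmem
        have h2 : u n • z ∈ S :=
          ⟨aux_limitSet_mono inf_le_left h1, aux_limitSet_mono inf_le_right h1⟩
        exact SetLike.mem_coe.2 (Subgroup.mem_inf.2 ⟨huK n,
          MulAction.mem_stabilizer_iff.2 (hSz _ h2)⟩)
      have hmk : ∀ s : M, s ∈ S → s ≠ ρ → α = z →
          ((H ⊓ J ⊓ MulAction.stabilizer G z : Subgroup G) : Set G).Infinite := by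
        intro s hsS hsρ hαz
        have hts : Tendsto (fun n => u (φ n) • s) atTop (nhds z) := by
          rw [← hαz]
          exact hconv_pt s hsρ
        have hmems : ∀ n, u (φ n) • s ∈ S := fun n => hSinv _ (huK _) s hsS
        exact mk_inf s (aux_tendsto_finite_eventually hSfin hmems hts).frequently
      have hloxcase : ρ ≠ z → α = z → (∀ s, s ∈ S → s ≠ z → s = ρ) →
          (∀ᶠ n in atTop, u (φ n) • ρ = ρ) → False := by
        intro hρz hαz hS1 hevρ
        obtain ⟨w, hwρ, hwz⟩ := aux_third h3 ρ z
        have hdzρ : 0 < dist z ρ := dist_pos.2 (Ne.symm hρz)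
        have hdwρ : 0 < dist w ρ := dist_pos.2 hwρ
        have hdwz : 0 < dist w z := dist_pos.2 hwz
        set ε₀ : ℝ := min (dist z ρ / 3) (min (dist w ρ) (dist w z) / 2) with hε₀def
        have hε₀ : 0 < ε₀ := by
          apply lt_min (by positivity)
          have := lt_min hdwρ hdwz
          positivity
        have hε₀a : ε₀ ≤ dist z ρ / 3 := min_le_left _ _
        have hε₀w : ε₀ ≤ min (dist w ρ) (dist w z) / 2 := min_le_right _ _
        have hminl := min_le_left (dist w ρ) (dist w z)
        have hminr := min_le_right (dist w ρ) (dist w z)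
        set C : Set M := {x : M | ε₀ ≤ dist x ρ} with hCdef
        have hCc : IsCompact C := by
          have : IsClosed C := isClosed_le continuous_const (continuous_id.dist continuous_const)
          exact this.isCompact
        have hρC : ρ ∉ C := by
          rw [hCdef]
          simp only [Set.mem_setOf_eq, dist_self, not_le]
          exact hε₀
        have hevm := hcp C hCc hρC ε₀ hε₀
        rw [hαz] at hevm
        obtain ⟨n, hn1, hn2⟩ := (hevm.and hevρ).exists
        obtain ⟨q, hlox, hgq, hqd, hqor⟩ := aux_produce_lox hconv h3 hε₀ hn2
          (by linarith)
          (fun x hx => hn1 x hx)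
          ⟨w, by linarith, by linarith⟩
        have hqz : q = z := by
          rcases hqor with h | h
          · exact h
          · have hqΛ : q ∈ limitSet G M (H ⊓ J) := h (H ⊓ J) (huK _)
            have hqS : q ∈ S :=
              ⟨aux_limitSet_mono inf_le_left hqΛ, aux_limitSet_mono inf_le_right hqΛ⟩
            by_contra hqznot
            have hqρ : q = ρ := hS1 q hqS hqznot
            rw [hqρ] at hqd
            rw [dist_comm] at hqd
            linarith
        rw [hqz] at hgq
        exact hnolox _ (MulAction.mem_stabilizer_iff.2 hgq) hlox
      by_cases hyρ : y₀ = ρ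
      · -- exceptional: the base point is the repelling point
        have hvv : ∃ v₁ v₂ : M, v₁ ≠ v₂ ∧ v₁ ≠ ρ ∧ v₂ ≠ ρ := by
          obtain ⟨b₁, b₂, b₃, hb12, hb13, hb23⟩ := h3
          by_cases h1 : b₁ = ρ
          · exact ⟨b₂, b₃, hb23, fun hh => hb12 ((hh.trans h1.symm).symm),
              fun hh => hb13 ((hh.trans h1.symm).symm)⟩
          · by_cases h2 : b₂ = ρ
            · exact ⟨b₁, b₃, hb13, h1, fun hh => hb23 ((hh.trans h2.symm).symm)⟩
            · exact ⟨b₁, b₂, hb12, h1, h2⟩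
        have mkmem : ∀ v : M, v ≠ ρ → ¬(∀ᶠ n in atTop, u (φ n) • v = α) →
            α ∈ limitSet G M (H ⊓ J) := by
          intro v hvρ hnev
          refine ⟨v, ?_⟩
          rw [Filter.not_eventually] at hnev
          have htv := hconv_pt v hvρ
          rw [Metric.mem_closure_iff]
          intro δ hδ
          have hev' : ∀ᶠ n in atTop, dist (u (φ n) • v) α < δ := by
            obtain ⟨N, hN⟩ := Metric.tendsto_atTop.1 htv δ hδ
            exact Filter.eventually_atTop.2 ⟨N, hN⟩
          obtain ⟨n, h1, h2⟩ := (hnev.and_eventually hev').exists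
          exact ⟨u (φ n) • v, ⟨⟨u (φ n), SetLike.mem_coe.2 (huK (φ n)), rfl⟩,
            by simpa using h1⟩, by rwa [dist_comm]⟩
        have hαΛ : α ∈ limitSet G M (H ⊓ J) := by
          obtain ⟨v₁, v₂, h12, h1ρ, h2ρ⟩ := hvv
          by_cases hc1 : ∀ᶠ n in atTop, u (φ n) • v₁ = α
          · refine mkmem v₂ h2ρ ?_
            intro hc2
            obtain ⟨n, ha, hb⟩ := (hc1.and hc2).exists
            exact h12 (MulAction.injective (u (φ n)) (ha.trans hb.symm))
          · exact mkmem v₁ h1ρ hc1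
        have hαS : α ∈ S :=
          ⟨aux_limitSet_mono inf_le_left hαΛ, aux_limitSet_mono inf_le_right hαΛ⟩
        by_cases hαz : α = z
        · by_cases hSz : ∃ s, s ∈ S ∧ s ≠ z
          · obtain ⟨s, hsS, hsz⟩ := hSz
            have hsρ : s ≠ ρ := by
              intro h
              apply hy₀S
              rw [hyρ, ← h]
              exact hsS
            exact hmk s hsS hsρ hαz
          · push_neg at hSz
            exact hSzcase hSz
        · have hzρ : z ≠ ρ := by
            intro h
            apply hy₀S
            rw [hyρ, ← h]
            exact hz
          have htz : Tendsto (fun n => u (φ n) • z) atTop (nhds α) := hconv_pt z hzρ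
          have hmemz : ∀ n, u (φ n) • z ∈ S := fun n => hSinv _ (huK _) z hz
          exact mk_inf2 α (aux_tendsto_finite_eventually hSfin hmemz htz).frequently
      · -- generic: the attracting point is z
        have hαz : α = z := tendsto_nhds_unique (hconv_pt y₀ hyρ) hptend'
        by_cases hS1 : ∃ s, s ∈ S ∧ s ≠ z ∧ s ≠ ρ
        · obtain ⟨s, hsS, hsz, hsρ⟩ := hS1
          exact hmk s hsS hsρ hαz
        · push_neg at hS1
          by_cases hSz : ∃ s, s ∈ S ∧ s ≠ z
          · obtain ⟨s, hsS, hsz⟩ := hSz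
            have hsρ : s = ρ := hS1 s hsS hsz
            have hρS : ρ ∈ S := hsρ ▸ hsS
            have hρz : ρ ≠ z := hsρ ▸ hsz
            by_cases hfz : ∃ᶠ n in atTop, u (φ n) • ρ = z
            · exact mk_inf ρ hfz
            · rw [Filter.not_frequently] at hfz
              have hevρ : ∀ᶠ n in atTop, u (φ n) • ρ = ρ := by
                filter_upwards [hfz] with n hn
                exact hS1 _ (hSinv _ (huK _) ρ hρS) hn
              exact absurd (hloxcase hρz hαz hS1 hevρ) (fun h => h)
          · push_neg at hSz
            exact hSzcase hSz
  by_cases hiso : ∃ U : Set M, IsOpen U ∧ U ∩ S = {z}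
  · by_cases hmem : z ∈ limitSet G M (H ⊓ J)
    · left
      obtain ⟨U, hUo, hUS⟩ := hiso
      exact ⟨claim2 U hUo hUS hmem, hnolox', hcoco⟩
    · right
      exact ⟨hiso, hmem⟩
  · left
    exact ⟨claim1 hiso, hnolox', hcoco⟩

end AuxProofs





/-- if `z ∈ Λ(H) ∩ Λ(J)` is a bounded parabolic point of two infinite
subgroups `H` and `J`, and the stabilizer of `z` in `G` contains no loxodromic element,
then `z` is either a bounded parabolic point of `H ∩ J`, or an isolated point of
`Λ(H) ∩ Λ(J)` not lying in `Λ(H ∩ J)`. -/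
theorem bounded_parabolic_point_of_intersection
    {G M : Type*} [Group G] [TopologicalSpace M] [CompactSpace M]
    [TopologicalSpace.MetrizableSpace M] [MulAction G M]
    (hconv : IsConvergenceAction G M)
    (h3 : ∃ a b c : M, a ≠ b ∧ a ≠ c ∧ b ≠ c)
    (H J : Subgroup G)
    (hHinf : (H : Set G).Infinite) (hJinf : (J : Set G).Infinite)
    (z : M) (hz : z ∈ limitSet G M H ∩ limitSet G M J)
    (hnolox : ∀ g ∈ MulAction.stabilizer G z, ¬ IsLoxodromic G M g)
    (hbpH : IsBoundedParabolicPoint G M H z)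
    (hbpJ : IsBoundedParabolicPoint G M J z) :
    IsBoundedParabolicPoint G M (H ⊓ J) z ∨
      ((∃ U : Set M, IsOpen U ∧ U ∩ (limitSet G M H ∩ limitSet G M J) = {z}) ∧
        z ∉ limitSet G M (H ⊓ J)) := by
  letI : MetricSpace M := TopologicalSpace.metrizableSpaceMetric M
  exact aux_main hconv h3 H J hHinf hJinf z hz hnolox hbpH hbpJ
end

section
/- Let G be a group with a convergence group action on a compact metrizable space M with at least three points, let z ∈ M be a point whose stabilizer Stab_G(z) contains no loxodromic element, let H_z and J_z be subgroups of Stab_G(z), and let K and L be compact subsets of M \ {z}. Then the set { j⁻¹h : h ∈ H_z, j ∈ J_z, (j⁻¹h)(K) ∩ L ≠ ∅ } is finite. -/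
open Pointwise Filter Topology Set

set_option linter.unusedSectionVars false

section Aux

variable {G M : Type*} [Group G] [MetricSpace M] [CompactSpace M] [MulAction G M]

/-- helper: approximants of separated points are distinct -/
private lemma sep_ne {ε : ℝ} {a b a1 b1 : M} (hab : ε ≤ dist a b)
    (ha : dist a1 a < ε / 3) (hb : dist b1 b < ε / 3) : a1 ≠ b1 := by
  intro h
  subst h
  have h1 : dist a b ≤ dist a a1 + dist a1 b := dist_triangle a a1 b
  have h3 : dist a a1 = dist a1 a := dist_comm _ _
  have h4 : (0:ℝ) ≤ dist a1 a := dist_nonneg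
  linarith

/-- The workhorse: an injective sequence in a convergence group cannot map a
convergent sequence of (asymptotically) distinct triples to a convergent sequence of
distinct triples. -/
lemma workhorse (hconv : IsConvergenceAction G M)
    {g : ℕ → G} (hg : Function.Injective g)
    {pn qn rn : ℕ → M} {p q r p' q' r' : M}
    (hp : Tendsto pn atTop (𝓝 p)) (hq : Tendsto qn atTop (𝓝 q))
    (hr : Tendsto rn atTop (𝓝 r))
    (hp' : Tendsto (fun n => g n • pn n) atTop (𝓝 p'))
    (hq' : Tendsto (fun n => g n • qn n) atTop (𝓝 q'))
    (hr' : Tendsto (fun n => g n • rn n) atTop (𝓝 r'))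
    (hpq : p ≠ q) (hpr : p ≠ r) (hqr : q ≠ r)
    (hpq' : p' ≠ q') (hpr' : p' ≠ r') (hqr' : q' ≠ r') : False := by
  classical
  set ε : ℝ := min (min (dist p q) (min (dist p r) (dist q r)))
      (min (dist p' q') (min (dist p' r') (dist q' r'))) with hεdef
  have hε : 0 < ε := by
    refine lt_min (lt_min ?_ (lt_min ?_ ?_)) (lt_min ?_ (lt_min ?_ ?_)) <;>
      rwa [dist_pos]
  have hεpq : ε ≤ dist p q := le_trans (min_le_left _ _) (min_le_left _ _)
  have hεpr : ε ≤ dist p r :=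
    le_trans (min_le_left _ _) (le_trans (min_le_right _ _) (min_le_left _ _))
  have hεqr : ε ≤ dist q r :=
    le_trans (min_le_left _ _) (le_trans (min_le_right _ _) (min_le_right _ _))
  have hεpq' : ε ≤ dist p' q' := le_trans (min_le_right _ _) (min_le_left _ _)
  have hεpr' : ε ≤ dist p' r' :=
    le_trans (min_le_right _ _) (le_trans (min_le_right _ _) (min_le_left _ _))
  have hεqr' : ε ≤ dist q' r' :=
    le_trans (min_le_right _ _) (le_trans (min_le_right _ _) (min_le_right _ _))
  have hev : ∀ᶠ n in atTop,
      dist (pn n) p < ε / 3 ∧ dist (qn n) q < ε / 3 ∧ dist (rn n) r < ε / 3 ∧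
      dist (g n • pn n) p' < ε / 3 ∧ dist (g n • qn n) q' < ε / 3 ∧
      dist (g n • rn n) r' < ε / 3 := by
    have e1 := Metric.tendsto_nhds.mp hp (ε / 3) (by positivity)
    have e2 := Metric.tendsto_nhds.mp hq (ε / 3) (by positivity)
    have e3 := Metric.tendsto_nhds.mp hr (ε / 3) (by positivity)
    have e4 := Metric.tendsto_nhds.mp hp' (ε / 3) (by positivity)
    have e5 := Metric.tendsto_nhds.mp hq' (ε / 3) (by positivity)
    have e6 := Metric.tendsto_nhds.mp hr' (ε / 3) (by positivity)
    filter_upwards [e1, e2, e3, e4, e5, e6] with n h1 h2 h3 h4 h5 h6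
    exact ⟨h1, h2, h3, h4, h5, h6⟩
  obtain ⟨N, hN⟩ := eventually_atTop.mp hev
  set T : ℕ → M × M × M := fun n => (pn (n + N), qn (n + N), rn (n + N)) with hTdef
  set T' : ℕ → M × M × M :=
    fun n => (g (n + N) • pn (n + N), g (n + N) • qn (n + N), g (n + N) • rn (n + N))
    with hT'def
  have hTtend : Tendsto T atTop (𝓝 (p, q, r)) :=
    Tendsto.prodMk_nhds (hp.comp (tendsto_add_atTop_nat N))
      (Tendsto.prodMk_nhds (hq.comp (tendsto_add_atTop_nat N))
        (hr.comp (tendsto_add_atTop_nat N)))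
  have hT'tend : Tendsto T' atTop (𝓝 (p', q', r')) :=
    Tendsto.prodMk_nhds (hp'.comp (tendsto_add_atTop_nat N))
      (Tendsto.prodMk_nhds (hq'.comp (tendsto_add_atTop_nat N))
        (hr'.comp (tendsto_add_atTop_nat N)))
  set KS : Set (M × M × M) := insert (p, q, r) (Set.range T) with hKSdef
  set LS : Set (M × M × M) := insert (p', q', r') (Set.range T') with hLSdef
  have hKSc : IsCompact KS := hTtend.isCompact_insert_range
  have hLSc : IsCompact LS := hT'tend.isCompact_insert_range
  have hdist : ∀ t ∈ KS ∪ LS, t.1 ≠ t.2.1 ∧ t.1 ≠ t.2.2 ∧ t.2.1 ≠ t.2.2 := by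
    rintro t (ht | ht) <;> rcases ht with rfl | ⟨n, rfl⟩
    · exact ⟨hpq, hpr, hqr⟩
    · obtain ⟨h1, h2, h3, _, _, _⟩ := hN (n + N) (Nat.le_add_left _ _)
      exact ⟨sep_ne hεpq h1 h2, sep_ne hεpr h1 h3, sep_ne hεqr h2 h3⟩
    · exact ⟨hpq', hpr', hqr'⟩
    · obtain ⟨_, _, _, h4, h5, h6⟩ := hN (n + N) (Nat.le_add_left _ _)
      exact ⟨sep_ne hεpq' h4 h5, sep_ne hεpr' h4 h6, sep_ne hεqr' h5 h6⟩
  have hfin := hconv.2 KS LS hKSc hLSc hdist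
  have hsub : Set.range (fun n => g (n + N)) ⊆ {g' : G | ((g' • KS) ∩ LS).Nonempty} := by
    rintro _ ⟨n, rfl⟩
    refine ⟨T' n, ?_, Set.mem_insert_of_mem _ ⟨n, rfl⟩⟩
    have hmem : T n ∈ KS := Set.mem_insert_of_mem _ ⟨n, rfl⟩
    have : g (n + N) • T n ∈ g (n + N) • KS := Set.smul_mem_smul_set hmem
    exact this
  have hinj2 : Function.Injective fun n => g (n + N) := by
    intro a b hab
    have := hg hab
    omega
  exact (Set.infinite_range_of_injective hinj2) (hfin.subset hsub)

/-- Anchor lemma: constrains subsequential limits via two known anchors. -/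
lemma anchor (hconv : IsConvergenceAction G M)
    {g : ℕ → G} (hg : Function.Injective g)
    {pn qn : ℕ → M} {p q p' q' : M}
    (hp : Tendsto pn atTop (𝓝 p)) (hq : Tendsto qn atTop (𝓝 q))
    (hp' : Tendsto (fun n => g n • pn n) atTop (𝓝 p'))
    (hq' : Tendsto (fun n => g n • qn n) atTop (𝓝 q'))
    (hpq : p ≠ q) (hpq' : p' ≠ q')
    {rn : ℕ → M} {r c : M}
    (hr : Tendsto rn atTop (𝓝 r))
    (hc : Tendsto (fun n => g n • rn n) atTop (𝓝 c))
    (hrp : r ≠ p) (hrq : r ≠ q) : c = p' ∨ c = q' := by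
  by_contra hcon
  push_neg at hcon
  exact workhorse hconv hg hp hq hr hp' hq' hc hpq hrp.symm hrq.symm hpq'
    (Ne.symm hcon.1) (Ne.symm hcon.2)

lemma conv_subseq_ne {u : ℕ → M} {a : M} (h : ¬ Tendsto u atTop (𝓝 a)) :
    ∃ c, c ≠ a ∧ ∃ φ : ℕ → ℕ, StrictMono φ ∧ Tendsto (u ∘ φ) atTop (𝓝 c) := by
  have hfr : ∃ ε > 0, ∃ᶠ n in atTop, ε ≤ dist (u n) a := by
    by_contra hcon
    push_neg at hcon
    apply h
    rw [Metric.tendsto_atTop]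
    intro ε hε
    have h2 := hcon (ε / 2) (by positivity)
    have h3 : ∀ᶠ n in atTop, dist (u n) a < ε := by
      filter_upwards [h2] with n hn
      linarith
    obtain ⟨N, hN⟩ := eventually_atTop.mp h3
    exact ⟨N, hN⟩
  obtain ⟨ε, hε, hfreq⟩ := hfr
  obtain ⟨φ, hφ, hP⟩ := Filter.extraction_of_frequently_atTop hfreq
  obtain ⟨c, ψ, hψ, hconv2⟩ := CompactSpace.tendsto_subseq (u ∘ φ)
  refine ⟨c, ?_, φ ∘ ψ, hφ.comp hψ, hconv2⟩
  have hd : Tendsto (fun n => dist ((u ∘ φ ∘ ψ) n) a) atTop (𝓝 (dist c a)) :=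
    hconv2.dist tendsto_const_nhds
  have : ε ≤ dist c a :=
    ge_of_tendsto hd (Eventually.of_forall fun n => hP (ψ n))
  intro hca
  rw [hca, dist_self] at this
  linarith

lemma exists_third {M' : Type*} (h3 : ∃ a b c : M', a ≠ b ∧ a ≠ c ∧ b ≠ c) (u v : M') :
    ∃ w, w ≠ u ∧ w ≠ v := by
  obtain ⟨a, b, c, hab, hac, hbc⟩ := h3
  by_contra hcon
  push_neg at hcon
  have key : ∀ w : M', w = u ∨ w = v := fun w => or_iff_not_imp_left.2 (hcon w)
  rcases key a with rfl | rfl <;> rcases key b with rfl | rfl <;>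
    rcases key c with rfl | rfl <;> simp_all

lemma pow_smul_fixed {g : G} {z : M} (hz : g • z = z) : ∀ k : ℕ, g ^ k • z = z := by
  intro k
  induction k with
  | zero => simp
  | succ k ih => rw [pow_succ, mul_smul, hz, ih]

lemma pow_smul_mem {g : G} {U : Set M} (hU : ∀ u ∈ U, g • u ∈ U) :
    ∀ k : ℕ, ∀ u ∈ U, g ^ k • u ∈ U := by
  intro k
  induction k with
  | zero => intro u hu; simpa using hu
  | succ k ih =>
    intro u hu
    rw [pow_succ, mul_smul]
    exact ih _ (hU u hu)

end Aux

section Aux2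

variable {G M : Type*} [Group G] [MetricSpace M] [CompactSpace M] [MulAction G M]

/-- An infinite-order element with an invariant compact set `U` not containing a fixed
point `z₀` has a unique fixed point in `U`, to which all iterates converge. -/
lemma uniq_fixed_point (hconv : IsConvergenceAction G M)
    {g : G} (hord : ¬ IsOfFinOrder g) {z₀ : M} (hz₀ : g • z₀ = z₀)
    {U : Set M} (hUc : IsCompact U) (hUne : U.Nonempty) (hz₀U : z₀ ∉ U)
    (hgU : ∀ u ∈ U, g • u ∈ U) :
    ∃ β ∈ U, g • β = β ∧ ∀ u ∈ U, g • u = u → u = β := by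
  classical
  have hpowinj : Function.Injective (fun k : ℕ => g ^ k) :=
    injective_pow_iff_not_isOfFinOrder.2 hord
  -- uniform shrinking of the iterates of U
  have shrink : ∀ ε : ℝ, 0 < ε →
      ∀ᶠ k : ℕ in atTop, ∀ u ∈ U, ∀ u' ∈ U, dist (g ^ k • u) (g ^ k • u') ≤ ε := by
    intro ε hε
    by_contra hcon
    rw [Filter.not_eventually] at hcon
    obtain ⟨φ, hφ, hP⟩ := Filter.extraction_of_frequently_atTop hcon
    have hP' : ∀ j : ℕ, ∃ u ∈ U, ∃ u' ∈ U,
        ε < dist (g ^ φ j • u) (g ^ φ j • u') := by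
      intro j
      have := hP j
      push_neg at this
      exact this
    choose u hu u' hu' hd using hP'
    -- extract convergent subsequences of everything
    obtain ⟨uL, huL, ψ1, hψ1, hu_conv⟩ := hUc.tendsto_subseq hu
    obtain ⟨uL', huL', ψ2, hψ2, hu'_conv⟩ := hUc.tendsto_subseq (x := fun j => u' (ψ1 j))
      (fun j => hu' _)
    obtain ⟨α, hα, ψ3, hψ3, hA_conv⟩ := hUc.tendsto_subseq
      (x := fun j => g ^ φ (ψ1 (ψ2 j)) • u (ψ1 (ψ2 j)))
      (fun j => pow_smul_mem hgU _ _ (hu _))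
    obtain ⟨α', hα', ψ4, hψ4, hA'_conv⟩ := hUc.tendsto_subseq
      (x := fun j => g ^ φ (ψ1 (ψ2 (ψ3 j))) • u' (ψ1 (ψ2 (ψ3 j))))
      (fun j => pow_smul_mem hgU _ _ (hu' _))
    -- final index map
    set θ : ℕ → ℕ := fun j => ψ1 (ψ2 (ψ3 (ψ4 j))) with hθdef
    have hθmono : StrictMono θ := hψ1.comp (hψ2.comp (hψ3.comp hψ4))
    set h : ℕ → G := fun j => g ^ φ (θ j) with hhdef
    have hhinj : Function.Injective h :=
      hpowinj.comp ((hφ.comp hθmono).injective)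
    have hz₀tend : Tendsto (fun _ : ℕ => z₀) atTop (𝓝 z₀) := tendsto_const_nhds
    have hz₀img : Tendsto (fun j => h j • z₀) atTop (𝓝 z₀) := by
      have : (fun j => h j • z₀) = fun _ => z₀ := by
        funext j; exact pow_smul_fixed hz₀ _
      rw [this]; exact tendsto_const_nhds
    have huθ : Tendsto (fun j => u (θ j)) atTop (𝓝 uL) :=
      ((hu_conv.comp hψ2.tendsto_atTop).comp hψ3.tendsto_atTop).comp hψ4.tendsto_atTop
    have hu'θ : Tendsto (fun j => u' (θ j)) atTop (𝓝 uL') :=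
      (hu'_conv.comp hψ3.tendsto_atTop).comp hψ4.tendsto_atTop
    have hAθ : Tendsto (fun j => h j • u (θ j)) atTop (𝓝 α) :=
      hA_conv.comp hψ4.tendsto_atTop
    have hA'θ : Tendsto (fun j => h j • u' (θ j)) atTop (𝓝 α') := hA'_conv
    have hαα' : ε ≤ dist α α' := by
      have hdist : Tendsto (fun j => dist (h j • u (θ j)) (h j • u' (θ j))) atTop
          (𝓝 (dist α α')) := hAθ.dist hA'θ
      exact ge_of_tendsto hdist (Eventually.of_forall fun j => (hd (θ j)).le)
    have hαne : α ≠ α' := by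
      intro hEq
      rw [hEq, dist_self] at hαα'
      linarith
    by_cases huu : uL = uL'
    · -- both source sequences converge to the same point; use an auxiliary point of U
      by_cases hU1 : ∃ v ∈ U, v ≠ uL
      · obtain ⟨v, hvU, hvne⟩ := hU1
        obtain ⟨γ, hγU, ψ5, hψ5, hB_conv⟩ := hUc.tendsto_subseq
          (x := fun j => h j • v) (fun j => pow_smul_mem hgU _ _ hvU)
        -- re-subsequence everything along ψ5
        have hθ5 : StrictMono (θ ∘ ψ5) := hθmono.comp hψ5
        have h5inj : Function.Injective fun j => h (ψ5 j) :=
          hhinj.comp hψ5.injective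
        have e1 : Tendsto (fun j => h (ψ5 j) • z₀) atTop (𝓝 z₀) :=
          hz₀img.comp hψ5.tendsto_atTop
        have e2 : Tendsto (fun j => h (ψ5 j) • v) atTop (𝓝 γ) := hB_conv
        have e3 : Tendsto (fun j => u (θ (ψ5 j))) atTop (𝓝 uL) :=
          huθ.comp hψ5.tendsto_atTop
        have e4 : Tendsto (fun j => h (ψ5 j) • u (θ (ψ5 j))) atTop (𝓝 α) :=
          hAθ.comp hψ5.tendsto_atTop
        have e3' : Tendsto (fun j => u' (θ (ψ5 j))) atTop (𝓝 uL') :=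
          hu'θ.comp hψ5.tendsto_atTop
        have e4' : Tendsto (fun j => h (ψ5 j) • u' (θ (ψ5 j))) atTop (𝓝 α') :=
          hA'θ.comp hψ5.tendsto_atTop
        have hz₀v : z₀ ≠ v := fun hEq => hz₀U (hEq ▸ hvU)
        have hz₀γ : z₀ ≠ γ := fun hEq => hz₀U (hEq ▸ hγU)
        have hγ1 : α = z₀ ∨ α = γ := anchor hconv h5inj tendsto_const_nhds
          tendsto_const_nhds e1 e2 hz₀v hz₀γ e3 e4
          (fun hEq => hz₀U (hEq ▸ huL)) hvne.symm
        have hγ2 : α' = z₀ ∨ α' = γ := anchor hconv h5inj tendsto_const_nhds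
          tendsto_const_nhds e1 e2 hz₀v hz₀γ e3' e4'
          (fun hEq => hz₀U (hEq ▸ huL')) (huu ▸ hvne.symm)
        have hαγ : α = γ := by
          rcases hγ1 with hEq | hEq
          · exact absurd hEq.symm (fun hEq2 => hz₀U (hEq2 ▸ hα))
          · exact hEq
        have hα'γ : α' = γ := by
          rcases hγ2 with hEq | hEq
          · exact absurd hEq.symm (fun hEq2 => hz₀U (hEq2 ▸ hα'))
          · exact hEq
        exact hαne (hαγ.trans hα'γ.symm)
      · push_neg at hU1
        have h1 : u (θ 0) = uL := hU1 _ (hu _)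
        have h2 : u' (θ 0) = uL := hU1 _ (hu' _)
        have := hd (θ 0)
        rw [h1, h2, dist_self] at this
        linarith
    · -- distinct source limits: direct contradiction
      exact workhorse hconv hhinj hz₀tend huθ hu'θ hz₀img hAθ hA'θ
        (fun hEq => hz₀U (hEq ▸ huL)) (fun hEq => hz₀U (hEq ▸ huL')) huu
        (fun hEq => hz₀U (hEq ▸ hα)) (fun hEq => hz₀U (hEq ▸ hα')) hαne
  -- Cauchy sequence of iterates
  obtain ⟨u₀, hu₀⟩ := hUne
  set c : ℕ → M := fun k => g ^ k • u₀ with hcdef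
  have hcU : ∀ k, c k ∈ U := fun k => pow_smul_mem hgU k u₀ hu₀
  have hcauchy : CauchySeq c := by
    rw [Metric.cauchySeq_iff]
    intro ε hε
    obtain ⟨N, hN⟩ := eventually_atTop.mp (shrink (ε / 2) (by positivity))
    refine ⟨N, fun m hm n hn => ?_⟩
    have h1 : c m = g ^ N • (g ^ (m - N) • u₀) := by
      rw [smul_smul, ← pow_add, Nat.add_sub_cancel' hm]
    have h2 : c n = g ^ N • (g ^ (n - N) • u₀) := by
      rw [smul_smul, ← pow_add, Nat.add_sub_cancel' hn]
    rw [h1, h2]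
    calc dist _ _ ≤ ε / 2 :=
          hN N le_rfl _ (pow_smul_mem hgU _ _ hu₀) _ (pow_smul_mem hgU _ _ hu₀)
      _ < ε := by linarith
  obtain ⟨β, hβ⟩ := cauchySeq_tendsto_of_complete hcauchy
  have hβU : β ∈ U := hUc.isClosed.mem_of_tendsto hβ (Eventually.of_forall hcU)
  have hfix : g • β = β := by
    have h1 : Tendsto (fun k => g • c k) atTop (𝓝 (g • β)) :=
      ((hconv.1 g).tendsto β).comp hβ
    have h2 : (fun k => g • c k) = fun k => c (k + 1) := by
      funext k
      show g • g ^ k • u₀ = g ^ (k + 1) • u₀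
      rw [smul_smul, ← pow_succ']
    have h3 : Tendsto (fun k => c (k + 1)) atTop (𝓝 β) :=
      hβ.comp (tendsto_add_atTop_nat 1)
    rw [h2] at h1
    exact tendsto_nhds_unique h1 h3
  refine ⟨β, hβU, hfix, fun u huU hufix => ?_⟩
  have htendu : Tendsto c atTop (𝓝 u) := by
    rw [Metric.tendsto_atTop]
    intro ε hε
    obtain ⟨N, hN⟩ := eventually_atTop.mp (shrink (ε / 2) (by positivity))
    refine ⟨N, fun k hk => ?_⟩
    have h2 : u = g ^ k • u := (pow_smul_fixed hufix k).symm
    calc dist (c k) u = dist (g ^ k • u₀) (g ^ k • u) := by rw [← h2]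
      _ ≤ ε / 2 := hN k hk _ hu₀ _ huU
      _ < ε := by linarith
  exact tendsto_nhds_unique htendu hβ

end Aux2
section Aux3

variable {G M : Type*} [Group G] [MetricSpace M] [CompactSpace M] [MulAction G M]

/-- Ping dynamics produce a loxodromic element. -/
lemma loxo_of_ping (hconv : IsConvergenceAction G M)
    {g : G} {z : M} (hgz : g • z = z)
    {U V : Set M} (hUc : IsCompact U) (hVc : IsCompact V)
    (hUV : ∀ t : M, t ∈ U → t ∈ V → False)
    (hzV : z ∈ V) (hUne : U.Nonempty)
    (hmap : ∀ v : M, v ∉ V → g • v ∈ U)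
    {w : M} (hwU : w ∉ U) (hwV : w ∉ V) :
    IsLoxodromic G M g := by
  have hgU : ∀ u ∈ U, g • u ∈ U := fun u hu => hmap u fun hv => hUV u hu hv
  have hginvV : ∀ v ∈ V, g⁻¹ • v ∈ V := by
    intro v hv
    by_contra hnot
    have h1 := hmap _ hnot
    rw [smul_inv_smul] at h1
    exact hUV v h1 hv
  have hpowU : ∀ k : ℕ, g ^ (k + 1) • w ∈ U := by
    intro k
    induction k with
    | zero => simpa using hmap w hwV
    | succ k ih =>
      have : g ^ (k + 1 + 1) • w = g • g ^ (k + 1) • w := by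
        rw [smul_smul, ← pow_succ']
      rw [this]
      exact hgU _ ih
  have hord : ¬ IsOfFinOrder g := by
    intro hfin
    obtain ⟨N, hNpos, hNe⟩ := hfin.exists_pow_eq_one
    have h1 := hpowU (N - 1)
    rw [Nat.sub_add_cancel hNpos, hNe] at h1
    simp at h1
    exact hwU h1
  obtain ⟨β, hβU, hβfix, hβuniq⟩ :=
    uniq_fixed_point hconv hord hgz hUc hUne (fun h => hUV z h hzV) hgU
  have hordinv : ¬ IsOfFinOrder g⁻¹ := by rwa [isOfFinOrder_inv_iff]
  have hβinv : g⁻¹ • β = β := by rw [inv_smul_eq_iff, hβfix]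
  obtain ⟨β', hβ'V, _, hβ'uniq⟩ :=
    uniq_fixed_point hconv hordinv hβinv hVc ⟨z, hzV⟩ (fun h => hUV β hβU h) hginvV
  have hzβ' : z = β' := hβ'uniq z hzV (by rw [inv_smul_eq_iff, hgz])
  have hfixset : {x : M | g • x = x} = {z, β} := by
    ext t
    simp only [Set.mem_setOf_eq, Set.mem_insert_iff, Set.mem_singleton_iff]
    constructor
    · intro ht
      by_cases htV : t ∈ V
      · left
        have : t = β' := hβ'uniq t htV (by rw [inv_smul_eq_iff, ht])
        rw [this, ← hzβ']
      · right
        have htU : t ∈ U := by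
          have := hmap t htV
          rwa [ht] at this
        exact hβuniq t htU ht
    · rintro (rfl | rfl)
      · exact hgz
      · exact hβfix
  have hzβ : z ≠ β := fun h => hUV β hβU (h ▸ hzV)
  exact ⟨hord, by rw [hfixset]; exact Set.encard_pair hzβ⟩

end Aux3
section Aux4

variable {G M : Type*} [Group G] [MetricSpace M] [CompactSpace M] [MulAction G M]

/-- The main case: an injective sequence in the stabilizer of `z`, attracting a second
point `w₁` towards `y ≠ z`, leads to a contradiction. -/
lemma case_II (hconv : IsConvergenceAction G M)
    (h3 : ∃ a b c : M, a ≠ b ∧ a ≠ c ∧ b ≠ c)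
    {z : M} (hnolox : ∀ g' : G, g' • z = z → ¬ IsLoxodromic G M g')
    {g : ℕ → G} (hg : Function.Injective g) (hgz : ∀ n, g n • z = z)
    {xx : ℕ → M} {x y : M}
    (hx : Tendsto xx atTop (𝓝 x))
    (hy : Tendsto (fun n => g n • xx n) atTop (𝓝 y))
    (hxz : x ≠ z) (hyz : y ≠ z)
    {w₁ : M} (hw₁z : w₁ ≠ z) (hw₁x : w₁ ≠ x)
    (hw₁ : Tendsto (fun n => g n • w₁) atTop (𝓝 y)) : False := by
  classical
  obtain ⟨w₂, hw₂z, hw₂y⟩ := exists_third h3 z y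
  have hD : (0:ℝ) < dist z y := dist_pos.2 (Ne.symm hyz)
  have hw₂yd : (0:ℝ) < dist w₂ y := dist_pos.2 hw₂y
  have hw₂zd : (0:ℝ) < dist w₂ z := dist_pos.2 hw₂z
  set ε : ℝ := min (dist z y / 3) (dist w₂ y / 2) with hεdef
  set δ : ℝ := min (dist z y / 3) (dist w₂ z / 2) with hδdef
  have hε : 0 < ε := lt_min (by linarith) (by linarith)
  have hδ : 0 < δ := lt_min (by linarith) (by linarith)
  by_cases hgood : ∃ n, ∀ v : M, δ ≤ dist v z → dist (g n • v) y ≤ ε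
  · obtain ⟨n, hn⟩ := hgood
    refine hnolox (g n) (hgz n) ?_
    refine loxo_of_ping hconv (hgz n)
      (U := Metric.closedBall y ε) (V := Metric.closedBall z δ)
      (Metric.isClosed_closedBall.isCompact) (Metric.isClosed_closedBall.isCompact)
      ?_ (Metric.mem_closedBall_self hδ.le) ⟨y, Metric.mem_closedBall_self hε.le⟩
      ?_ (w := w₂) ?_ ?_
    · intro t htU htV
      rw [Metric.mem_closedBall] at htU htV
      have h1 : dist z y ≤ dist z t + dist t y := dist_triangle _ _ _
      have h2 : dist z t = dist t z := dist_comm _ _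
      have h3 : ε ≤ dist z y / 3 := min_le_left _ _
      have h4 : δ ≤ dist z y / 3 := min_le_left _ _
      linarith
    · intro v hv
      rw [Metric.mem_closedBall] at hv ⊢
      push_neg at hv
      exact hn v hv.le
    · rw [Metric.mem_closedBall]
      have : ε ≤ dist w₂ y / 2 := min_le_right _ _
      push_neg
      linarith
    · rw [Metric.mem_closedBall]
      have : δ ≤ dist w₂ z / 2 := min_le_right _ _
      push_neg
      linarith
  · push_neg at hgood
    choose v hv1 hv2 using hgood
    obtain ⟨vstar, φ1, hφ1, hvconv⟩ := CompactSpace.tendsto_subseq v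
    obtain ⟨c, φ2, hφ2, hcconv⟩ :=
      CompactSpace.tendsto_subseq fun j => g (φ1 j) • v (φ1 j)
    obtain ⟨s, φ3, hφ3, hsconv⟩ :=
      CompactSpace.tendsto_subseq fun j => (g (φ1 (φ2 j)))⁻¹ • w₂
    set Ψ : ℕ → ℕ := fun j => φ1 (φ2 (φ3 j)) with hΨdef
    have hΨmono : StrictMono Ψ := hφ1.comp (hφ2.comp hφ3)
    -- data along the final subsequence
    have hgΨinj : Function.Injective fun j => g (Ψ j) := hg.comp hΨmono.injective
    have hgiΨinj : Function.Injective fun j => (g (Ψ j))⁻¹ := by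
      intro a b hab
      exact hΨmono.injective (hg (inv_injective hab))
    have hgzΨ : Tendsto (fun j => g (Ψ j) • z) atTop (𝓝 z) := by
      have : (fun j => g (Ψ j) • z) = fun _ => z := funext fun j => hgz (Ψ j)
      rw [this]; exact tendsto_const_nhds
    have hgziΨ : Tendsto (fun j => (g (Ψ j))⁻¹ • z) atTop (𝓝 z) := by
      have : (fun j => (g (Ψ j))⁻¹ • z) = fun _ => z := by
        funext j
        rw [inv_smul_eq_iff, hgz (Ψ j)]
      rw [this]; exact tendsto_const_nhds
    have hxΨ : Tendsto (fun j => xx (Ψ j)) atTop (𝓝 x) := hx.comp hΨmono.tendsto_atTop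
    have hyΨ : Tendsto (fun j => g (Ψ j) • xx (Ψ j)) atTop (𝓝 y) :=
      hy.comp hΨmono.tendsto_atTop
    have hw₁Ψ : Tendsto (fun j => g (Ψ j) • w₁) atTop (𝓝 y) :=
      hw₁.comp hΨmono.tendsto_atTop
    have hvΨ : Tendsto (fun j => v (Ψ j)) atTop (𝓝 vstar) :=
      (hvconv.comp hφ2.tendsto_atTop).comp hφ3.tendsto_atTop
    have hcΨ : Tendsto (fun j => g (Ψ j) • v (Ψ j)) atTop (𝓝 c) :=
      hcconv.comp hφ3.tendsto_atTop
    have hsΨ : Tendsto (fun j => (g (Ψ j))⁻¹ • w₂) atTop (𝓝 s) := hsconv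
    -- vstar ≠ z and c ≠ y
    have hvstarz : vstar ≠ z := by
      have h1 : Tendsto (fun j => dist (v (Ψ j)) z) atTop (𝓝 (dist vstar z)) :=
        hvΨ.dist tendsto_const_nhds
      have h2 : δ ≤ dist vstar z :=
        ge_of_tendsto h1 (Eventually.of_forall fun j => hv1 (Ψ j))
      intro hEq
      rw [hEq, dist_self] at h2
      linarith
    have hcy : c ≠ y := by
      have h1 : Tendsto (fun j => dist (g (Ψ j) • v (Ψ j)) y) atTop (𝓝 (dist c y)) :=
        hcΨ.dist tendsto_const_nhds
      have h2 : ε ≤ dist c y :=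
        ge_of_tendsto h1 (Eventually.of_forall fun j => (hv2 (Ψ j)).le)
      intro hEq
      rw [hEq, dist_self] at h2
      linarith
    -- c = z
    have hcz : c = z := by
      by_cases hvx : vstar = x
      · rcases anchor hconv hgΨinj tendsto_const_nhds tendsto_const_nhds
          hgzΨ hw₁Ψ (Ne.symm hw₁z) (Ne.symm hyz) hvΨ hcΨ hvstarz
          (by rw [hvx]; exact Ne.symm hw₁x) with h | h
        · exact h
        · exact absurd h hcy
      · rcases anchor hconv hgΨinj tendsto_const_nhds hxΨ hgzΨ hyΨ
          (Ne.symm hxz) (Ne.symm hyz) hvΨ hcΨ hvstarz hvx with h | h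
        · exact h
        · exact absurd h hcy
    -- s = z  (the "B''" argument)
    have hs1 : s = z ∨ s = x := anchor hconv hgiΨinj tendsto_const_nhds hyΨ
      hgziΨ (by simpa only [inv_smul_smul] using hxΨ) (Ne.symm hyz) (Ne.symm hxz)
      tendsto_const_nhds hsΨ hw₂z hw₂y
    have hs2 : s = z ∨ s = w₁ := anchor hconv hgiΨinj tendsto_const_nhds hw₁Ψ
      hgziΨ (by simpa only [inv_smul_smul] using
        (tendsto_const_nhds : Tendsto (fun _ : ℕ => w₁) atTop (𝓝 w₁)))
      (Ne.symm hyz) (Ne.symm hw₁z) tendsto_const_nhds hsΨ hw₂z hw₂y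
    have hsz : s = z := by
      rcases hs1 with h | h
      · exact h
      · rcases hs2 with h' | h'
        · exact h'
        · exact absurd (h.symm.trans h') (Ne.symm hw₁x)
    by_cases hvx : vstar = x
    · -- anchor pair (g•w₁ → y ↦ w₁) and (g•v → z ↦ v → x), third point w₂
      have key : s = w₁ ∨ s = vstar := anchor hconv hgiΨinj hw₁Ψ
        (by rw [hcz] at hcΨ; exact hcΨ)
        (by simpa only [inv_smul_smul] using
          (tendsto_const_nhds : Tendsto (fun _ : ℕ => w₁) atTop (𝓝 w₁)))
        (by simpa only [inv_smul_smul] using hvΨ)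
        hyz (by rw [hvx]; exact hw₁x) tendsto_const_nhds hsΨ hw₂y hw₂z
      rcases key with h | h
      · exact hw₁z (h.symm.trans hsz)
      · rw [hsz] at h
        exact hvstarz h.symm
    · -- workhorse: sources (g⁻¹w₂ → z, xx → x, v → vstar), images (w₂, y, z)
      refine workhorse hconv hgΨinj (by rw [hsz] at hsΨ; exact hsΨ) hxΨ hvΨ
        (by simpa only [smul_inv_smul] using
          (tendsto_const_nhds : Tendsto (fun _ : ℕ => w₂) atTop (𝓝 w₂)))
        hyΨ (by rw [hcz] at hcΨ; exact hcΨ)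
        (Ne.symm hxz) (Ne.symm hvstarz) (fun hEq => hvx hEq.symm)
        hw₂y hw₂z hyz
end Aux4
section Aux5

variable {G M : Type*} [Group G] [MetricSpace M] [CompactSpace M] [MulAction G M]

lemma core (hconv : IsConvergenceAction G M)
    (h3 : ∃ a b c : M, a ≠ b ∧ a ≠ c ∧ b ≠ c)
    {z : M} (hnolox : ∀ g' : G, g' • z = z → ¬ IsLoxodromic G M g')
    {g : ℕ → G} (hg : Function.Injective g) (hgz : ∀ n, g n • z = z)
    {xx : ℕ → M} {x y : M}
    (hx : Tendsto xx atTop (𝓝 x))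
    (hy : Tendsto (fun n => g n • xx n) atTop (𝓝 y))
    (hxz : x ≠ z) (hyz : y ≠ z) : False := by
  classical
  have hgzc : Tendsto (fun n => g n • z) atTop (𝓝 z) := by
    have : (fun n => g n • z) = fun _ => z := funext fun n => hgz n
    rw [this]; exact tendsto_const_nhds
  have hgzi : Tendsto (fun n => (g n)⁻¹ • z) atTop (𝓝 z) := by
    have : (fun n => (g n)⁻¹ • z) = fun _ => z := by
      funext n; rw [inv_smul_eq_iff, hgz n]
    rw [this]; exact tendsto_const_nhds
  have hginj : Function.Injective fun n => (g n)⁻¹ := fun a b hab =>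
    hg (inv_injective hab)
  by_cases hI : ∀ w : M, w ≠ z → w ≠ x → Tendsto (fun n => g n • w) atTop (𝓝 z)
  · by_cases hI' : ∀ w : M, w ≠ z → w ≠ y →
        Tendsto (fun n => (g n)⁻¹ • w) atTop (𝓝 z)
    · -- both branches uniform: direct workhorse contradiction
      obtain ⟨w₀, hw₀z, hw₀y⟩ := exists_third h3 z y
      obtain ⟨w', hw'z, hw'x⟩ := exists_third h3 z x
      refine workhorse hconv hg (hI' w₀ hw₀z hw₀y) hx
        (tendsto_const_nhds : Tendsto (fun _ : ℕ => w') atTop (𝓝 w'))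
        (by simpa only [smul_inv_smul] using
          (tendsto_const_nhds : Tendsto (fun _ : ℕ => w₀) atTop (𝓝 w₀)))
        hy (hI w' hw'z hw'x)
        (Ne.symm hxz) (Ne.symm hw'z) (Ne.symm hw'x)
        hw₀y hw₀z hyz
    · push_neg at hI'
      obtain ⟨w₁, hw₁z, hw₁y, hnt⟩ := hI'
      obtain ⟨c, hczne, φ, hφ, hcconv⟩ := conv_subseq_ne hnt
      have hinj' : Function.Injective fun n => (g (φ n))⁻¹ :=
        hginj.comp hφ.injective
      have hgziφ : Tendsto (fun n => (g (φ n))⁻¹ • z) atTop (𝓝 z) :=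
        hgzi.comp hφ.tendsto_atTop
      have hyφ : Tendsto (fun n => g (φ n) • xx (φ n)) atTop (𝓝 y) :=
        hy.comp hφ.tendsto_atTop
      have hxφ : Tendsto (fun n => xx (φ n)) atTop (𝓝 x) :=
        hx.comp hφ.tendsto_atTop
      have hc : c = x := by
        rcases anchor hconv hinj' tendsto_const_nhds hyφ hgziφ
          (by simpa only [inv_smul_smul] using hxφ)
          (Ne.symm hyz) (Ne.symm hxz)
          (tendsto_const_nhds : Tendsto (fun _ : ℕ => w₁) atTop (𝓝 w₁))
          hcconv hw₁z hw₁y with h | h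
        · exact absurd h hczne
        · exact h
      refine case_II hconv h3 hnolox hinj'
        (fun n => by rw [inv_smul_eq_iff, hgz (φ n)]) hyφ
        (by simpa only [inv_smul_smul] using hxφ)
        hyz hxz hw₁z hw₁y (by rwa [hc] at hcconv)
  · push_neg at hI
    obtain ⟨w₁, hw₁z, hw₁x, hnt⟩ := hI
    obtain ⟨c, hczne, φ, hφ, hcconv⟩ := conv_subseq_ne hnt
    have hinj' : Function.Injective fun n => g (φ n) := hg.comp hφ.injective
    have hgzφ : Tendsto (fun n => g (φ n) • z) atTop (𝓝 z) :=
      hgzc.comp hφ.tendsto_atTop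
    have hyφ : Tendsto (fun n => g (φ n) • xx (φ n)) atTop (𝓝 y) :=
      hy.comp hφ.tendsto_atTop
    have hxφ : Tendsto (fun n => xx (φ n)) atTop (𝓝 x) :=
      hx.comp hφ.tendsto_atTop
    have hc : c = y := by
      rcases anchor hconv hinj' tendsto_const_nhds hxφ hgzφ hyφ
        (Ne.symm hxz) (Ne.symm hyz)
        (tendsto_const_nhds : Tendsto (fun _ : ℕ => w₁) atTop (𝓝 w₁))
        hcconv hw₁z hw₁x with h | h
      · exact absurd h hczne
      · exact h
    exact case_II hconv h3 hnolox hinj' (fun n => hgz (φ n)) hxφ hyφ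
      hxz hyz hw₁z hw₁x (by rwa [hc] at hcconv)

end Aux5

/-- if the stabilizer of `z` contains no loxodromic element, `H_z, J_z` are
subgroups of `Stab_G(z)`, and `K, L` are compact subsets of `M \ {z}`, then only
finitely many elements `j⁻¹h` (with `h ∈ H_z`, `j ∈ J_z`) move `K` to meet `L`. -/
theorem finitely_many_translates_meeting
    {G M : Type*} [Group G] [TopologicalSpace M] [CompactSpace M]
    [TopologicalSpace.MetrizableSpace M] [MulAction G M]
    (hconv : IsConvergenceAction G M)
    (h3 : ∃ a b c : M, a ≠ b ∧ a ≠ c ∧ b ≠ c)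
    (z : M)
    (hnolox : ∀ g ∈ MulAction.stabilizer G z, ¬ IsLoxodromic G M g)
    (Hz Jz : Subgroup G)
    (hHz : Hz ≤ MulAction.stabilizer G z) (hJz : Jz ≤ MulAction.stabilizer G z)
    (K L : Set M) (hK : IsCompact K) (hL : IsCompact L)
    (hKz : K ⊆ {z}ᶜ) (hLz : L ⊆ {z}ᶜ) :
    {g : G | (∃ h ∈ Hz, ∃ j ∈ Jz, g = j⁻¹ * h) ∧ ((g • K) ∩ L).Nonempty}.Finite := by
  classical
  letI : MetricSpace M := TopologicalSpace.metrizableSpaceMetric M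
  by_contra hfin
  have hinf : {g : G | (∃ h ∈ Hz, ∃ j ∈ Jz, g = j⁻¹ * h) ∧
      ((g • K) ∩ L).Nonempty}.Infinite := hfin
  set E := hinf.natEmbedding with hEdef
  set g : ℕ → G := fun n => (E n : G) with hgdef
  have hg : Function.Injective g := fun a b hab =>
    E.injective (Subtype.ext hab)
  have hmem : ∀ n, (∃ h ∈ Hz, ∃ j ∈ Jz, g n = j⁻¹ * h) ∧
      ((g n • K) ∩ L).Nonempty := fun n => (E n).2
  have hgz : ∀ n, g n • z = z := by
    intro n
    obtain ⟨⟨h, hh, j, hj, heq⟩, -⟩ := hmem n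
    have hhz : h • z = z := hHz hh
    have hjz : j • z = z := hJz hj
    rw [heq, mul_smul, hhz, inv_smul_eq_iff, hjz]
  have hxex : ∀ n, ∃ xk, xk ∈ K ∧ g n • xk ∈ L := by
    intro n
    obtain ⟨-, m, hmK, hmL⟩ := hmem n
    obtain ⟨xk, hxk, hxkm⟩ := hmK
    exact ⟨xk, hxk, by rw [show g n • xk = m from hxkm]; exact hmL⟩
  choose xK hxK hgxL using hxex
  obtain ⟨x, hxmem, φ1, hφ1, hxconv⟩ := hK.tendsto_subseq hxK
  obtain ⟨y, hymem, φ2, hφ2, hyconv⟩ :=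
    hL.tendsto_subseq (x := fun n => g (φ1 n) • xK (φ1 n)) (fun n => hgxL (φ1 n))
  have hxz : x ≠ z := hKz hxmem
  have hyz : y ≠ z := hLz hymem
  set Ψ : ℕ → ℕ := fun n => φ1 (φ2 n) with hΨdef
  have hΨ : StrictMono Ψ := hφ1.comp hφ2
  exact core hconv h3
    (fun g' hg' => hnolox g' (MulAction.mem_stabilizer_iff.2 hg'))
    (hg.comp hΨ.injective) (fun n => hgz (Ψ n))
    (hxconv.comp hφ2.tendsto_atTop) hyconv hxz hyz
end

section
/- Let G be a group with a convergence group action on a compact metrizable space M with at least three points, let H and J be infinite subgroups of G, and let z ∈ Λ(H) ∩ Λ(J) be a point whose stabilizer Stab_G(z) contains no loxodromic element and which is a bounded parabolic point of both H and J. Then there exists a compact subset C ⊆ M \ {z} such that (Λ(H) ∩ Λ(J)) \ {z} ⊆ P·C, where P = Stab_H(z) ∩ Stab_J(z). -/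
open Pointwise Filter Topology Set

section Aux

variable {G M : Type*} [Group G] [MetricSpace M] [CompactSpace M] [MulAction G M]

/-- eventual distinctness of two sequences with distinct limits -/
lemma evNe {a b : ℕ → M} {a0 b0 : M} (ha : Tendsto a atTop (𝓝 a0))
    (hb : Tendsto b atTop (𝓝 b0)) (h : a0 ≠ b0) : ∀ᶠ n in atTop, a n ≠ b n := by
  have hmem : {p : M × M | p.1 = p.2}ᶜ ∈ 𝓝 (a0, b0) :=
    isClosed_diagonal.isOpen_compl.mem_nhds (by simpa using h)
  exact (ha.prodMk_nhds hb).eventually (eventually_mem_set.mpr hmem)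

/-- The core contradiction lemma: an infinite set of group elements cannot move a
convergent sequence of distinct triples to another convergent sequence of
distinct triples. -/
lemma lemmaT (hconv : IsConvergenceAction G M)
    {g : ℕ → G} (hg : Function.Injective g)
    {a b e : ℕ → M} {a0 b0 e0 a1 b1 e1 : M}
    (ha : Tendsto a atTop (𝓝 a0)) (hb : Tendsto b atTop (𝓝 b0))
    (he : Tendsto e atTop (𝓝 e0))
    (hga : Tendsto (fun n => g n • a n) atTop (𝓝 a1))
    (hgb : Tendsto (fun n => g n • b n) atTop (𝓝 b1))
    (hge : Tendsto (fun n => g n • e n) atTop (𝓝 e1))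
    (hab : a0 ≠ b0) (hae : a0 ≠ e0) (hbe : b0 ≠ e0)
    (hab1 : a1 ≠ b1) (hae1 : a1 ≠ e1) (hbe1 : b1 ≠ e1) : False := by
  obtain ⟨N, hN⟩ := eventually_atTop.mp
    (((evNe ha hb hab).and ((evNe ha he hae).and (evNe hb he hbe))).and
      ((evNe hga hgb hab1).and ((evNe hga hge hae1).and (evNe hgb hge hbe1))))
  set A : ℕ → M × M × M := fun n => (a (n + N), b (n + N), e (n + N)) with hA
  set B : ℕ → M × M × M := fun n =>
    (g (n + N) • a (n + N), g (n + N) • b (n + N), g (n + N) • e (n + N)) with hB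
  have hshift : Tendsto (fun n : ℕ => n + N) atTop atTop := tendsto_add_atTop_nat N
  have hAt : Tendsto A atTop (𝓝 (a0, b0, e0)) :=
    ((ha.comp hshift).prodMk_nhds ((hb.comp hshift).prodMk_nhds (he.comp hshift)))
  have hBt : Tendsto B atTop (𝓝 (a1, b1, e1)) :=
    ((hga.comp hshift).prodMk_nhds ((hgb.comp hshift).prodMk_nhds (hge.comp hshift)))
  have hKc : IsCompact (insert (a0, b0, e0) (Set.range A)) := hAt.isCompact_insert_range
  have hLc : IsCompact (insert (a1, b1, e1) (Set.range B)) := hBt.isCompact_insert_range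
  have hdist : ∀ t ∈ insert (a0, b0, e0) (Set.range A) ∪ insert (a1, b1, e1) (Set.range B),
      t.1 ≠ t.2.1 ∧ t.1 ≠ t.2.2 ∧ t.2.1 ≠ t.2.2 := by
    rintro t (ht | ht)
    · rcases ht with rfl | ⟨n, rfl⟩
      · exact ⟨hab, hae, hbe⟩
      · obtain ⟨h1, h2, h3⟩ := (hN (n + N) (Nat.le_add_left _ _)).1
        exact ⟨h1, h2, h3⟩
    · rcases ht with rfl | ⟨n, rfl⟩
      · exact ⟨hab1, hae1, hbe1⟩
      · obtain ⟨h1, h2, h3⟩ := (hN (n + N) (Nat.le_add_left _ _)).2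
        exact ⟨h1, h2, h3⟩
  have hfin := hconv.2 _ _ hKc hLc hdist
  have hsub : Set.range (fun n => g (n + N)) ⊆
      {g' : G | ((g' • insert (a0, b0, e0) (Set.range A)) ∩
        insert (a1, b1, e1) (Set.range B)).Nonempty} := by
    rintro _ ⟨n, rfl⟩
    refine ⟨B n, ⟨?_, mem_insert_of_mem _ ⟨n, rfl⟩⟩⟩
    have : B n = g (n + N) • A n := rfl
    rw [this]
    exact Set.smul_mem_smul_set (mem_insert_of_mem _ ⟨n, rfl⟩)
  have hinj : Function.Injective (fun n => g (n + N)) :=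
    hg.comp fun m n h => by omega
  exact (Set.infinite_range_of_injective hinj) (hfin.subset hsub)

/-- convergence from uniqueness of subsequential limits, in a compact space -/
lemma tendsto_of_subseq {x : ℕ → M} {p : M}
    (h : ∀ (ψ : ℕ → ℕ), StrictMono ψ → ∀ q : M,
      Tendsto (x ∘ ψ) atTop (𝓝 q) → q = p) :
    Tendsto x atTop (𝓝 p) := by
  rw [Metric.tendsto_atTop]
  by_contra hcon
  push_neg at hcon
  obtain ⟨ε, hε, hfreq⟩ := hcon
  have hfr : ∃ᶠ n in atTop, ε ≤ dist (x n) p := by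
    rw [frequently_atTop]
    intro N; obtain ⟨n, hn, hd⟩ := hfreq N; exact ⟨n, hn, hd⟩
  obtain ⟨ψ, hψ, hψd⟩ := extraction_of_frequently_atTop hfr
  obtain ⟨q, _, θ, hθ, hq⟩ := isCompact_univ.tendsto_subseq
    (x := x ∘ ψ) (fun n => mem_univ _)
  have hqp : q = p := h (ψ ∘ θ) (hψ.comp hθ) q hq
  have : Tendsto (fun i => dist (x (ψ (θ i))) p) atTop (𝓝 (dist q p)) :=
    hq.dist tendsto_const_nhds
  have hge : ε ≤ dist q p := ge_of_tendsto this (Eventually.of_forall fun i => hψd (θ i))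
  rw [hqp, dist_self] at hge
  linarith

/-- fixed points are fixed by powers -/
lemma pow_smul_fix {γ : G} {x : M} (h : γ • x = x) : ∀ k : ℕ, γ ^ k • x = x := by
  intro k
  induction k with
  | zero => simp
  | succ n ih => rw [pow_succ, mul_smul, h, ih]

/-- Phase 3: no element of the stabilizer of `z` can compress a compact set
missing `z` strictly inside itself while moving an outside point in. -/
lemma noComp (hconv : IsConvergenceAction G M) {z : M}
    (hnolox : ∀ g ∈ MulAction.stabilizer G z, ¬ IsLoxodromic G M g)
    {γ : G} (hγ : γ ∈ MulAction.stabilizer G z) {U : Set M}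
    (hUc : IsCompact U) (hzU : z ∉ U) (hUi : γ • U ⊆ U)
    {m₀ : M} (hm₀ : m₀ ∉ U) (hm₀' : γ • m₀ ∈ U) : False := by
  classical
  have hγz : γ • z = z := hγ
  have hfix : ∀ k : ℕ, γ ^ k • z = z := pow_smul_fix hγz
  have horb : ∀ k : ℕ, γ ^ (k + 1) • m₀ ∈ U := by
    intro k
    induction k with
    | zero => simpa using hm₀'
    | succ n ih =>
      have h2 : γ ^ (n + 1 + 1) • m₀ = γ • (γ ^ (n + 1) • m₀) := by
        rw [← mul_smul, ← pow_succ']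
      rw [h2]
      exact hUi (Set.smul_mem_smul_set ih)
  have hord : ¬ IsOfFinOrder γ := by
    intro h
    obtain ⟨k, hk, hγk⟩ := h.exists_pow_eq_one
    obtain ⟨k', rfl⟩ : ∃ k', k = k' + 1 := ⟨k - 1, by omega⟩
    have h2 := horb k'
    rw [hγk, one_smul] at h2
    exact hm₀ h2
  have hpinj : Function.Injective (fun n : ℕ => γ ^ n) :=
    injective_pow_iff_not_isOfFinOrder.mpr hord
  have hSc : ∀ k : ℕ, IsCompact (γ ^ k • U) := by
    intro k
    rw [← Set.image_smul]
    exact hUc.image (hconv.1 _)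
  have hanti : ∀ k : ℕ, γ ^ (k + 1) • U ⊆ γ ^ k • U := by
    intro k
    have h2 : γ ^ (k + 1) • U = γ ^ k • (γ • U) := by rw [← mul_smul, ← pow_succ]
    rw [h2]
    exact Set.smul_set_mono hUi
  have hne : ∀ k : ℕ, (γ ^ k • U).Nonempty :=
    fun k => ⟨γ ^ k • (γ • m₀), Set.smul_mem_smul_set hm₀'⟩
  have hAne : (⋂ k, γ ^ k • U).Nonempty :=
    IsCompact.nonempty_iInter_of_sequence_nonempty_isCompact_isClosed _ hanti hne (hSc 0)
      (fun k => (hSc k).isClosed)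
  set A : Set M := ⋂ k, γ ^ k • U with hA
  have hAcl : IsClosed A := isClosed_iInter fun k => (hSc k).isClosed
  have hAc : IsCompact A := hAcl.isCompact
  have hAz : z ∉ A := by
    intro h
    apply hzU
    have h0 := mem_iInter.mp h 0
    simpa using h0
  have hmemA : ∀ a ∈ A, γ • a ∈ A := by
    intro a haA
    rw [hA, mem_iInter]
    intro k
    apply hanti k
    have h1 : a ∈ γ ^ k • U := mem_iInter.mp haA k
    have h2 : γ • a ∈ γ • (γ ^ k • U) := Set.smul_mem_smul_set h1
    rwa [← mul_smul, ← pow_succ'] at h2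
  have hmemA' : ∀ a ∈ A, γ⁻¹ • a ∈ A := by
    intro a haA
    rw [hA, mem_iInter]
    intro k
    have h1 : a ∈ γ ^ (k + 1) • U := mem_iInter.mp haA (k + 1)
    rw [pow_succ', mul_smul] at h1
    rwa [Set.mem_smul_set_iff_inv_smul_mem] at h1
  have hpowA : ∀ (k : ℕ), ∀ a ∈ A, γ ^ k • a ∈ A := by
    intro k
    induction k with
    | zero => intro a ha; simpa using ha
    | succ n ih =>
      intro a ha
      have h2 : γ ^ (n + 1) • a = γ • (γ ^ n • a) := by rw [← mul_smul, ← pow_succ']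
      rw [h2]
      exact hmemA _ (ih a ha)
  have hpowA' : ∀ (k : ℕ), ∀ a ∈ A, (γ ^ k)⁻¹ • a ∈ A := by
    intro k
    induction k with
    | zero => intro a ha; simpa using ha
    | succ n ih =>
      intro a ha
      have h2 : (γ ^ (n + 1))⁻¹ • a = (γ ^ n)⁻¹ • (γ⁻¹ • a) := by
        rw [← mul_smul, ← mul_inv_rev, ← pow_succ']
      rw [h2]
      exact ih _ (hmemA' a ha)
  -- A is a singleton
  have hsub : ∀ a₁ ∈ A, ∀ a₂ ∈ A, a₁ = a₂ := by
    by_contra hcon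
    push_neg at hcon
    obtain ⟨a₁, ha₁, a₂, ha₂, hne12⟩ := hcon
    obtain ⟨p, hpA, φ, hφ, hop⟩ := hAc.tendsto_subseq
      (x := fun k => γ ^ k • a₁) (fun k => hpowA k a₁ ha₁)
    have hinj : Function.Injective (fun i => γ ^ (φ i)) := hpinj.comp hφ.injective
    have hstep1 : ∀ y ∈ A, Tendsto (fun i => γ ^ (φ i) • y) atTop (𝓝 p) := by
      intro y hy
      apply tendsto_of_subseq
      intro ψ hψ q hq
      have hqA : q ∈ A := hAcl.mem_of_tendsto hq
        (Eventually.of_forall fun i => hpowA _ y hy)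
      by_cases hya : y = a₁
      · subst hya
        exact tendsto_nhds_unique hq (hop.comp hψ.tendsto_atTop)
      · by_contra hqp
        have hTz : Tendsto (fun i : ℕ => γ ^ (φ (ψ i)) • z) atTop (𝓝 z) := by
          simp only [hfix]; exact tendsto_const_nhds
        have hTa : Tendsto (fun i : ℕ => γ ^ (φ (ψ i)) • a₁) atTop (𝓝 p) :=
          hop.comp hψ.tendsto_atTop
        have hTy : Tendsto (fun i : ℕ => γ ^ (φ (ψ i)) • y) atTop (𝓝 q) := hq
        exact lemmaT hconv (hinj.comp hψ.injective)
          (a := fun _ => z) (b := fun _ => a₁) (e := fun _ => y)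
          tendsto_const_nhds tendsto_const_nhds tendsto_const_nhds
          hTz hTa hTy
          (fun heq => hAz (by rw [heq]; exact ha₁))
          (fun heq => hAz (by rw [heq]; exact hy))
          (fun heq => hya heq.symm)
          (fun heq => hAz (by rw [heq]; exact hpA))
          (fun heq => hAz (by rw [heq]; exact hqA))
          (fun heq => hqp heq.symm)
    set u : M := if a₁ = p then a₂ else a₁ with hu
    have huA : u ∈ A := by rw [hu]; split_ifs <;> assumption
    have hup : u ≠ p := by
      rw [hu]; split_ifs with h1
      · exact fun h => hne12 (h1.trans h.symm)
      · exact h1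
    obtain ⟨ys, hysA, ψ, hψ, hyst⟩ := hAc.tendsto_subseq
      (x := fun i => (γ ^ (φ i))⁻¹ • u) (fun i => hpowA' _ u huA)
    set aa : M := if a₁ = ys then a₂ else a₁ with haa
    have haaA : aa ∈ A := by rw [haa]; split_ifs <;> assumption
    have haay : aa ≠ ys := by
      rw [haa]; split_ifs with h1
      · exact fun h => hne12 (h1.trans h.symm)
      · exact h1
    have hTz : Tendsto (fun i : ℕ => γ ^ (φ (ψ i)) • z) atTop (𝓝 z) := by
      simp only [hfix]; exact tendsto_const_nhds
    have hTu : Tendsto (fun i : ℕ => γ ^ (φ (ψ i)) • ((γ ^ (φ (ψ i)))⁻¹ • u))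
        atTop (𝓝 u) := by
      simp only [smul_inv_smul]; exact tendsto_const_nhds
    exact lemmaT hconv (hinj.comp hψ.injective)
      (a := fun _ => z) (b := fun i => (γ ^ (φ (ψ i)))⁻¹ • u) (e := fun _ => aa)
      tendsto_const_nhds hyst tendsto_const_nhds
      hTz hTu ((hstep1 aa haaA).comp hψ.tendsto_atTop)
      (fun heq => hAz (by rw [heq]; exact hysA))
      (fun heq => hAz (by rw [heq]; exact haaA))
      (fun heq => haay heq.symm)
      (fun heq => hAz (by rw [heq]; exact huA))
      (fun heq => hAz (by rw [heq]; exact hpA))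
      hup
  obtain ⟨aStar, haStar⟩ := hAne
  have haStarA : aStar ∈ A := haStar
  have hfixa : γ • aStar = aStar := hsub _ (hmemA _ haStarA) _ haStarA
  have haStarz : aStar ≠ z := fun h => hAz (h ▸ haStarA)
  have hFix : {x : M | γ • x = x} = {z, aStar} := by
    apply Set.eq_of_subset_of_subset
    · intro x hx
      by_contra hxmem
      simp only [Set.mem_insert_iff, Set.mem_singleton_iff, not_or] at hxmem
      obtain ⟨hxz, hxa⟩ := hxmem
      have hTz : Tendsto (fun n : ℕ => γ ^ (n + 1) • z) atTop (𝓝 z) := by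
        simp only [hfix]; exact tendsto_const_nhds
      have hTa : Tendsto (fun n : ℕ => γ ^ (n + 1) • aStar) atTop (𝓝 aStar) := by
        simp only [pow_smul_fix hfixa]; exact tendsto_const_nhds
      have hTx : Tendsto (fun n : ℕ => γ ^ (n + 1) • x) atTop (𝓝 x) := by
        simp only [pow_smul_fix hx]; exact tendsto_const_nhds
      exact lemmaT hconv (g := fun n : ℕ => γ ^ (n + 1))
        (hpinj.comp fun m n hmn => by omega)
        (a := fun _ => z) (b := fun _ => aStar) (e := fun _ => x)
        tendsto_const_nhds tendsto_const_nhds tendsto_const_nhds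
        hTz hTa hTx
        haStarz.symm (Ne.symm hxz) (fun heq => hxa heq.symm)
        haStarz.symm (Ne.symm hxz) (fun heq => hxa heq.symm)
    · rintro x (rfl | rfl)
      · exact hγz
      · exact hfixa
  exact hnolox γ hγ ⟨hord, by rw [hFix]; exact Set.encard_pair haStarz.symm⟩


/-- a point avoiding finitely many given points -/
lemma exists_fresh (hM : (Set.univ : Set M).Infinite) (p1 p2 p3 p4 : M) :
    ∃ v : M, v ≠ p1 ∧ v ≠ p2 ∧ v ≠ p3 ∧ v ≠ p4 := by
  have hfin : ({p1, p2, p3, p4} : Set M).Finite := by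
    apply Set.Finite.insert; apply Set.Finite.insert; apply Set.Finite.insert
    exact Set.finite_singleton _
  obtain ⟨v, hv⟩ := (hM.diff hfin).nonempty
  simp only [Set.mem_diff, Set.mem_univ, true_and, Set.mem_insert_iff,
    Set.mem_singleton_iff, not_or] at hv
  exact ⟨v, hv.1, hv.2.1, hv.2.2.1, hv.2.2.2⟩

/-- simultaneous convergent subsequence for two sequences -/
lemma exists_subseq2 (x y : ℕ → M) :
    ∃ (φ : ℕ → ℕ) (p q : M), StrictMono φ ∧
      Tendsto (fun i => x (φ i)) atTop (𝓝 p) ∧ Tendsto (fun i => y (φ i)) atTop (𝓝 q) := by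
  obtain ⟨p, -, φ₁, hφ₁, h1⟩ := isCompact_univ.tendsto_subseq (x := x) (fun n => mem_univ _)
  obtain ⟨q, -, φ₂, hφ₂, h2⟩ := isCompact_univ.tendsto_subseq (x := fun i => y (φ₁ i))
    (fun n => mem_univ _)
  exact ⟨φ₁ ∘ φ₂, p, q, hφ₁.comp hφ₂, h1.comp hφ₂.tendsto_atTop, h2⟩

/-- limits keep their distance -/
lemma limit_ne {x : ℕ → M} {p q : M} {r : ℝ} (hr : 0 < r)
    (hx : Tendsto x atTop (𝓝 p)) (h : ∀ n, r ≤ dist (x n) q) : p ≠ q := by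
  intro heq; subst heq
  have h1 : Tendsto (fun n => dist (x n) p) atTop (𝓝 (dist p p)) :=
    hx.dist tendsto_const_nhds
  rw [dist_self] at h1
  have h2 := ge_of_tendsto h1 (Eventually.of_forall h)
  linarith

/-- A "bad sequence": distinct elements of the stabilizer of `z` moving a sequence
converging to `c ≠ z` to a sequence converging to `d ≠ z`. -/
structure BadSeq (z c d : M) (g : ℕ → G) (cs : ℕ → M) : Prop where
  inj : Function.Injective g
  stab : ∀ n, g n • z = z
  hcz : c ≠ z
  hdz : d ≠ z
  hc : Tendsto cs atTop (𝓝 c)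
  hd : Tendsto (fun n => g n • cs n) atTop (𝓝 d)

lemma BadSeq.inv {z c d : M} {g : ℕ → G} {cs : ℕ → M} (hB : BadSeq z c d g cs) :
    BadSeq z d c (fun n => (g n)⁻¹) (fun n => g n • cs n) where
  inj := fun m n h => hB.inj (inv_injective h)
  stab := fun n => by
    have := hB.stab n
    rw [inv_smul_eq_iff]
    exact this.symm
  hcz := hB.hdz
  hdz := hB.hcz
  hc := hB.hd
  hd := by simpa only [inv_smul_smul] using hB.hc

lemma BadSeq.sub {z c d : M} {g : ℕ → G} {cs : ℕ → M} (hB : BadSeq z c d g cs)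
    {φ : ℕ → ℕ} (hφ : StrictMono φ) :
    BadSeq z c d (fun i => g (φ i)) (fun i => cs (φ i)) where
  inj := hB.inj.comp hφ.injective
  stab := fun n => hB.stab (φ n)
  hcz := hB.hcz
  hdz := hB.hdz
  hc := hB.hc.comp hφ.tendsto_atTop
  hd := hB.hd.comp hφ.tendsto_atTop

/-- cluster values of images of sequences converging off `{z, c}` lie in `{z, d}` -/
lemma BadSeq.cluster (hconv : IsConvergenceAction G M) {z c d : M} {g : ℕ → G}
    {cs : ℕ → M} (hB : BadSeq z c d g cs) {u : ℕ → M} {u0 q : M}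
    (hu : Tendsto u atTop (𝓝 u0)) (hq : Tendsto (fun n => g n • u n) atTop (𝓝 q))
    (h1 : u0 ≠ z) (h2 : u0 ≠ c) : q = z ∨ q = d := by
  by_contra h
  push_neg at h
  have hTz : Tendsto (fun n => g n • z) atTop (𝓝 z) := by
    simp only [hB.stab]; exact tendsto_const_nhds
  exact lemmaT hconv hB.inj (a := fun _ => z) (b := cs) (e := u)
    tendsto_const_nhds hB.hc hu hTz hB.hd hq
    (Ne.symm hB.hcz) (Ne.symm h1) (Ne.symm h2)
    (Ne.symm hB.hdz) (Ne.symm h.1) (Ne.symm h.2)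

lemma caseA (hconv : IsConvergenceAction G M) (hM : (Set.univ : Set M).Infinite)
    {z c d : M} {g : ℕ → G} {cs : ℕ → M} (hB : BadSeq z c d g cs)
    {ps qs : ℕ → M} {p0 s : M}
    (hp : Tendsto ps atTop (𝓝 p0))
    (hgp : Tendsto (fun n => g n • ps n) atTop (𝓝 z))
    (hp0z : p0 ≠ z) (hp0c : p0 ≠ c)
    (hq : Tendsto qs atTop (𝓝 d))
    (hgq : Tendsto (fun n => (g n)⁻¹ • qs n) atTop (𝓝 s))
    (hsc : s ≠ c) : False := by
  obtain ⟨v, hv1, hv2, hv3, hv4⟩ := exists_fresh hM z c d p0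
  obtain ⟨φ, σv, τv, hφ, hσ, hτ⟩ :=
    exists_subseq2 (fun n => (g n)⁻¹ • v) (fun n => g n • v)
  have hBφ := hB.sub hφ
  have hσ' : Tendsto (fun i => (g (φ i))⁻¹ • v) atTop (𝓝 σv) := hσ
  have hτ' : Tendsto (fun i => g (φ i) • v) atTop (𝓝 τv) := hτ
  have hσzc : σv = z ∨ σv = c :=
    hBφ.inv.cluster hconv (u := fun _ => v) tendsto_const_nhds hσ' hv1 hv3
  have hτzd : τv = z ∨ τv = d :=
    hBφ.cluster hconv (u := fun _ => v) tendsto_const_nhds hτ' hv1 hv2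
  have hpφ : Tendsto (fun i => ps (φ i)) atTop (𝓝 p0) := hp.comp hφ.tendsto_atTop
  have hgpφ : Tendsto (fun i => g (φ i) • ps (φ i)) atTop (𝓝 z) :=
    hgp.comp hφ.tendsto_atTop
  have hqφ : Tendsto (fun i => qs (φ i)) atTop (𝓝 d) := hq.comp hφ.tendsto_atTop
  have hgqφ : Tendsto (fun i => (g (φ i))⁻¹ • qs (φ i)) atTop (𝓝 s) :=
    hgq.comp hφ.tendsto_atTop
  have hvback : Tendsto (fun i => g (φ i) • ((g (φ i))⁻¹ • v)) atTop (𝓝 v) := by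
    simp only [smul_inv_smul]; exact tendsto_const_nhds
  have hqback : Tendsto (fun i => g (φ i) • ((g (φ i))⁻¹ • qs (φ i))) atTop (𝓝 d) := by
    simp only [smul_inv_smul]; exact hqφ
  have hinvstab : Tendsto (fun i => (g (φ i))⁻¹ • z) atTop (𝓝 z) := by
    simp only [hBφ.inv.stab]; exact tendsto_const_nhds
  rcases hσzc with hσz | hσc
  · rw [hσz] at hσ'
    rcases hτzd with hτz | hτd
    · rw [hτz] at hτ'
      exact lemmaT hconv hBφ.inj
        (a := fun i => cs (φ i)) (b := fun i => (g (φ i))⁻¹ • v) (e := fun _ => v)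
        hBφ.hc hσ' tendsto_const_nhds hBφ.hd hvback hτ'
        hB.hcz (Ne.symm hv2) (Ne.symm hv1)
        (Ne.symm hv3) hB.hdz hv1
    · rw [hτd] at hτ'
      exact lemmaT hconv hBφ.inj
        (a := fun i => ps (φ i)) (b := fun i => (g (φ i))⁻¹ • v) (e := fun _ => v)
        hpφ hσ' tendsto_const_nhds hgpφ hvback hτ'
        hp0z (Ne.symm hv4) (Ne.symm hv1)
        (Ne.symm hv1) (Ne.symm hB.hdz) hv3
  · rw [hσc] at hσ'
    by_cases hsz : s = z
    · rw [hsz] at hgqφ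
      exact lemmaT hconv hBφ.inj
        (a := fun i => (g (φ i))⁻¹ • v) (b := fun i => ps (φ i))
        (e := fun i => (g (φ i))⁻¹ • qs (φ i))
        hσ' hpφ hgqφ hvback hgpφ hqback
        (Ne.symm hp0c) hB.hcz hp0z
        hv1 hv3 (Ne.symm hB.hdz)
    · exact lemmaT hconv hBφ.inv.inj
        (a := fun i => qs (φ i)) (b := fun _ => z) (e := fun _ => v)
        hqφ tendsto_const_nhds tendsto_const_nhds hgqφ hinvstab hσ'
        hB.hdz (Ne.symm hv3) (Ne.symm hv1)
        hsz hsc (Ne.symm hB.hcz)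

lemma caseB (hconv : IsConvergenceAction G M)
    {z c d : M} {g : ℕ → G} {cs : ℕ → M} (hB : BadSeq z c d g cs)
    {ps qs : ℕ → M} {p0 q0 : M}
    (hp : Tendsto ps atTop (𝓝 p0))
    (hgp : Tendsto (fun n => g n • ps n) atTop (𝓝 z))
    (hp0z : p0 ≠ z) (hp0c : p0 ≠ c)
    (hq : Tendsto qs atTop (𝓝 q0))
    (hgq : Tendsto (fun n => (g n)⁻¹ • qs n) atTop (𝓝 z))
    (hq0z : q0 ≠ z) (hq0d : q0 ≠ d) : False := by
  have hqback : Tendsto (fun n => g n • ((g n)⁻¹ • qs n)) atTop (𝓝 q0) := by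
    simp only [smul_inv_smul]; exact hq
  exact lemmaT hconv hB.inj
    (a := ps) (b := cs) (e := fun n => (g n)⁻¹ • qs n)
    hp hB.hc hgq hgp hB.hd hqback
    hp0c hp0z hB.hcz
    (Ne.symm hB.hdz) (Ne.symm hq0z) (Ne.symm hq0d)

lemma caseCt (hconv : IsConvergenceAction G M) (hM : (Set.univ : Set M).Infinite)
    {z c d : M} {g : ℕ → G} {cs : ℕ → M} (hB : BadSeq z c d g cs)
    {xs ws : ℕ → M} {s : M}
    (hx : Tendsto xs atTop (𝓝 c))
    (hgx : Tendsto (fun n => g n • xs n) atTop (𝓝 z))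
    (hw : Tendsto ws atTop (𝓝 d))
    (hgw : Tendsto (fun n => (g n)⁻¹ • ws n) atTop (𝓝 s))
    (hsc : s ≠ c) : False := by
  obtain ⟨v, hv1, hv2, hv3, -⟩ := exists_fresh hM z c d d
  obtain ⟨φ, σv, τv, hφ, hσ, hτ⟩ :=
    exists_subseq2 (fun n => (g n)⁻¹ • v) (fun n => g n • v)
  have hBφ := hB.sub hφ
  have hσ' : Tendsto (fun i => (g (φ i))⁻¹ • v) atTop (𝓝 σv) := hσ
  have hτ' : Tendsto (fun i => g (φ i) • v) atTop (𝓝 τv) := hτ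
  have hσzc : σv = z ∨ σv = c :=
    hBφ.inv.cluster hconv (u := fun _ => v) tendsto_const_nhds hσ' hv1 hv3
  have hτzd : τv = z ∨ τv = d :=
    hBφ.cluster hconv (u := fun _ => v) tendsto_const_nhds hτ' hv1 hv2
  have hxφ : Tendsto (fun i => xs (φ i)) atTop (𝓝 c) := hx.comp hφ.tendsto_atTop
  have hgxφ : Tendsto (fun i => g (φ i) • xs (φ i)) atTop (𝓝 z) :=
    hgx.comp hφ.tendsto_atTop
  have hwφ : Tendsto (fun i => ws (φ i)) atTop (𝓝 d) := hw.comp hφ.tendsto_atTop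
  have hgwφ : Tendsto (fun i => (g (φ i))⁻¹ • ws (φ i)) atTop (𝓝 s) :=
    hgw.comp hφ.tendsto_atTop
  have hvback : Tendsto (fun i => g (φ i) • ((g (φ i))⁻¹ • v)) atTop (𝓝 v) := by
    simp only [smul_inv_smul]; exact tendsto_const_nhds
  have hwback : Tendsto (fun i => g (φ i) • ((g (φ i))⁻¹ • ws (φ i))) atTop (𝓝 d) := by
    simp only [smul_inv_smul]; exact hwφ
  have hvback' : Tendsto (fun i => (g (φ i))⁻¹ • (g (φ i) • v)) atTop (𝓝 v) := by
    simp only [inv_smul_smul]; exact tendsto_const_nhds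
  have hinvstab : Tendsto (fun i => (g (φ i))⁻¹ • z) atTop (𝓝 z) := by
    simp only [hBφ.inv.stab]; exact tendsto_const_nhds
  rcases hσzc with hσz | hσc
  · rw [hσz] at hσ'
    rcases hτzd with hτz | hτd
    · rw [hτz] at hτ'
      exact lemmaT hconv hBφ.inj
        (a := fun i => cs (φ i)) (b := fun i => (g (φ i))⁻¹ • v) (e := fun _ => v)
        hBφ.hc hσ' tendsto_const_nhds hBφ.hd hvback hτ'
        hB.hcz (Ne.symm hv2) (Ne.symm hv1)
        (Ne.symm hv3) hB.hdz hv1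
    · rw [hτd] at hτ'
      exact lemmaT hconv hBφ.inj
        (a := fun i => xs (φ i)) (b := fun i => (g (φ i))⁻¹ • v) (e := fun _ => v)
        hxφ hσ' tendsto_const_nhds hgxφ hvback hτ'
        hB.hcz (Ne.symm hv2) (Ne.symm hv1)
        (Ne.symm hv1) (Ne.symm hB.hdz) hv3
  · rw [hσc] at hσ'
    rcases hτzd with hτz | hτd
    · rw [hτz] at hτ'
      by_cases hsz : s = z
      · rw [hsz] at hgwφ
        exact lemmaT hconv hBφ.inj
          (a := fun i => (g (φ i))⁻¹ • v) (b := fun i => (g (φ i))⁻¹ • ws (φ i))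
          (e := fun _ => v)
          hσ' hgwφ tendsto_const_nhds hvback hwback hτ'
          hB.hcz (Ne.symm hv2) (Ne.symm hv1)
          hv3 hv1 hB.hdz
      · exact lemmaT hconv hBφ.inv.inj
          (a := fun i => ws (φ i)) (b := fun _ => z) (e := fun _ => v)
          hwφ tendsto_const_nhds tendsto_const_nhds hgwφ hinvstab hσ'
          hB.hdz (Ne.symm hv3) (Ne.symm hv1)
          hsz hsc (Ne.symm hB.hcz)
    · rw [hτd] at hτ'
      exact lemmaT hconv hBφ.inv.inj
        (a := fun i => g (φ i) • v) (b := fun _ => z) (e := fun _ => v)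
        hτ' tendsto_const_nhds tendsto_const_nhds hvback' hinvstab hσ'
        hB.hdz (Ne.symm hv3) (Ne.symm hv1)
        hv1 hv2 (Ne.symm hB.hcz)

lemma caseC4 (hconv : IsConvergenceAction G M) (hM : (Set.univ : Set M).Infinite)
    {z c d : M} {g : ℕ → G} {cs : ℕ → M} (hB : BadSeq z c d g cs)
    {xs ws : ℕ → M} {t s : M}
    (hx : Tendsto xs atTop (𝓝 c))
    (hgx : Tendsto (fun n => g n • xs n) atTop (𝓝 t))
    (htz : t ≠ z) (htd : t ≠ d)
    (hw : Tendsto ws atTop (𝓝 d))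
    (hgw : Tendsto (fun n => (g n)⁻¹ • ws n) atTop (𝓝 s))
    (hsz : s ≠ z) (hsc : s ≠ c) : False := by
  obtain ⟨v, hv1, hv2, hv3, -⟩ := exists_fresh hM z c d d
  obtain ⟨φ, σv, τv, hφ, hσ, hτ⟩ :=
    exists_subseq2 (fun n => (g n)⁻¹ • v) (fun n => g n • v)
  have hBφ := hB.sub hφ
  have hσ' : Tendsto (fun i => (g (φ i))⁻¹ • v) atTop (𝓝 σv) := hσ
  have hτ' : Tendsto (fun i => g (φ i) • v) atTop (𝓝 τv) := hτ
  have hσzc : σv = z ∨ σv = c :=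
    hBφ.inv.cluster hconv (u := fun _ => v) tendsto_const_nhds hσ' hv1 hv3
  have hτzd : τv = z ∨ τv = d :=
    hBφ.cluster hconv (u := fun _ => v) tendsto_const_nhds hτ' hv1 hv2
  have hxφ : Tendsto (fun i => xs (φ i)) atTop (𝓝 c) := hx.comp hφ.tendsto_atTop
  have hgxφ : Tendsto (fun i => g (φ i) • xs (φ i)) atTop (𝓝 t) :=
    hgx.comp hφ.tendsto_atTop
  have hwφ : Tendsto (fun i => ws (φ i)) atTop (𝓝 d) := hw.comp hφ.tendsto_atTop
  have hgwφ : Tendsto (fun i => (g (φ i))⁻¹ • ws (φ i)) atTop (𝓝 s) :=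
    hgw.comp hφ.tendsto_atTop
  have hvback : Tendsto (fun i => g (φ i) • ((g (φ i))⁻¹ • v)) atTop (𝓝 v) := by
    simp only [smul_inv_smul]; exact tendsto_const_nhds
  have hstab : Tendsto (fun i => g (φ i) • z) atTop (𝓝 z) := by
    simp only [hBφ.stab]; exact tendsto_const_nhds
  have hinvstab : Tendsto (fun i => (g (φ i))⁻¹ • z) atTop (𝓝 z) := by
    simp only [hBφ.inv.stab]; exact tendsto_const_nhds
  rcases hτzd with hτz | hτd
  · rw [hτz] at hτ'
    rcases hσzc with hσz | hσc
    · rw [hσz] at hσ'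
      exact lemmaT hconv hBφ.inj
        (a := fun i => cs (φ i)) (b := fun i => (g (φ i))⁻¹ • v) (e := fun _ => v)
        hBφ.hc hσ' tendsto_const_nhds hBφ.hd hvback hτ'
        hB.hcz (Ne.symm hv2) (Ne.symm hv1)
        (Ne.symm hv3) hB.hdz hv1
    · rw [hσc] at hσ'
      exact lemmaT hconv hBφ.inv.inj
        (a := fun i => ws (φ i)) (b := fun _ => z) (e := fun _ => v)
        hwφ tendsto_const_nhds tendsto_const_nhds hgwφ hinvstab hσ'
        hB.hdz (Ne.symm hv3) (Ne.symm hv1)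
        hsz hsc (Ne.symm hB.hcz)
  · rw [hτd] at hτ'
    exact lemmaT hconv hBφ.inj
      (a := fun i => xs (φ i)) (b := fun _ => z) (e := fun _ => v)
      hxφ tendsto_const_nhds tendsto_const_nhds hgxφ hstab hτ'
      hB.hcz (Ne.symm hv2) (Ne.symm hv1)
      htz htd (Ne.symm hB.hdz)

/-- Main scenario lemma: bad sequences do not exist. -/
lemma mainBad (hconv : IsConvergenceAction G M) (hM : (Set.univ : Set M).Infinite)
    {z : M} (hnolox : ∀ g ∈ MulAction.stabilizer G z, ¬ IsLoxodromic G M g)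
    {c d : M} {g : ℕ → G} {cs : ℕ → M} (hB : BadSeq z c d g cs) : False := by
  classical
  obtain ⟨m₀, hm01, hm02, -, -⟩ := exists_fresh hM z d z d
  set r : ℝ := min (dist z d) (min (dist m₀ z) (dist m₀ d)) / 3 with hr
  have hrpos : 0 < r := by
    have h1 : 0 < dist z d := dist_pos.mpr (Ne.symm hB.hdz)
    have h2 : 0 < dist m₀ z := dist_pos.mpr hm01
    have h3 : 0 < dist m₀ d := dist_pos.mpr hm02
    have : 0 < min (dist z d) (min (dist m₀ z) (dist m₀ d)) :=
      lt_min h1 (lt_min h2 h3)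
    linarith
  have hr1 : 3 * r ≤ dist z d := by
    have := min_le_left (dist z d) (min (dist m₀ z) (dist m₀ d))
    linarith
  have hr2 : 3 * r ≤ dist m₀ z := by
    have h1 := min_le_right (dist z d) (min (dist m₀ z) (dist m₀ d))
    have h2 := min_le_left (dist m₀ z) (dist m₀ d)
    linarith
  have hr3 : 3 * r ≤ dist m₀ d := by
    have h1 := min_le_right (dist z d) (min (dist m₀ z) (dist m₀ d))
    have h2 := min_le_right (dist m₀ z) (dist m₀ d)
    linarith
  have hescape : ∀ n, ∃ x : M, r ≤ dist x z ∧ r ≤ dist (g n • x) d := by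
    intro n
    by_contra hcon
    push_neg at hcon
    refine noComp hconv hnolox (γ := g n) (hB.stab n) (U := Metric.closedBall d r)
      (Metric.isClosed_closedBall.isCompact) ?_ ?_ (m₀ := m₀) ?_ ?_
    · intro hmem
      rw [Metric.mem_closedBall] at hmem
      linarith
    · rintro y ⟨x, hxmem, rfl⟩
      rw [Metric.mem_closedBall] at hxmem
      have hxz : r ≤ dist x z := by
        have htr := dist_triangle z x d
        have hcomm : dist z x = dist x z := dist_comm z x
        linarith
      rw [Metric.mem_closedBall]
      exact le_of_lt (hcon x hxz)
    · intro hmem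
      rw [Metric.mem_closedBall] at hmem
      linarith
    · rw [Metric.mem_closedBall]
      have hmz : r ≤ dist m₀ z := by linarith
      exact le_of_lt (hcon m₀ hmz)
  choose xe hxe1 hxe2 using hescape
  obtain ⟨m₁, hm11, hm12, -, -⟩ := exists_fresh hM z c z c
  set r' : ℝ := min (dist z c) (min (dist m₁ z) (dist m₁ c)) / 3 with hr'
  have hrpos' : 0 < r' := by
    have h1 : 0 < dist z c := dist_pos.mpr (Ne.symm hB.hcz)
    have h2 : 0 < dist m₁ z := dist_pos.mpr hm11
    have h3 : 0 < dist m₁ c := dist_pos.mpr hm12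
    have : 0 < min (dist z c) (min (dist m₁ z) (dist m₁ c)) :=
      lt_min h1 (lt_min h2 h3)
    linarith
  have hr1' : 3 * r' ≤ dist z c := by
    have := min_le_left (dist z c) (min (dist m₁ z) (dist m₁ c))
    linarith
  have hr2' : 3 * r' ≤ dist m₁ z := by
    have h1 := min_le_right (dist z c) (min (dist m₁ z) (dist m₁ c))
    have h2 := min_le_left (dist m₁ z) (dist m₁ c)
    linarith
  have hr3' : 3 * r' ≤ dist m₁ c := by
    have h1 := min_le_right (dist z c) (min (dist m₁ z) (dist m₁ c))
    have h2 := min_le_right (dist m₁ z) (dist m₁ c)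
    linarith
  have hescape' : ∀ n, ∃ w : M, r' ≤ dist w z ∧ r' ≤ dist ((g n)⁻¹ • w) c := by
    intro n
    by_contra hcon
    push_neg at hcon
    refine noComp hconv hnolox (γ := (g n)⁻¹) (hB.inv.stab n)
      (U := Metric.closedBall c r') (Metric.isClosed_closedBall.isCompact) ?_ ?_ (m₀ := m₁) ?_ ?_
    · intro hmem
      rw [Metric.mem_closedBall] at hmem
      linarith
    · rintro y ⟨x, hxmem, rfl⟩
      rw [Metric.mem_closedBall] at hxmem
      have hxz : r' ≤ dist x z := by
        have htr := dist_triangle z x c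
        have hcomm : dist z x = dist x z := dist_comm z x
        linarith
      rw [Metric.mem_closedBall]
      exact le_of_lt (hcon x hxz)
    · intro hmem
      rw [Metric.mem_closedBall] at hmem
      linarith
    · rw [Metric.mem_closedBall]
      have hmz : r' ≤ dist m₁ z := by linarith
      exact le_of_lt (hcon m₁ hmz)
  choose we hwe1 hwe2 using hescape'
  obtain ⟨φ₁, x0, t, hφ₁, hx1, ht1⟩ := exists_subseq2 xe (fun n => g n • xe n)
  obtain ⟨φ₂, w0, s, hφ₂, hw2, hs2⟩ :=
    exists_subseq2 (fun i => we (φ₁ i)) (fun i => (g (φ₁ i))⁻¹ • we (φ₁ i))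
  set φ : ℕ → ℕ := φ₁ ∘ φ₂ with hφdef
  have hφ : StrictMono φ := hφ₁.comp hφ₂
  have hBφ := hB.sub hφ
  have hx0' : Tendsto (fun i => xe (φ i)) atTop (𝓝 x0) := hx1.comp hφ₂.tendsto_atTop
  have ht' : Tendsto (fun i => g (φ i) • xe (φ i)) atTop (𝓝 t) := ht1.comp hφ₂.tendsto_atTop
  have hw0' : Tendsto (fun i => we (φ i)) atTop (𝓝 w0) := hw2
  have hs' : Tendsto (fun i => (g (φ i))⁻¹ • we (φ i)) atTop (𝓝 s) := hs2
  have hx0z : x0 ≠ z := limit_ne hrpos hx0' (fun i => hxe1 (φ i))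
  have htd : t ≠ d := limit_ne hrpos ht' (fun i => hxe2 (φ i))
  have hw0z : w0 ≠ z := limit_ne hrpos' hw0' (fun i => hwe1 (φ i))
  have hsc : s ≠ c := limit_ne hrpos' hs' (fun i => hwe2 (φ i))
  have htinv : Tendsto (fun i => ((g (φ i))⁻¹)⁻¹ • xe (φ i)) atTop (𝓝 t) := by
    simp only [inv_inv]; exact ht'
  by_cases hx0c : x0 = c
  · rw [hx0c] at hx0'
    by_cases hw0d : w0 = d
    · rw [hw0d] at hw0'
      by_cases htz : t = z
      · rw [htz] at ht'
        exact caseCt hconv hM hBφ hx0' ht' hw0' hs' hsc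
      · by_cases hsz : s = z
        · rw [hsz] at hs'
          exact caseCt hconv hM hBφ.inv hw0' hs' hx0' htinv htd
        · exact caseC4 hconv hM hBφ hx0' ht' htz htd hw0' hs' hsz hsc
    · have hszc : s = z ∨ s = c :=
        hBφ.inv.cluster hconv hw0' hs' hw0z hw0d
      have hsz : s = z := by
        rcases hszc with h | h
        · exact h
        · exact absurd h hsc
      rw [hsz] at hs'
      exact caseA hconv hM hBφ.inv hw0' hs' hw0z hw0d hx0' htinv htd
  · have htzd : t = z ∨ t = d := hBφ.cluster hconv hx0' ht' hx0z hx0c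
    have htz : t = z := by
      rcases htzd with h | h
      · exact h
      · exact absurd h htd
    rw [htz] at ht'
    by_cases hw0d : w0 = d
    · rw [hw0d] at hw0'
      exact caseA hconv hM hBφ hx0' ht' hx0z hx0c hw0' hs' hsc
    · have hszc : s = z ∨ s = c :=
        hBφ.inv.cluster hconv hw0' hs' hw0z hw0d
      have hsz : s = z := by
        rcases hszc with h | h
        · exact h
        · exact absurd h hsc
      rw [hsz] at hs'
      exact caseB hconv hBφ hx0' ht' hx0z hx0c hw0' hs' hw0z hw0d


/-- if `M` were finite the group would act with finite image on distinct triples -/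
lemma M_infinite (hconv : IsConvergenceAction G M)
    (h3 : ∃ a b c : M, a ≠ b ∧ a ≠ c ∧ b ≠ c)
    {H : Subgroup G} (hHinf : (H : Set G).Infinite) :
    (Set.univ : Set M).Infinite := by
  by_contra hfin
  rw [Set.not_infinite] at hfin
  have : Finite M := Set.finite_univ_iff.mp hfin
  obtain ⟨a, b, e, hab, hae, hbe⟩ := h3
  set T : Set (M × M × M) := {t | t.1 ≠ t.2.1 ∧ t.1 ≠ t.2.2 ∧ t.2.1 ≠ t.2.2} with hT
  have hTfin : T.Finite := Set.toFinite T
  have hTc : IsCompact T := hTfin.isCompact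
  have hdist : ∀ t ∈ T ∪ T, t.1 ≠ t.2.1 ∧ t.1 ≠ t.2.2 ∧ t.2.1 ≠ t.2.2 := by
    rintro t (ht | ht) <;> exact ht
  have hfin2 := hconv.2 T T hTc hTc hdist
  apply hHinf
  apply hfin2.subset
  intro g _
  refine ⟨g • (a, b, e), Set.smul_mem_smul_set ⟨hab, hae, hbe⟩, ?_⟩
  have h2 : g • ((a, b, e) : M × M × M) = (g • a, g • b, g • e) := rfl
  rw [hT, h2]
  refine ⟨?_, ?_, ?_⟩
  · exact fun h => hab (MulAction.injective g h)
  · exact fun h => hae (MulAction.injective g h)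
  · exact fun h => hbe (MulAction.injective g h)

/-- Key finiteness: only finitely many stabilizer elements can move `CJ` across `CH`. -/
lemma F_finite (hconv : IsConvergenceAction G M) (hM : (Set.univ : Set M).Infinite)
    {z : M} (hnolox : ∀ g ∈ MulAction.stabilizer G z, ¬ IsLoxodromic G M g)
    {CH CJ : Set M} (hCH : IsCompact CH) (hCJ : IsCompact CJ)
    (hCHz : z ∉ CH) (hCJz : z ∉ CJ) :
    {f : G | f ∈ MulAction.stabilizer G z ∧ ((f • CJ) ∩ CH).Nonempty}.Finite := by
  by_contra hinf
  rw [← Set.not_infinite, not_not] at hinf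
  set emb := hinf.natEmbedding with hemb
  set g : ℕ → G := fun n => (emb n : G) with hg
  have hginj : Function.Injective g := by
    intro m n h
    exact emb.injective (Subtype.ext h)
  have hgstab : ∀ n, g n • z = z := fun n => (emb n).2.1
  have hgne : ∀ n, ((g n • CJ) ∩ CH).Nonempty := fun n => (emb n).2.2
  have hcj : ∀ n, ∃ x, x ∈ CJ ∧ g n • x ∈ CH := by
    intro n
    obtain ⟨y, hy1, hy2⟩ := hgne n
    obtain ⟨x, hx, rfl⟩ := hy1
    exact ⟨x, hx, hy2⟩
  choose cj hcj1 hcj2 using hcj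
  obtain ⟨φ, c, d, hφ, hc, hd⟩ := exists_subseq2 cj (fun n => g n • cj n)
  have hcCJ : c ∈ CJ := hCJ.isClosed.mem_of_tendsto hc
    (Eventually.of_forall fun i => hcj1 (φ i))
  have hdCH : d ∈ CH := hCH.isClosed.mem_of_tendsto hd
    (Eventually.of_forall fun i => hcj2 (φ i))
  have hB : BadSeq z c d (fun i => g (φ i)) (fun i => cj (φ i)) :=
    { inj := hginj.comp hφ.injective
      stab := fun n => hgstab (φ n)
      hcz := fun h => hCJz (h ▸ hcCJ)
      hdz := fun h => hCHz (h ▸ hdCH)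
      hc := hc
      hd := hd }
  exact mainBad hconv hM hnolox hB

end Aux

/-- if `z ∈ Λ(H) ∩ Λ(J)` is a bounded parabolic point of two infinite
subgroups `H` and `J` and `Stab_G(z)` contains no loxodromic element, then there is a
compact `C ⊆ M \ {z}` with `(Λ(H) ∩ Λ(J)) \ {z} ⊆ P ⬝ C`, where
`P = Stab_H(z) ∩ Stab_J(z)`. -/
theorem cocompact_on_limit_set_intersection
    {G M : Type*} [Group G] [TopologicalSpace M] [CompactSpace M]
    [TopologicalSpace.MetrizableSpace M] [MulAction G M]
    (hconv : IsConvergenceAction G M)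
    (h3 : ∃ a b c : M, a ≠ b ∧ a ≠ c ∧ b ≠ c)
    (H J : Subgroup G)
    (hHinf : (H : Set G).Infinite) (hJinf : (J : Set G).Infinite)
    (z : M) (hz : z ∈ limitSet G M H ∩ limitSet G M J)
    (hnolox : ∀ g ∈ MulAction.stabilizer G z, ¬ IsLoxodromic G M g)
    (hbpH : IsBoundedParabolicPoint G M H z)
    (hbpJ : IsBoundedParabolicPoint G M J z) :
    ∃ C : Set M, IsCompact C ∧ C ⊆ {z}ᶜ ∧
      (limitSet G M H ∩ limitSet G M J) \ {z} ⊆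
        ⋃ g ∈ ((H ⊓ MulAction.stabilizer G z) ⊓ (J ⊓ MulAction.stabilizer G z) :
          Subgroup G), g • C := by
  classical
  letI : MetricSpace M := TopologicalSpace.metrizableSpaceMetric M
  obtain ⟨-, -, CH, hCHc, hCHsub, hCHcov⟩ := hbpH
  obtain ⟨-, -, CJ, hCJc, hCJsub, hCJcov⟩ := hbpJ
  have hM : (Set.univ : Set M).Infinite := M_infinite hconv h3 hHinf
  have hCHz : z ∉ CH := fun h => (hCHsub h).2 rfl
  have hCJz : z ∉ CJ := fun h => (hCJsub h).2 rfl
  set Q : Subgroup G := H ⊓ MulAction.stabilizer G z with hQ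
  set R : Subgroup G := J ⊓ MulAction.stabilizer G z with hR
  set F : Set G := {f : G | f ∈ MulAction.stabilizer G z ∧ ((f • CJ) ∩ CH).Nonempty}
    with hF
  have hFfin : F.Finite := F_finite hconv hM hnolox hCHc hCJc hCHz hCJz
  set P : G → Prop := fun f => ∃ q : G, q ∈ Q ∧ q * f ∈ R with hP
  set sel : G → G := fun f => if h : P f then h.choose else 1 with hsel
  have hselQ : ∀ f, P f → sel f ∈ Q ∧ sel f * f ∈ R := by
    intro f hf
    have h1 : sel f = hf.choose := dif_pos hf
    rw [h1]
    exact hf.choose_spec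
  set C : Set M := ⋃ f ∈ F ∩ {f | P f}, (sel f) • CH with hC
  refine ⟨C, ?_, ?_, ?_⟩
  · apply Set.Finite.isCompact_biUnion (hFfin.inter_of_left _)
    intro f _
    rw [← Set.image_smul]
    exact hCHc.image (hconv.1 _)
  · intro x hx
    simp only [hC, Set.mem_iUnion] at hx
    obtain ⟨f, hf, hx⟩ := hx
    obtain ⟨u, hu, hux⟩ := hx
    intro hxz
    rw [Set.mem_singleton_iff] at hxz
    have hselstab : sel f • z = z := ((hselQ f hf.2).1).2
    have huz : u = z := by
      apply MulAction.injective (sel f)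
      show sel f • u = sel f • z
      rw [hselstab, ← hxz]
      exact hux
    rw [huz] at hu
    exact hCHz hu
  · intro x hx
    obtain ⟨⟨hxH, hxJ⟩, hxz⟩ := hx
    have h1 : x ∈ ⋃ g ∈ Q, g • CH := hCHcov ⟨hxH, hxz⟩
    have h2 : x ∈ ⋃ g ∈ R, g • CJ := hCJcov ⟨hxJ, hxz⟩
    rw [Set.mem_iUnion₂] at h1 h2
    obtain ⟨q, hqQ, hxq⟩ := h1
    obtain ⟨r, hrR, hxr⟩ := h2
    obtain ⟨u, huCH, hxu⟩ := hxq
    obtain ⟨w, hwCJ, hxw⟩ := hxr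
    set f : G := q⁻¹ * r with hf
    have hqstab : q ∈ MulAction.stabilizer G z := (Subgroup.mem_inf.mp hqQ).2
    have hrstab : r ∈ MulAction.stabilizer G z := (Subgroup.mem_inf.mp hrR).2
    have hfstab : f ∈ MulAction.stabilizer G z := mul_mem (inv_mem hqstab) hrstab
    have hfw : f • w = u := by
      have h3 : q • u = x := hxu
      have h4 : r • w = x := hxw
      have h5 : f • w = q⁻¹ • (r • w) := by rw [hf, mul_smul]
      rw [h5, h4, ← h3, inv_smul_smul]
    have hfF : f ∈ F := ⟨hfstab, ⟨u, ⟨w, hwCJ, hfw⟩, huCH⟩⟩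
    have hqf_r : q * f = r := by rw [hf]; group
    have hPf : P f := ⟨q, hqQ, by rw [hqf_r]; exact hrR⟩
    obtain ⟨hselfQ, hselfR⟩ := hselQ f hPf
    set p : G := q * (sel f)⁻¹ with hp
    have hpQ : p ∈ Q := mul_mem hqQ (inv_mem hselfQ)
    have hpR : p ∈ R := by
      have h6 : p = (q * f) * (sel f * f)⁻¹ := by rw [hp]; group
      rw [h6, hqf_r]
      exact mul_mem hrR (inv_mem hselfR)
    rw [Set.mem_iUnion₂]
    refine ⟨p, ?_, ?_⟩
    · exact Subgroup.mem_inf.mpr ⟨hpQ, hpR⟩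
    · refine ⟨sel f • u, ?_, ?_⟩
      · rw [hC]
        apply Set.mem_biUnion (show f ∈ F ∩ {f | P f} from ⟨hfF, hPf⟩)
        exact Set.smul_mem_smul_set huCH
      · show p • (sel f • u) = x
        rw [hp, mul_smul, inv_smul_smul]
        exact hxu
end
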